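/- arXiv:2502.01295 — 3 statements merged into one kernel-verified Lean document; each statement's English description precedes it below -/
import Mathlib

section
/- For every common schema there exists an equivalent SHACL schema, i.e., a SHACL schema S' such that for every common graph G, G is valid w.r.t. the common schema iff G is valid w.r.t. S'. -/
/-! ### Common graphs -/

/-- Nodes. -/
abbrev GNode := ℕ
/-- Values. -/
abbrev GValue := ℕ
/-- Predicates. -/
abbrev GPred := ℕ
/-- Keys. -/
abbrev GKey := ℕ

/-- Nodes or values (the disjoint union 𝒩 ∪ 𝒱). -/
abbrev NV := GNode ⊕ GValue
/-- Predicates or keys (the disjoint union 𝒫 ∪ 𝒦). -/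
abbrev PK := GPred ⊕ GKey

/-- Triples of a common graph: edges (𝒩×𝒫×𝒩) and properties (𝒩×𝒦×𝒱). -/
inductive Triple : Type
  | edge (u : GNode) (p : GPred) (v : GNode)
  | prop (u : GNode) (k : GKey) (w : GValue)
  deriving DecidableEq

/-- A common graph: a finite set of triples such that for each node `u` and key `k`
there is at most one value `w` with `(u,k,w)` in the graph. -/
structure CommonGraph : Type where
  triples : Finset Triple
  functional : ∀ u k w w', Triple.prop u k w ∈ triples → Triple.prop u k w' ∈ triples → w = w'

/-- `(v, q, u) ∈ G`, viewed as a binary relation on `𝒩 ∪ 𝒱` for each `q ∈ 𝒫 ∪ 𝒦`. -/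
def tripleRel (G : CommonGraph) : PK → NV → NV → Prop
  | Sum.inl p, Sum.inl u, Sum.inl v => Triple.edge u p v ∈ G.triples
  | Sum.inr k, Sum.inl u, Sum.inr w => Triple.prop u k w ∈ G.triples
  | _, _, _ => False

/-- The nodes occurring in a common graph. -/
def nodesSet (G : CommonGraph) : Set GNode :=
  {u | (∃ p v, Triple.edge u p v ∈ G.triples) ∨ (∃ p v, Triple.edge v p u ∈ G.triples) ∨
       (∃ k w, Triple.prop u k w ∈ G.triples)}

/-- The values occurring in a common graph. -/
def valuesSet (G : CommonGraph) : Set GValue :=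
  {w | ∃ u k, Triple.prop u k w ∈ G.triples}

/-- `v ∈ Nodes(G) ∪ Values(G)`. -/
def inGraph (G : CommonGraph) : NV → Prop
  | Sum.inl u => u ∈ nodesSet G
  | Sum.inr w => w ∈ valuesSet G

/-- The content `ρ(u)` of a node: the record `{(k,w) | ρ(u,k) = w}`. -/
def content (G : CommonGraph) (u : GNode) : Set (GKey × GValue) :=
  {kw | Triple.prop u kw.1 kw.2 ∈ G.triples}

/-! ### Records and content types -/

/-- A record: a functional, finite set of key–value pairs
(a finite-domain partial function `𝒦 ⇀ 𝒱`). -/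
def IsRecord (r : Set (GKey × GValue)) : Prop :=
  r.Finite ∧ ∀ k w w', (k, w) ∈ r → (k, w') ∈ r → w = w'

/-- Content types `θ ::= ⊤ | {} | {k:τ} | θ&θ | θ|θ`. -/
inductive CType (VT : Type) : Type
  | top
  | emp
  | single (k : GKey) (τ : VT)
  | band (θ₁ θ₂ : CType VT)
  | bor (θ₁ θ₂ : CType VT)

/-- The semantics `⟦θ⟧` of a content type: a set of records. -/
def ctSem {VT : Type} (semVT : VT → Set GValue) : CType VT → Set (Set (GKey × GValue))
  | .top => {r | IsRecord r}
  | .emp => {(∅ : Set (GKey × GValue))}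
  | .single k τ => {r | ∃ w ∈ semVT τ, r = {(k, w)}}
  | .band θ₁ θ₂ => {r | IsRecord r ∧ ∃ r₁ ∈ ctSem semVT θ₁, ∃ r₂ ∈ ctSem semVT θ₂, r = r₁ ∪ r₂}
  | .bor θ₁ θ₂ => ctSem semVT θ₁ ∪ ctSem semVT θ₂

/-- Closed content types `ν ::= {} | {k:τ} | ν&ν | ν|ν`. -/
inductive CCType (VT : Type) : Type
  | emp
  | single (k : GKey) (τ : VT)
  | band (ν₁ ν₂ : CCType VT)
  | bor (ν₁ ν₂ : CCType VT)

/-- A closed content type is in particular a content type. -/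
def CCType.toCT {VT : Type} : CCType VT → CType VT
  | .emp => .emp
  | .single k τ => .single k τ
  | .band ν₁ ν₂ => .band ν₁.toCT ν₂.toCT
  | .bor ν₁ ν₂ => .bor ν₁.toCT ν₂.toCT

/-- Open content types: `⊤` or `ν & ⊤` with `ν` closed. -/
inductive OpenCT (VT : Type) : Type
  | top
  | opn (ν : CCType VT)

/-- An open content type as a content type. -/
def OpenCT.toCT {VT : Type} : OpenCT VT → CType VT
  | .top => .top
  | .opn ν => .band ν.toCT .top

/-! ### SHACL -/

/-- SHACL path expressions `π ::= id | q | π⁻ | π·π | π∪π | π*`. -/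
inductive SPath : Type
  | id
  | sym (q : PK)
  | inv (π : SPath)
  | comp (π₁ π₂ : SPath)
  | union (π₁ π₂ : SPath)
  | star (π : SPath)

/-- The semantics `⟦π⟧^G ⊆ (𝒩∪𝒱)²` of a SHACL path expression. -/
def spathSem (G : CommonGraph) : SPath → NV → NV → Prop
  | .id => fun a b => a = b
  | .sym q => tripleRel G q
  | .inv π => fun a b => spathSem G π b a
  | .comp π₁ π₂ => fun a b => ∃ c, spathSem G π₁ a c ∧ spathSem G π₂ c b
  | .union π₁ π₂ => fun a b => spathSem G π₁ a b ∨ spathSem G π₂ a b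
  | .star π => Relation.ReflTransGen (spathSem G π)

/-- SHACL shapes. -/
inductive SShape (VT : Type) : Type
  | top
  | testC (c : GValue)
  | testT (τ : VT)
  | closed (Q : Finset PK)
  | eq (π : SPath) (p : GPred)
  | disj (π : SPath) (p : GPred)
  | not (φ : SShape VT)
  | and (φ₁ φ₂ : SShape VT)
  | or (φ₁ φ₂ : SShape VT)
  | geq (n : ℕ) (π : SPath) (φ : SShape VT)
  | leq (n : ℕ) (π : SPath) (φ : SShape VT)

/-- Satisfaction of SHACL shapes: `G, v ⊨ φ`. -/
def shaclSat {VT : Type} (semVT : VT → Set GValue) (G : CommonGraph) : NV → SShape VT → Prop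
  | _, .top => True
  | v, .testC c => v = Sum.inr c
  | v, .testT τ => ∃ w, v = Sum.inr w ∧ w ∈ semVT τ
  | v, .closed Q => ∀ q : PK, q ∉ Q → ∀ u, ¬ tripleRel G q v u
  | v, .eq π p => {u : NV | spathSem G π v u} = {u : NV | tripleRel G (Sum.inl p) v u}
  | v, .disj π p => {u : NV | spathSem G π v u} ∩ {u : NV | tripleRel G (Sum.inl p) v u} = ∅
  | v, .not φ => ¬ shaclSat semVT G v φ
  | v, .and φ₁ φ₂ => shaclSat semVT G v φ₁ ∧ shaclSat semVT G v φ₂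
  | v, .or φ₁ φ₂ => shaclSat semVT G v φ₁ ∨ shaclSat semVT G v φ₂
  | v, .geq n π φ => (n : ℕ∞) ≤ {u : NV | spathSem G π v u ∧ shaclSat semVT G u φ}.encard
  | v, .leq n π φ => {u : NV | spathSem G π v u ∧ shaclSat semVT G u φ}.encard ≤ (n : ℕ∞)

/-- SHACL selectors: `∃^{≥1}q.⊤`, `∃^{≥1}q⁻.⊤`, or `test(c)`. -/
def IsSHACLSelector {VT : Type} (φ : SShape VT) : Prop :=
  (∃ q : PK, φ = SShape.geq 1 (SPath.sym q) SShape.top) ∨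
  (∃ q : PK, φ = SShape.geq 1 (SPath.inv (SPath.sym q)) SShape.top) ∨
  (∃ c : GValue, φ = SShape.testC c)

/-- A SHACL schema: a finite set of selector–shape pairs. -/
structure SHACLSchema (VT : Type) : Type where
  pairs : Finset (SShape VT × SShape VT)
  sel : ∀ pr ∈ pairs, IsSHACLSelector pr.1

/-- Validity of a common graph w.r.t. a SHACL schema. -/
def shaclValid {VT : Type} (semVT : VT → Set GValue) (S : SHACLSchema VT) (G : CommonGraph) : Prop :=
  ∀ v : NV, ∀ pr ∈ S.pairs, shaclSat semVT G v pr.1 → shaclSat semVT G v pr.2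

/-! ### CoGSL filters -/

/-- Filters `π₀ ::= (k:c) | ¬(k:c) | ν&⊤ | ¬(ν&⊤) | π₀·π₀` (with `ν` a closed content type). -/
inductive GFilter (VT : Type) : Type
  | keyIs (k : GKey) (c : GValue)
  | keyIsNot (k : GKey) (c : GValue)
  | openCT (ν : CCType VT)
  | notOpenCT (ν : CCType VT)
  | comp (f₁ f₂ : GFilter VT)

/-- The semantics `⟦π₀⟧^G` of a filter, as a binary relation on `𝒩 ∪ 𝒱`. -/
def cfilterSem {VT : Type} (semVT : VT → Set GValue) (G : CommonGraph) :
    GFilter VT → NV → NV → Prop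
  | .keyIs k c => fun a b =>
      a = b ∧ ∃ u, a = Sum.inl u ∧ u ∈ nodesSet G ∧ Triple.prop u k c ∈ G.triples
  | .keyIsNot k c => fun a b =>
      a = b ∧ ∃ u, a = Sum.inl u ∧ u ∈ nodesSet G ∧ Triple.prop u k c ∉ G.triples
  | .openCT ν => fun a b =>
      a = b ∧ ∃ u, a = Sum.inl u ∧ u ∈ nodesSet G ∧
        content G u ∈ ctSem semVT (CType.band ν.toCT CType.top)
  | .notOpenCT ν => fun a b =>
      a = b ∧ ∃ u, a = Sum.inl u ∧ u ∈ nodesSet G ∧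
        content G u ∉ ctSem semVT (CType.band ν.toCT CType.top)
  | .comp f₁ f₂ => fun a b => ∃ c, cfilterSem semVT G f₁ a c ∧ cfilterSem semVT G f₂ c b

/-! ### CoGSL paths, shapes, schemas -/

/-- The relation of a key step `k`: from a node `u` to the value `ρ(u,k)`. -/
def keyRel (G : CommonGraph) (k : GKey) : NV → NV → Prop
  | Sum.inl u, Sum.inr w => Triple.prop u k w ∈ G.triples
  | _, _ => False

/-- Star- and `¬P`-free PG-path expressions `π̄ ::= π₀ | p | π̄⁻ | π̄·π̄ | π̄∪π̄`. -/
inductive BPath (VT : Type) : Type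
  | filt (f : GFilter VT)
  | pred (p : GPred)
  | inv (π : BPath VT)
  | comp (π₁ π₂ : BPath VT)
  | union (π₁ π₂ : BPath VT)

/-- The semantics of `π̄`. -/
def bpathSem {VT : Type} (semVT : VT → Set GValue) (G : CommonGraph) :
    BPath VT → NV → NV → Prop
  | .filt f => cfilterSem semVT G f
  | .pred p => tripleRel G (Sum.inl p)
  | .inv π => fun a b => bpathSem semVT G π b a
  | .comp π₁ π₂ => fun a b => ∃ c, bpathSem semVT G π₁ a c ∧ bpathSem semVT G π₂ c b
  | .union π₁ π₂ => fun a b => bpathSem semVT G π₁ a b ∨ bpathSem semVT G π₂ a b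

/-- CoGSL paths `π ::= π̄ | π̄·k | k⁻·π̄ | k⁻·π̄·k'` (together with the path `k`,
shorthand for `⊤·k`, needed for the selector `∃k`). -/
inductive CPath (VT : Type) : Type
  | base (π : BPath VT)
  | toKey (π : BPath VT) (k : GKey)
  | fromKey (k : GKey) (π : BPath VT)
  | between (k : GKey) (π : BPath VT) (k' : GKey)
  | keyOnly (k : GKey)

/-- The semantics of CoGSL paths. -/
def cpathSem {VT : Type} (semVT : VT → Set GValue) (G : CommonGraph) :
    CPath VT → NV → NV → Prop
  | .base π => bpathSem semVT G π
  | .toKey π k => fun a b => ∃ c, bpathSem semVT G π a c ∧ keyRel G k c b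
  | .fromKey k π => fun a b => ∃ c, keyRel G k c a ∧ bpathSem semVT G π c b
  | .between k π k' => fun a b => ∃ c c', keyRel G k c a ∧ bpathSem semVT G π c c' ∧ keyRel G k' c' b
  | .keyOnly k => keyRel G k

/-- Single-step paths `π₁ ::= π₀·p·π₀ | π₀·p⁻·π₀ | π₀·k | k⁻·π₀`. -/
inductive OnePath (VT : Type) : Type
  | fwd (f₁ : GFilter VT) (p : GPred) (f₂ : GFilter VT)
  | bwd (f₁ : GFilter VT) (p : GPred) (f₂ : GFilter VT)
  | toKey (f : GFilter VT) (k : GKey)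
  | fromKey (k : GKey) (f : GFilter VT)

/-- The semantics of single-step paths. -/
def onePathSem {VT : Type} (semVT : VT → Set GValue) (G : CommonGraph) :
    OnePath VT → NV → NV → Prop
  | .fwd f₁ p f₂ => fun a b => ∃ c c', cfilterSem semVT G f₁ a c ∧
      tripleRel G (Sum.inl p) c c' ∧ cfilterSem semVT G f₂ c' b
  | .bwd f₁ p f₂ => fun a b => ∃ c c', cfilterSem semVT G f₁ a c ∧
      tripleRel G (Sum.inl p) c' c ∧ cfilterSem semVT G f₂ c' b
  | .toKey f k => fun a b => ∃ c, cfilterSem semVT G f a c ∧ keyRel G k c b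
  | .fromKey k f => fun a b => ∃ c, keyRel G k c a ∧ cfilterSem semVT G f c b

/-- Common shapes `φ ::= ∃π | ∃^{≤n}π₁ | ∃^{≥n}π₁ | (∃ν ∧ ¬∃¬P) | φ∧φ`. -/
inductive CShape (VT : Type) : Type
  | exist (π : CPath VT)
  | atMost (n : ℕ) (π : OnePath VT)
  | atLeast (n : ℕ) (π : OnePath VT)
  | closedNode (ν : CCType VT) (P : Finset GPred)
  | and (φ₁ φ₂ : CShape VT)

/-- Satisfaction of common shapes: `G, v ⊨ φ`. -/
def cshapeSat {VT : Type} (semVT : VT → Set GValue) (G : CommonGraph) :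
    NV → CShape VT → Prop
  | v, .exist π => ∃ v', cpathSem semVT G π v v'
  | v, .atMost n π => {v' : NV | onePathSem semVT G π v v'}.encard ≤ (n : ℕ∞)
  | v, .atLeast n π => (n : ℕ∞) ≤ {v' : NV | onePathSem semVT G π v v'}.encard
  | v, .closedNode ν P =>
      (∃ u, v = Sum.inl u ∧ content G u ∈ ctSem semVT ν.toCT) ∧
      (∀ u p w, v = Sum.inl u → Triple.edge u p w ∈ G.triples → p ∈ P)
  | v, .and φ₁ φ₂ => cshapeSat semVT G v φ₁ ∧ cshapeSat semVT G v φ₂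

/-- `π` or `π·k'`, used in common selectors. -/
def CPath.ext {VT : Type} (π : BPath VT) : Option GKey → CPath VT
  | none => CPath.base π
  | some k' => CPath.toKey π k'

/-- Common selectors: common shapes of one of the forms
`∃k`, `∃p·π`, `∃p⁻·π`, `∃(k:c)·π`, `∃({k:τ}&⊤)·π`, `∃k⁻·π`,
where `π` is of the form `π̄` or `π̄·k'`. -/
def IsCommonSelector {VT : Type} (φ : CShape VT) : Prop :=
  (∃ k, φ = CShape.exist (CPath.keyOnly k)) ∨
  (∃ (p : GPred) (π : BPath VT) (k? : Option GKey),
      φ = CShape.exist (CPath.ext (BPath.comp (BPath.pred p) π) k?)) ∨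
  (∃ (p : GPred) (π : BPath VT) (k? : Option GKey),
      φ = CShape.exist (CPath.ext (BPath.comp (BPath.inv (BPath.pred p)) π) k?)) ∨
  (∃ (k : GKey) (c : GValue) (π : BPath VT) (k? : Option GKey),
      φ = CShape.exist (CPath.ext (BPath.comp (BPath.filt (GFilter.keyIs k c)) π) k?)) ∨
  (∃ (k : GKey) (τ : VT) (π : BPath VT) (k? : Option GKey),
      φ = CShape.exist (CPath.ext (BPath.comp (BPath.filt (GFilter.openCT (CCType.single k τ))) π) k?)) ∨
  (∃ (k : GKey) (π : BPath VT), φ = CShape.exist (CPath.fromKey k π)) ∨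
  (∃ (k : GKey) (π : BPath VT) (k' : GKey), φ = CShape.exist (CPath.between k π k'))

/-- A common schema: a finite set of selector–shape pairs. -/
structure CommonSchema (VT : Type) : Type where
  pairs : Finset (CShape VT × CShape VT)
  sel : ∀ pr ∈ pairs, IsCommonSelector pr.1

/-- Validity of a common graph w.r.t. a common schema. -/
def commonValid {VT : Type} (semVT : VT → Set GValue) (S : CommonSchema VT) (G : CommonGraph) : Prop :=
  ∀ v : NV, ∀ pr ∈ S.pairs, cshapeSat semVT G v pr.1 → cshapeSat semVT G v pr.2

namespace CoGSL2SHACL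

variable {VT : Type} (semVT : VT → Set GValue) (G : CommonGraph)

/-! #### Basic facts about the graph relations -/

lemma node_of_edge_left {u p v} (h : Triple.edge u p v ∈ G.triples) : u ∈ nodesSet G :=
  Or.inl ⟨p, v, h⟩
lemma node_of_edge_right {u p v} (h : Triple.edge u p v ∈ G.triples) : v ∈ nodesSet G :=
  Or.inr (Or.inl ⟨p, u, h⟩)
lemma node_of_prop {u k w} (h : Triple.prop u k w ∈ G.triples) : u ∈ nodesSet G :=
  Or.inr (Or.inr ⟨k, w, h⟩)
lemma value_of_prop {u k w} (h : Triple.prop u k w ∈ G.triples) : w ∈ valuesSet G :=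
  ⟨u, k, h⟩

lemma tripleRel_inl_iff (p : GPred) (a b : NV) :
    tripleRel G (Sum.inl p) a b ↔ ∃ u v, a = Sum.inl u ∧ b = Sum.inl v ∧ Triple.edge u p v ∈ G.triples := by
  cases a with
  | inl u =>
    cases b with
    | inl v => exact ⟨fun h => ⟨u, v, rfl, rfl, h⟩, by rintro ⟨u', v', h1, h2, hm⟩; cases h1; cases h2; exact hm⟩
    | inr w => exact ⟨fun h => False.elim h, by rintro ⟨u', v', h1, h2, hm⟩; cases h2⟩
  | inr w => exact ⟨fun h => False.elim h, by rintro ⟨u', v', h1, h2, hm⟩; cases h1⟩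

lemma tripleRel_inr_iff (k : GKey) (a b : NV) :
    tripleRel G (Sum.inr k) a b ↔ ∃ u w, a = Sum.inl u ∧ b = Sum.inr w ∧ Triple.prop u k w ∈ G.triples := by
  cases a with
  | inl u =>
    cases b with
    | inr w => exact ⟨fun h => ⟨u, w, rfl, rfl, h⟩, by rintro ⟨u', w', h1, h2, hm⟩; cases h1; cases h2; exact hm⟩
    | inl v => exact ⟨fun h => False.elim h, by rintro ⟨u', w', h1, h2, hm⟩; cases h2⟩
  | inr w => exact ⟨fun h => False.elim h, by rintro ⟨u', w', h1, h2, hm⟩; cases h1⟩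

lemma keyRel_iff (k : GKey) (a b : NV) : keyRel G k a b ↔ tripleRel G (Sum.inr k) a b := by
  rw [tripleRel_inr_iff]
  cases a with
  | inl u =>
    cases b with
    | inr w => exact ⟨fun h => ⟨u, w, rfl, rfl, h⟩, by rintro ⟨u', w', h1, h2, hm⟩; cases h1; cases h2; exact hm⟩
    | inl v => exact ⟨fun h => False.elim h, by rintro ⟨u', w', h1, h2, hm⟩; cases h2⟩
  | inr w => exact ⟨fun h => False.elim h, by rintro ⟨u', w', h1, h2, hm⟩; cases h1⟩

lemma cfilter_diag {f : GFilter VT} {a b : NV} (h : cfilterSem semVT G f a b) :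
    a = b ∧ ∃ u, a = Sum.inl u ∧ u ∈ nodesSet G := by
  induction f generalizing a b with
  | comp f₁ f₂ ih₁ ih₂ =>
    obtain ⟨c, h₁, h₂⟩ := h
    obtain ⟨e1, hu⟩ := ih₁ h₁
    obtain ⟨e2, _⟩ := ih₂ h₂
    exact ⟨e1.trans e2, hu⟩
  | keyIs k c => obtain ⟨e, u, hu, hn, _⟩ := h; exact ⟨e, u, hu, hn⟩
  | keyIsNot k c => obtain ⟨e, u, hu, hn, _⟩ := h; exact ⟨e, u, hu, hn⟩
  | openCT ν => obtain ⟨e, u, hu, hn, _⟩ := h; exact ⟨e, u, hu, hn⟩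
  | notOpenCT ν => obtain ⟨e, u, hu, hn, _⟩ := h; exact ⟨e, u, hu, hn⟩

lemma bpath_endpoints {π : BPath VT} {a b : NV} (h : bpathSem semVT G π a b) :
    (∃ u, a = Sum.inl u ∧ u ∈ nodesSet G) ∧ (∃ u, b = Sum.inl u ∧ u ∈ nodesSet G) := by
  induction π generalizing a b with
  | filt f =>
    obtain ⟨e, hu⟩ := cfilter_diag semVT G h
    exact ⟨hu, e ▸ hu⟩
  | pred p =>
    rw [show bpathSem semVT G (.pred p) a b = tripleRel G (Sum.inl p) a b from rfl,
      tripleRel_inl_iff] at h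
    obtain ⟨u, v, rfl, rfl, hm⟩ := h
    exact ⟨⟨u, rfl, node_of_edge_left G hm⟩, ⟨v, rfl, node_of_edge_right G hm⟩⟩
  | inv π ih => exact (ih h).symm
  | comp π₁ π₂ ih₁ ih₂ =>
    obtain ⟨c, h₁, h₂⟩ := h
    exact ⟨(ih₁ h₁).1, (ih₂ h₂).2⟩
  | union π₁ π₂ ih₁ ih₂ =>
    rcases h with h | h
    · exact ih₁ h
    · exact ih₂ h

lemma content_isRecord (u : GNode) : IsRecord (content G u) := by
  constructor
  · have hsub : content G u ⊆
        (fun t => match t with | Triple.prop _ k w => (k, w) | _ => (0, 0)) '' (G.triples : Set Triple) := by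
      rintro ⟨k, w⟩ h
      exact ⟨Triple.prop u k w, h, rfl⟩
    exact (G.triples.finite_toSet.image _).subset hsub
  · intro k w w' h h'
    exact G.functional u k w w' h h'

lemma record_subset {r r' : Set (GKey × GValue)} (h : IsRecord r') (hsub : r ⊆ r') : IsRecord r :=
  ⟨h.1.subset hsub, fun k w w' hw hw' => h.2 k w w' (hsub hw) (hsub hw')⟩

/-- Membership in an "open" closed content type is existence of a matching sub-record. -/
lemma mem_open_iff (ν : CCType VT) (r' : Set (GKey × GValue)) (hr : IsRecord r') :
    r' ∈ ctSem semVT (CType.band ν.toCT CType.top) ↔ ∃ r ∈ ctSem semVT ν.toCT, r ⊆ r' := by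
  constructor
  · rintro ⟨-, r₁, h₁, r₂, -, rfl⟩
    exact ⟨r₁, h₁, Set.subset_union_left⟩
  · rintro ⟨r, h, hsub⟩
    exact ⟨hr, r, h, r', hr, (Set.union_eq_self_of_subset_left hsub).symm⟩

end CoGSL2SHACL
namespace CoGSL2SHACL

variable {VT : Type} (semVT : VT → Set GValue) (G : CommonGraph)

/-! #### Small SHACL shapes -/

def hasKeyC (k : GKey) (c : GValue) : SShape VT := .geq 1 (.sym (Sum.inr k)) (.testC c)
def hasKeyT (k : GKey) (τ : VT) : SShape VT := .geq 1 (.sym (Sum.inr k)) (.testT τ)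
def hasKey (k : GKey) : SShape VT := .geq 1 (.sym (Sum.inr k)) .top

lemma sat_geq1 (π : SPath) (ψ : SShape VT) (v : NV) :
    shaclSat semVT G v (.geq 1 π ψ) ↔ ∃ u, spathSem G π v u ∧ shaclSat semVT G u ψ := by
  show ((1 : ℕ) : ℕ∞) ≤ _ ↔ _
  rw [Nat.cast_one, Set.one_le_encard_iff_nonempty]
  exact Iff.rfl

lemma sat_hasKeyC (k : GKey) (c : GValue) (v : NV) :
    shaclSat semVT G v (hasKeyC k c) ↔ ∃ u, v = Sum.inl u ∧ Triple.prop u k c ∈ G.triples := by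
  rw [hasKeyC, sat_geq1]
  constructor
  · rintro ⟨b, hb, hc⟩
    rw [show shaclSat semVT G b (.testC c) = (b = Sum.inr c) from rfl] at hc
    subst hc
    rw [show spathSem G (.sym (Sum.inr k)) v (Sum.inr c) = tripleRel G (Sum.inr k) v (Sum.inr c) from rfl,
      tripleRel_inr_iff] at hb
    obtain ⟨u, w, rfl, hw, hm⟩ := hb
    cases hw
    exact ⟨u, rfl, hm⟩
  · rintro ⟨u, rfl, hm⟩
    exact ⟨Sum.inr c, hm, rfl⟩

lemma sat_hasKeyT (k : GKey) (τ : VT) (v : NV) :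
    shaclSat semVT G v (hasKeyT k τ) ↔
      ∃ u w, v = Sum.inl u ∧ w ∈ semVT τ ∧ Triple.prop u k w ∈ G.triples := by
  rw [hasKeyT, sat_geq1]
  constructor
  · rintro ⟨b, hb, hc⟩
    obtain ⟨w, rfl, hw⟩ := hc
    rw [show spathSem G (.sym (Sum.inr k)) v (Sum.inr w) = tripleRel G (Sum.inr k) v (Sum.inr w) from rfl,
      tripleRel_inr_iff] at hb
    obtain ⟨u, w', rfl, hw', hm⟩ := hb
    cases hw'
    exact ⟨u, w, rfl, hw, hm⟩
  · rintro ⟨u, w, rfl, hw, hm⟩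
    exact ⟨Sum.inr w, hm, ⟨w, rfl, hw⟩⟩

lemma sat_hasKey (k : GKey) (v : NV) :
    shaclSat semVT G v (hasKey k) ↔ ∃ u w, v = Sum.inl u ∧ Triple.prop u k w ∈ G.triples := by
  rw [hasKey, sat_geq1]
  constructor
  · rintro ⟨b, hb, -⟩
    rw [show spathSem G (.sym (Sum.inr k)) v b = tripleRel G (Sum.inr k) v b from rfl,
      tripleRel_inr_iff] at hb
    obtain ⟨u, w, rfl, rfl, hm⟩ := hb
    exact ⟨u, w, rfl, hm⟩
  · rintro ⟨u, w, rfl, hm⟩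
    exact ⟨Sum.inr w, hm, trivial⟩

/-! #### Translation of filters -/

/-- Shape expressing (at a node of the graph) that the content has a sub-record in `⟦ν⟧`. -/
def OCT : CCType VT → SShape VT
  | .emp => .top
  | .single k τ => hasKeyT k τ
  | .band ν₁ ν₂ => .and (OCT ν₁) (OCT ν₂)
  | .bor ν₁ ν₂ => .or (OCT ν₁) (OCT ν₂)

lemma OCT_spec (ν : CCType VT) (u : GNode) :
    shaclSat semVT G (Sum.inl u) (OCT ν) ↔ ∃ r ∈ ctSem semVT ν.toCT, r ⊆ content G u := by
  induction ν with
  | emp =>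
    simp only [OCT, CCType.toCT, ctSem, Set.mem_singleton_iff]
    refine ⟨fun _ => ⟨∅, rfl, Set.empty_subset _⟩, fun _ => trivial⟩
  | single k τ =>
    rw [OCT, sat_hasKeyT]
    constructor
    · rintro ⟨u', w, hu, hw, hm⟩
      cases hu
      refine ⟨{(k, w)}, ⟨w, hw, rfl⟩, ?_⟩
      rintro ⟨k', w'⟩ h
      rw [Set.mem_singleton_iff] at h
      cases h
      exact hm
    · rintro ⟨r, ⟨w, hw, rfl⟩, hsub⟩
      exact ⟨u, w, rfl, hw, hsub rfl⟩
  | band ν₁ ν₂ ih₁ ih₂ =>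
    rw [show shaclSat semVT G (Sum.inl u) (OCT (.band ν₁ ν₂)) =
      (shaclSat semVT G (Sum.inl u) (OCT ν₁) ∧ shaclSat semVT G (Sum.inl u) (OCT ν₂)) from rfl,
      ih₁, ih₂]
    constructor
    · rintro ⟨⟨r₁, h₁, hs₁⟩, ⟨r₂, h₂, hs₂⟩⟩
      refine ⟨r₁ ∪ r₂, ⟨?_, r₁, h₁, r₂, h₂, rfl⟩, Set.union_subset hs₁ hs₂⟩
      exact record_subset (content_isRecord G u) (Set.union_subset hs₁ hs₂)
    · rintro ⟨r, ⟨-, r₁, h₁, r₂, h₂, rfl⟩, hsub⟩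
      exact ⟨⟨r₁, h₁, (Set.subset_union_left.trans hsub)⟩,
        ⟨r₂, h₂, (Set.subset_union_right.trans hsub)⟩⟩
  | bor ν₁ ν₂ ih₁ ih₂ =>
    rw [show shaclSat semVT G (Sum.inl u) (OCT (.bor ν₁ ν₂)) =
      (shaclSat semVT G (Sum.inl u) (OCT ν₁) ∨ shaclSat semVT G (Sum.inl u) (OCT ν₂)) from rfl,
      ih₁, ih₂]
    constructor
    · rintro (⟨r, h, hs⟩ | ⟨r, h, hs⟩)
      · exact ⟨r, Or.inl h, hs⟩
      · exact ⟨r, Or.inr h, hs⟩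
    · rintro ⟨r, h | h, hs⟩
      · exact Or.inl ⟨r, h, hs⟩
      · exact Or.inr ⟨r, h, hs⟩

/-- The core translation of a filter, correct at nodes of the graph. -/
def coreF : GFilter VT → SShape VT
  | .keyIs k c => hasKeyC k c
  | .keyIsNot k c => .not (hasKeyC k c)
  | .openCT ν => OCT ν
  | .notOpenCT ν => .not (OCT ν)
  | .comp f₁ f₂ => .and (coreF f₁) (coreF f₂)

lemma coreF_spec (f : GFilter VT) (u : GNode) (hu : u ∈ nodesSet G) :
    shaclSat semVT G (Sum.inl u) (coreF f) ↔ cfilterSem semVT G f (Sum.inl u) (Sum.inl u) := by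
  induction f with
  | keyIs k c =>
    rw [coreF, sat_hasKeyC]
    constructor
    · rintro ⟨u', hu', hm⟩
      cases hu'
      exact ⟨rfl, u, rfl, hu, hm⟩
    · rintro ⟨-, u', hu', -, hm⟩
      cases hu'
      exact ⟨u, rfl, hm⟩
  | keyIsNot k c =>
    rw [show shaclSat semVT G (Sum.inl u) (coreF (.keyIsNot k c)) =
      ¬ shaclSat semVT G (Sum.inl u) (hasKeyC k c) from rfl, sat_hasKeyC]
    constructor
    · intro h
      refine ⟨rfl, u, rfl, hu, fun hm => h ⟨u, rfl, hm⟩⟩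
    · rintro ⟨-, u', hu', -, hm⟩ ⟨u'', hu'', hm'⟩
      cases hu'; cases hu''
      exact hm hm'
  | openCT ν =>
    rw [show shaclSat semVT G (Sum.inl u) (coreF (.openCT ν)) =
      shaclSat semVT G (Sum.inl u) (OCT ν) from rfl, OCT_spec,
      ← mem_open_iff semVT ν _ (content_isRecord G u)]
    constructor
    · intro h
      exact ⟨rfl, u, rfl, hu, h⟩
    · rintro ⟨-, u', hu', -, h⟩
      cases hu'
      exact h
  | notOpenCT ν =>
    rw [show shaclSat semVT G (Sum.inl u) (coreF (.notOpenCT ν)) =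
      ¬ shaclSat semVT G (Sum.inl u) (OCT ν) from rfl, OCT_spec,
      ← mem_open_iff semVT ν _ (content_isRecord G u)]
    constructor
    · intro h
      exact ⟨rfl, u, rfl, hu, h⟩
    · rintro ⟨-, u', hu', -, h⟩
      cases hu'
      exact h
  | comp f₁ f₂ ih₁ ih₂ =>
    rw [show shaclSat semVT G (Sum.inl u) (coreF (.comp f₁ f₂)) =
      (shaclSat semVT G (Sum.inl u) (coreF f₁) ∧ shaclSat semVT G (Sum.inl u) (coreF f₂)) from rfl,
      ih₁, ih₂]
    constructor
    · rintro ⟨h₁, h₂⟩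
      exact ⟨Sum.inl u, h₁, h₂⟩
    · rintro ⟨c, h₁, h₂⟩
      obtain ⟨rfl, -⟩ := cfilter_diag semVT G h₁
      exact ⟨h₁, h₂⟩

end CoGSL2SHACL
namespace CoGSL2SHACL

variable {VT : Type} (semVT : VT → Set GValue) (G : CommonGraph)

/-! #### Translation of star-free PG-paths into SHACL shapes -/

/-- `E π b ψ` expresses `∃ v', π(v,v') ∧ ψ(v')` (with `π` reversed when `b = true`). -/
def EP : BPath VT → Bool → SShape VT → SShape VT
  | .filt f, _, ψ => .and (coreF f) ψ
  | .pred p, b, ψ => .geq 1 (if b then .inv (.sym (Sum.inl p)) else .sym (Sum.inl p)) ψ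
  | .inv π, b, ψ => EP π (!b) ψ
  | .comp π₁ π₂, b, ψ => if b then EP π₂ b (EP π₁ b ψ) else EP π₁ b (EP π₂ b ψ)
  | .union π₁ π₂, b, ψ => .or (EP π₁ b ψ) (EP π₂ b ψ)

/-- Possibly-reversed path semantics. -/
def bsem (π : BPath VT) (b : Bool) (x y : NV) : Prop :=
  if b then bpathSem semVT G π y x else bpathSem semVT G π x y

lemma bsem_endpoint {π : BPath VT} {b : Bool} {x y : NV} (h : bsem semVT G π b x y) :
    (∃ u, x = Sum.inl u ∧ u ∈ nodesSet G) ∧ (∃ u, y = Sum.inl u ∧ u ∈ nodesSet G) := by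
  cases b with
  | false => exact bpath_endpoints semVT G h
  | true => exact (bpath_endpoints semVT G h).symm

lemma EP_spec (π : BPath VT) (b : Bool) (ψ : SShape VT) (u : GNode) (hu : u ∈ nodesSet G) :
    shaclSat semVT G (Sum.inl u) (EP π b ψ) ↔
      ∃ v', bsem semVT G π b (Sum.inl u) v' ∧ shaclSat semVT G v' ψ := by
  induction π generalizing b ψ u with
  | filt f =>
    rw [show shaclSat semVT G (Sum.inl u) (EP (.filt f) b ψ) =
      (shaclSat semVT G (Sum.inl u) (coreF f) ∧ shaclSat semVT G (Sum.inl u) ψ) from rfl,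
      coreF_spec semVT G f u hu]
    constructor
    · rintro ⟨h₁, h₂⟩
      refine ⟨Sum.inl u, ?_, h₂⟩
      cases b with
      | false => exact h₁
      | true => exact h₁
    · rintro ⟨v', hv, h₂⟩
      have hd : cfilterSem semVT G f (Sum.inl u) v' ∨ cfilterSem semVT G f v' (Sum.inl u) := by
        cases b with
        | false => exact Or.inl hv
        | true => exact Or.inr hv
      rcases hd with hd | hd
      · obtain ⟨rfl, -⟩ := cfilter_diag semVT G hd
        exact ⟨hd, h₂⟩
      · obtain ⟨e, -⟩ := cfilter_diag semVT G hd
        cases e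
        exact ⟨hd, h₂⟩
  | pred p =>
    cases b with
    | false =>
      rw [show EP (.pred p) false ψ = .geq 1 (.sym (Sum.inl p)) ψ from rfl, sat_geq1]
      exact Iff.rfl
    | true =>
      rw [show EP (.pred p) true ψ = .geq 1 (.inv (.sym (Sum.inl p))) ψ from rfl, sat_geq1]
      exact Iff.rfl
  | inv π ih =>
    rw [show EP (.inv π) b ψ = EP π (!b) ψ from rfl, ih (!b) ψ u hu]
    have : ∀ v', bsem semVT G π (!b) (Sum.inl u) v' ↔ bsem semVT G (.inv π) b (Sum.inl u) v' := by
      intro v'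
      cases b with
      | false => exact Iff.rfl
      | true => exact Iff.rfl
    exact exists_congr fun v' => and_congr_left fun _ => this v'
  | comp π₁ π₂ ih₁ ih₂ =>
    cases b with
    | false =>
      rw [show EP (.comp π₁ π₂) false ψ = EP π₁ false (EP π₂ false ψ) from rfl, ih₁ false _ u hu]
      constructor
      · rintro ⟨c, hc, hsat⟩
        obtain ⟨-, c', hc', hcn⟩ := bsem_endpoint semVT G hc
        subst hc'
        rw [ih₂ false ψ c' hcn] at hsat
        obtain ⟨v', hv, hψ⟩ := hsat
        exact ⟨v', ⟨Sum.inl c', hc, hv⟩, hψ⟩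
      · rintro ⟨v', ⟨c, hc1, hc2⟩, hψ⟩
        obtain ⟨-, c', hc', hcn⟩ := bpath_endpoints semVT G hc1
        subst hc'
        refine ⟨Sum.inl c', hc1, ?_⟩
        rw [ih₂ false ψ c' hcn]
        exact ⟨v', hc2, hψ⟩
    | true =>
      rw [show EP (.comp π₁ π₂) true ψ = EP π₂ true (EP π₁ true ψ) from rfl, ih₂ true _ u hu]
      constructor
      · rintro ⟨c, hc, hsat⟩
        obtain ⟨-, c', hc', hcn⟩ := bsem_endpoint semVT G hc
        subst hc'
        rw [ih₁ true ψ c' hcn] at hsat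
        obtain ⟨v', hv, hψ⟩ := hsat
        exact ⟨v', ⟨Sum.inl c', hv, hc⟩, hψ⟩
      · rintro ⟨v', ⟨c, hc1, hc2⟩, hψ⟩
        have hc2' : bsem semVT G π₂ true (Sum.inl u) c := hc2
        obtain ⟨-, c', hc', hcn⟩ := bsem_endpoint semVT G hc2'
        subst hc'
        refine ⟨Sum.inl c', hc2', ?_⟩
        rw [ih₁ true ψ c' hcn]
        exact ⟨v', hc1, hψ⟩
  | union π₁ π₂ ih₁ ih₂ =>
    rw [show shaclSat semVT G (Sum.inl u) (EP (.union π₁ π₂) b ψ) =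
      (shaclSat semVT G (Sum.inl u) (EP π₁ b ψ) ∨ shaclSat semVT G (Sum.inl u) (EP π₂ b ψ)) from rfl,
      ih₁ b ψ u hu, ih₂ b ψ u hu]
    constructor
    · rintro (⟨v', hv, hψ⟩ | ⟨v', hv, hψ⟩)
      · refine ⟨v', ?_, hψ⟩
        cases b with
        | false => exact Or.inl hv
        | true => exact Or.inl hv
      · refine ⟨v', ?_, hψ⟩
        cases b with
        | false => exact Or.inr hv
        | true => exact Or.inr hv
    · rintro ⟨v', hv, hψ⟩
      have : bsem semVT G π₁ b (Sum.inl u) v' ∨ bsem semVT G π₂ b (Sum.inl u) v' := by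
        cases b with
        | false => exact hv
        | true => exact hv
      rcases this with h | h
      · exact Or.inl ⟨v', h, hψ⟩
      · exact Or.inr ⟨v', h, hψ⟩

end CoGSL2SHACL
namespace CoGSL2SHACL

variable {VT : Type} (semVT : VT → Set GValue) (G : CommonGraph)

/-! #### Disjunctive normal form of closed content types -/

def dnf : CCType VT → List (List (GKey × VT))
  | .emp => [[]]
  | .single k τ => [[(k, τ)]]
  | .band ν₁ ν₂ => (dnf ν₁).flatMap (fun L₁ => (dnf ν₂).map (fun L₂ => L₁ ++ L₂))
  | .bor ν₁ ν₂ => dnf ν₁ ++ dnf ν₂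

def MatchL (r : Set (GKey × GValue)) (L : List (GKey × VT)) : Prop :=
  (∀ kt ∈ L, ∃ w ∈ semVT kt.2, (kt.1, w) ∈ r) ∧ (∀ kw ∈ r, ∃ kt ∈ L, Prod.fst kw = kt.1)

lemma dnf_spec (ν : CCType VT) (r : Set (GKey × GValue)) (hr : IsRecord r) :
    r ∈ ctSem semVT ν.toCT ↔ ∃ L ∈ dnf ν, MatchL semVT r L := by
  induction ν generalizing r with
  | emp =>
    simp only [CCType.toCT, ctSem, Set.mem_singleton_iff, dnf, List.mem_singleton]
    constructor
    · rintro rfl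
      exact ⟨[], rfl, by simp [MatchL]⟩
    · rintro ⟨L, rfl, -, h2⟩
      ext ⟨k, w⟩
      simp only [Set.mem_empty_iff_false, iff_false]
      intro hm
      obtain ⟨kt, hkt, -⟩ := h2 _ hm
      exact absurd hkt List.not_mem_nil
  | single k τ =>
    simp only [CCType.toCT, ctSem, Set.mem_setOf_eq, dnf, List.mem_singleton]
    constructor
    · rintro ⟨w, hw, rfl⟩
      refine ⟨[(k, τ)], rfl, ?_, ?_⟩
      · rintro kt hkt
        rw [List.mem_singleton] at hkt
        subst hkt
        exact ⟨w, hw, rfl⟩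
      · rintro ⟨k', w'⟩ hm
        rw [Set.mem_singleton_iff, Prod.mk.injEq] at hm
        exact ⟨(k, τ), List.mem_singleton.mpr rfl, hm.1⟩
    · rintro ⟨L, rfl, h1, h2⟩
      obtain ⟨w, hw, hm⟩ := h1 (k, τ) (List.mem_singleton.mpr rfl)
      refine ⟨w, hw, ?_⟩
      ext ⟨k', w'⟩
      simp only [Set.mem_singleton_iff, Prod.mk.injEq]
      constructor
      · intro hm'
        obtain ⟨kt, hkt, he⟩ := h2 _ hm'
        rw [List.mem_singleton] at hkt
        subst hkt
        simp only at he
        subst he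
        exact ⟨rfl, hr.2 _ w' w hm' hm⟩
      · rintro ⟨rfl, rfl⟩
        exact hm
  | band ν₁ ν₂ ih₁ ih₂ =>
    simp only [CCType.toCT, ctSem, Set.mem_setOf_eq, dnf]
    constructor
    · rintro ⟨-, r₁, h₁, r₂, h₂, rfl⟩
      have hr₁ : IsRecord r₁ := record_subset hr Set.subset_union_left
      have hr₂ : IsRecord r₂ := record_subset hr Set.subset_union_right
      obtain ⟨L₁, hL₁, m₁⟩ := (ih₁ r₁ hr₁).mp h₁
      obtain ⟨L₂, hL₂, m₂⟩ := (ih₂ r₂ hr₂).mp h₂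
      refine ⟨L₁ ++ L₂, List.mem_flatMap.mpr ⟨L₁, hL₁, List.mem_map.mpr ⟨L₂, hL₂, rfl⟩⟩, ?_, ?_⟩
      · intro kt hkt
        rcases List.mem_append.mp hkt with h | h
        · obtain ⟨w, hw, hm⟩ := m₁.1 kt h
          exact ⟨w, hw, Or.inl hm⟩
        · obtain ⟨w, hw, hm⟩ := m₂.1 kt h
          exact ⟨w, hw, Or.inr hm⟩
      · intro kw hkw
        rcases hkw with h | h
        · obtain ⟨kt, hkt, he⟩ := m₁.2 kw h
          exact ⟨kt, List.mem_append.mpr (Or.inl hkt), he⟩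
        · obtain ⟨kt, hkt, he⟩ := m₂.2 kw h
          exact ⟨kt, List.mem_append.mpr (Or.inr hkt), he⟩
    · rintro ⟨L, hL, m1, m2⟩
      obtain ⟨L₁, hL₁, L₂, hL₂, rfl⟩ : ∃ L₁ ∈ dnf ν₁, ∃ L₂ ∈ dnf ν₂, L = L₁ ++ L₂ := by
        obtain ⟨L₁, hL₁, hmap⟩ := List.mem_flatMap.mp hL
        obtain ⟨L₂, hL₂, rfl⟩ := List.mem_map.mp hmap
        exact ⟨L₁, hL₁, L₂, hL₂, rfl⟩
      set r₁ : Set (GKey × GValue) := {kw ∈ r | ∃ kt ∈ L₁, Prod.fst kw = kt.1} with hr₁def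
      set r₂ : Set (GKey × GValue) := {kw ∈ r | ∃ kt ∈ L₂, Prod.fst kw = kt.1} with hr₂def
      have hsub₁ : r₁ ⊆ r := fun kw h => h.1
      have hsub₂ : r₂ ⊆ r := fun kw h => h.1
      have hrec₁ : IsRecord r₁ := record_subset hr hsub₁
      have hrec₂ : IsRecord r₂ := record_subset hr hsub₂
      have hunion : r = r₁ ∪ r₂ := by
        ext kw
        constructor
        · intro hm
          obtain ⟨kt, hkt, he⟩ := m2 kw hm
          rcases List.mem_append.mp hkt with h | h
          · exact Or.inl ⟨hm, kt, h, he⟩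
          · exact Or.inr ⟨hm, kt, h, he⟩
        · rintro (h | h)
          · exact h.1
          · exact h.1
      have hm₁ : MatchL semVT r₁ L₁ := by
        constructor
        · intro kt hkt
          obtain ⟨w, hw, hm⟩ := m1 kt (List.mem_append.mpr (Or.inl hkt))
          exact ⟨w, hw, hm, kt, hkt, rfl⟩
        · rintro kw ⟨-, hex⟩
          exact hex
      have hm₂ : MatchL semVT r₂ L₂ := by
        constructor
        · intro kt hkt
          obtain ⟨w, hw, hm⟩ := m1 kt (List.mem_append.mpr (Or.inr hkt))
          exact ⟨w, hw, hm, kt, hkt, rfl⟩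
        · rintro kw ⟨-, hex⟩
          exact hex
      exact ⟨hr, r₁, (ih₁ r₁ hrec₁).mpr ⟨L₁, hL₁, hm₁⟩,
        r₂, (ih₂ r₂ hrec₂).mpr ⟨L₂, hL₂, hm₂⟩, hunion⟩
  | bor ν₁ ν₂ ih₁ ih₂ =>
    simp only [CCType.toCT, ctSem, Set.mem_union, dnf, List.mem_append]
    rw [ih₁ r hr, ih₂ r hr]
    constructor
    · rintro (⟨L, hL, m⟩ | ⟨L, hL, m⟩)
      · exact ⟨L, Or.inl hL, m⟩
      · exact ⟨L, Or.inr hL, m⟩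
    · rintro ⟨L, hL | hL, m⟩
      · exact Or.inl ⟨L, hL, m⟩
      · exact Or.inr ⟨L, hL, m⟩

end CoGSL2SHACL
namespace CoGSL2SHACL

variable {VT : Type} (semVT : VT → Set GValue) (G : CommonGraph)

/-! #### Translation of closedNode  -/

def bigAnd : List (SShape VT) → SShape VT
  | [] => .top
  | φ :: l => .and φ (bigAnd l)

def bigOr : List (SShape VT) → SShape VT
  | [] => .not .top
  | φ :: l => .or φ (bigOr l)

lemma sat_bigAnd (l : List (SShape VT)) (v : NV) :
    shaclSat semVT G v (bigAnd l) ↔ ∀ φ ∈ l, shaclSat semVT G v φ := by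
  induction l with
  | nil => simp only [bigAnd, List.not_mem_nil, false_implies, implies_true, iff_true]; trivial
  | cons φ l ih =>
    rw [show shaclSat semVT G v (bigAnd (φ :: l)) =
      (shaclSat semVT G v φ ∧ shaclSat semVT G v (bigAnd l)) from rfl, ih]
    simp

lemma sat_bigOr (l : List (SShape VT)) (v : NV) :
    shaclSat semVT G v (bigOr l) ↔ ∃ φ ∈ l, shaclSat semVT G v φ := by
  induction l with
  | nil =>
    simp only [List.not_mem_nil, false_and, exists_false, iff_false]
    exact fun h => h trivial
  | cons φ l ih =>
    rw [show shaclSat semVT G v (bigOr (φ :: l)) =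
      (shaclSat semVT G v φ ∨ shaclSat semVT G v (bigOr l)) from rfl, ih]
    simp

def conjShape (P : Finset GPred) (L : List (GKey × VT)) : SShape VT :=
  .and (bigAnd (L.map fun kt => hasKeyT kt.1 kt.2))
    (.closed (P.image Sum.inl ∪ (L.map fun kt => (Sum.inr kt.1 : PK)).toFinset))

lemma conjShape_spec (P : Finset GPred) (L : List (GKey × VT)) (u : GNode) :
    shaclSat semVT G (Sum.inl u) (conjShape P L) ↔
      (MatchL semVT (content G u) L ∧ ∀ p w, Triple.edge u p w ∈ G.triples → p ∈ P) := by
  rw [show shaclSat semVT G (Sum.inl u) (conjShape P L) =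
    (shaclSat semVT G (Sum.inl u) (bigAnd (L.map fun kt => hasKeyT kt.1 kt.2)) ∧
      ∀ q ∉ (P.image Sum.inl ∪ (L.map fun kt => (Sum.inr kt.1 : PK)).toFinset),
        ∀ b, ¬ tripleRel G q (Sum.inl u) b) from rfl, sat_bigAnd]
  have hQ : ∀ q : PK, q ∈ (P.image Sum.inl ∪ (L.map fun kt => (Sum.inr kt.1 : PK)).toFinset) ↔
      (∃ p ∈ P, q = Sum.inl p) ∨ (∃ kt ∈ L, q = Sum.inr kt.1) := by
    intro q
    simp only [Finset.mem_union, Finset.mem_image, List.mem_toFinset, List.mem_map]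
    constructor
    · rintro (⟨p, hp, rfl⟩ | ⟨kt, hkt, rfl⟩)
      · exact Or.inl ⟨p, hp, rfl⟩
      · exact Or.inr ⟨kt, hkt, rfl⟩
    · rintro (⟨p, hp, rfl⟩ | ⟨kt, hkt, rfl⟩)
      · exact Or.inl ⟨p, hp, rfl⟩
      · exact Or.inr ⟨kt, hkt, rfl⟩
  constructor
  · rintro ⟨h1, h2⟩
    refine ⟨⟨?_, ?_⟩, ?_⟩
    · intro kt hkt
      have := h1 _ (List.mem_map.mpr ⟨kt, hkt, rfl⟩)
      rw [sat_hasKeyT] at this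
      obtain ⟨u', w, hu', hw, hm⟩ := this
      cases hu'
      exact ⟨w, hw, hm⟩
    · rintro ⟨k, w⟩ hm
      by_contra hno
      push_neg at hno
      refine h2 (Sum.inr k) ?_ (Sum.inr w) hm
      rw [hQ]
      rintro (⟨p, -, hp⟩ | ⟨kt, hkt, he⟩)
      · cases hp
      · exact hno kt hkt ((Sum.inr.injEq _ _).mp he)
    · intro p w hm
      by_contra hp
      refine h2 (Sum.inl p) ?_ (Sum.inl w) hm
      rw [hQ]
      rintro (⟨p', hp', he⟩ | ⟨kt, -, he⟩)
      · cases he; exact hp hp'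
      · cases he
  · rintro ⟨⟨m1, m2⟩, hP⟩
    constructor
    · intro φ hφ
      obtain ⟨kt, hkt, rfl⟩ := List.mem_map.mp hφ
      rw [sat_hasKeyT]
      obtain ⟨w, hw, hm⟩ := m1 kt hkt
      exact ⟨u, w, rfl, hw, hm⟩
    · intro q hq b htr
      rw [hQ] at hq
      push_neg at hq
      cases q with
      | inl p =>
        rw [tripleRel_inl_iff] at htr
        obtain ⟨u', v', hu', -, hm⟩ := htr
        cases hu'
        exact hq.1 p (hP _ _ hm) rfl
      | inr k =>
        rw [tripleRel_inr_iff] at htr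
        obtain ⟨u', w, hu', -, hm⟩ := htr
        cases hu'
        obtain ⟨kt, hkt, he⟩ := m2 (k, w) hm
        exact hq.2 kt hkt (congrArg Sum.inr he)

def CNtr (ν : CCType VT) (P : Finset GPred) : SShape VT :=
  bigOr ((dnf ν).map (fun L => conjShape P L))

lemma CNtr_spec (ν : CCType VT) (P : Finset GPred) (u : GNode) :
    shaclSat semVT G (Sum.inl u) (CNtr ν P) ↔
      cshapeSat semVT G (Sum.inl u) (.closedNode ν P) := by
  rw [CNtr, sat_bigOr]
  rw [show cshapeSat semVT G (Sum.inl u) (.closedNode ν P) =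
    ((∃ u', (Sum.inl u : NV) = Sum.inl u' ∧ content G u' ∈ ctSem semVT ν.toCT) ∧
      (∀ u' p w, (Sum.inl u : NV) = Sum.inl u' → Triple.edge u' p w ∈ G.triples → p ∈ P)) from rfl]
  constructor
  · rintro ⟨φ, hφ, hsat⟩
    obtain ⟨L, hL, rfl⟩ := List.mem_map.mp hφ
    rw [conjShape_spec] at hsat
    obtain ⟨hm, hP⟩ := hsat
    refine ⟨⟨u, rfl, ?_⟩, ?_⟩
    · rw [dnf_spec semVT ν _ (content_isRecord G u)]
      exact ⟨L, hL, hm⟩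
    · rintro u' p w hu' hm'
      cases hu'
      exact hP p w hm'
  · rintro ⟨⟨u', hu', hct⟩, hP⟩
    cases hu'
    rw [dnf_spec semVT ν _ (content_isRecord G u)] at hct
    obtain ⟨L, hL, hm⟩ := hct
    refine ⟨conjShape P L, List.mem_map.mpr ⟨L, hL, rfl⟩, ?_⟩
    rw [conjShape_spec]
    exact ⟨hm, fun p w h => hP u p w rfl h⟩

end CoGSL2SHACL
namespace CoGSL2SHACL

variable {VT : Type} (semVT : VT → Set GValue) (G : CommonGraph)

/-! #### The node / value translations of common shapes -/

def TnodeExist : CPath VT → SShape VT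
  | .base π => EP π false .top
  | .toKey π k => EP π false (hasKey k)
  | .fromKey _ _ => .not .top
  | .between _ _ _ => .not .top
  | .keyOnly k => hasKey k

def TnodeAtLeast (n : ℕ) : OnePath VT → SShape VT
  | .fwd f₁ p f₂ => if n = 0 then .top else .and (coreF f₁) (.geq n (.sym (Sum.inl p)) (coreF f₂))
  | .bwd f₁ p f₂ => if n = 0 then .top else .and (coreF f₁) (.geq n (.inv (.sym (Sum.inl p))) (coreF f₂))
  | .toKey f k => if n = 0 then .top else .and (coreF f) (.geq n (.sym (Sum.inr k)) .top)
  | .fromKey _ _ => if n = 0 then .top else .not .top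

def TnodeAtMost (n : ℕ) : OnePath VT → SShape VT
  | .fwd f₁ p f₂ => .or (.not (coreF f₁)) (.leq n (.sym (Sum.inl p)) (coreF f₂))
  | .bwd f₁ p f₂ => .or (.not (coreF f₁)) (.leq n (.inv (.sym (Sum.inl p))) (coreF f₂))
  | .toKey f k => .or (.not (coreF f)) (.leq n (.sym (Sum.inr k)) .top)
  | .fromKey _ _ => .top

def Tnode : CShape VT → SShape VT
  | .exist π => TnodeExist π
  | .atMost n π => TnodeAtMost n π
  | .atLeast n π => TnodeAtLeast n π
  | .closedNode ν P => CNtr ν P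
  | .and φ₁ φ₂ => .and (Tnode φ₁) (Tnode φ₂)

def TvalExist : CPath VT → SShape VT
  | .fromKey k π => .geq 1 (.inv (.sym (Sum.inr k))) (EP π false .top)
  | .between k π k' => .geq 1 (.inv (.sym (Sum.inr k))) (EP π false (hasKey k'))
  | _ => .not .top

def TvalAtLeast (n : ℕ) : OnePath VT → SShape VT
  | .fromKey k f => .geq n (.inv (.sym (Sum.inr k))) (coreF f)
  | _ => if n = 0 then .top else .not .top

def TvalAtMost (n : ℕ) : OnePath VT → SShape VT
  | .fromKey k f => .leq n (.inv (.sym (Sum.inr k))) (coreF f)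
  | _ => .top

def Tval : CShape VT → SShape VT
  | .exist π => TvalExist π
  | .atMost n π => TvalAtMost n π
  | .atLeast n π => TvalAtLeast n π
  | .closedNode _ _ => .not .top
  | .and φ₁ φ₂ => .and (Tval φ₁) (Tval φ₂)

/-! #### Unfolding lemmas -/

lemma sat_geqn (n : ℕ) (π : SPath) (φ : SShape VT) (v : NV) :
    shaclSat semVT G v (.geq n π φ) ↔
      (n : ℕ∞) ≤ {u : NV | spathSem G π v u ∧ shaclSat semVT G u φ}.encard := Iff.rfl

lemma sat_leqn (n : ℕ) (π : SPath) (φ : SShape VT) (v : NV) :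
    shaclSat semVT G v (.leq n π φ) ↔
      {u : NV | spathSem G π v u ∧ shaclSat semVT G u φ}.encard ≤ (n : ℕ∞) := Iff.rfl

lemma cshape_atLeast (n : ℕ) (π : OnePath VT) (v : NV) :
    cshapeSat semVT G v (.atLeast n π) ↔
      (n : ℕ∞) ≤ {v' : NV | onePathSem semVT G π v v'}.encard := Iff.rfl

lemma cshape_atMost (n : ℕ) (π : OnePath VT) (v : NV) :
    cshapeSat semVT G v (.atMost n π) ↔
      {v' : NV | onePathSem semVT G π v v'}.encard ≤ (n : ℕ∞) := Iff.rfl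

lemma natCast_le_zero {n : ℕ} (h : (n : ℕ∞) ≤ 0) : n = 0 := by
  have : (n : ℕ∞) = 0 := le_antisymm h zero_le
  exact_mod_cast this

lemma keyRel_target {k : GKey} {a b : NV} (h : keyRel G k a b) :
    ∃ u w, a = Sum.inl u ∧ b = Sum.inr w ∧ Triple.prop u k w ∈ G.triples := by
  rw [keyRel_iff, tripleRel_inr_iff] at h
  exact h

/-! #### Set computations of single-step paths -/

lemma fwd_set_pos {f₁ f₂ : GFilter VT} {p : GPred} {u : GNode}
    (hf : cfilterSem semVT G f₁ (Sum.inl u) (Sum.inl u)) :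
    {v' : NV | onePathSem semVT G (.fwd f₁ p f₂) (Sum.inl u) v'} =
      {b : NV | spathSem G (.sym (Sum.inl p)) (Sum.inl u) b ∧ shaclSat semVT G b (coreF f₂)} := by
  ext b
  simp only [Set.mem_setOf_eq]
  constructor
  · rintro ⟨c, c', h1, h2, h3⟩
    obtain ⟨hcd, -⟩ := cfilter_diag semVT G h1
    cases hcd
    obtain ⟨hcd', u', hc', hn⟩ := cfilter_diag semVT G h3
    cases hcd'
    subst hc'
    exact ⟨h2, (coreF_spec semVT G f₂ u' hn).mpr h3⟩
  · rintro ⟨h2, hcore⟩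
    have h2' : tripleRel G (Sum.inl p) (Sum.inl u) b := h2
    have h2'' := h2'
    rw [tripleRel_inl_iff] at h2''
    obtain ⟨u0, v0, hu0, rfl, hm⟩ := h2''
    cases hu0
    exact ⟨Sum.inl u, Sum.inl v0, hf, h2',
      (coreF_spec semVT G f₂ v0 (node_of_edge_right G hm)).mp hcore⟩

lemma fwd_set_neg {f₁ f₂ : GFilter VT} {p : GPred} {u : GNode}
    (hf : ¬ cfilterSem semVT G f₁ (Sum.inl u) (Sum.inl u)) :
    {v' : NV | onePathSem semVT G (.fwd f₁ p f₂) (Sum.inl u) v'} = ∅ := by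
  ext b
  simp only [Set.mem_setOf_eq, Set.mem_empty_iff_false, iff_false]
  rintro ⟨c, c', h1, -, -⟩
  obtain ⟨hcd, -⟩ := cfilter_diag semVT G h1
  cases hcd
  exact hf h1

lemma bwd_set_pos {f₁ f₂ : GFilter VT} {p : GPred} {u : GNode}
    (hf : cfilterSem semVT G f₁ (Sum.inl u) (Sum.inl u)) :
    {v' : NV | onePathSem semVT G (.bwd f₁ p f₂) (Sum.inl u) v'} =
      {b : NV | spathSem G (.inv (.sym (Sum.inl p))) (Sum.inl u) b ∧ shaclSat semVT G b (coreF f₂)} := by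
  ext b
  simp only [Set.mem_setOf_eq]
  constructor
  · rintro ⟨c, c', h1, h2, h3⟩
    obtain ⟨hcd, -⟩ := cfilter_diag semVT G h1
    cases hcd
    obtain ⟨hcd', u', hc', hn⟩ := cfilter_diag semVT G h3
    cases hcd'
    subst hc'
    exact ⟨h2, (coreF_spec semVT G f₂ u' hn).mpr h3⟩
  · rintro ⟨h2, hcore⟩
    have h2' : tripleRel G (Sum.inl p) b (Sum.inl u) := h2
    have h2'' := h2'
    rw [tripleRel_inl_iff] at h2''
    obtain ⟨u0, v0, rfl, hv0, hm⟩ := h2''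
    exact ⟨Sum.inl u, Sum.inl u0, hf, h2',
      (coreF_spec semVT G f₂ u0 (node_of_edge_left G hm)).mp hcore⟩

lemma bwd_set_neg {f₁ f₂ : GFilter VT} {p : GPred} {u : GNode}
    (hf : ¬ cfilterSem semVT G f₁ (Sum.inl u) (Sum.inl u)) :
    {v' : NV | onePathSem semVT G (.bwd f₁ p f₂) (Sum.inl u) v'} = ∅ := by
  ext b
  simp only [Set.mem_setOf_eq, Set.mem_empty_iff_false, iff_false]
  rintro ⟨c, c', h1, -, -⟩
  obtain ⟨hcd, -⟩ := cfilter_diag semVT G h1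
  cases hcd
  exact hf h1

lemma toKey_set_pos {f : GFilter VT} {k : GKey} {u : GNode}
    (hf : cfilterSem semVT G f (Sum.inl u) (Sum.inl u)) :
    {v' : NV | onePathSem semVT G (.toKey f k) (Sum.inl u) v'} =
      {b : NV | spathSem G (.sym (Sum.inr k)) (Sum.inl u) b ∧ shaclSat semVT G b .top} := by
  ext b
  simp only [Set.mem_setOf_eq]
  constructor
  · rintro ⟨c, h1, h2⟩
    obtain ⟨hcd, -⟩ := cfilter_diag semVT G h1
    cases hcd
    exact ⟨(keyRel_iff G k _ _).mp h2, trivial⟩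
  · rintro ⟨h2, -⟩
    exact ⟨Sum.inl u, hf, (keyRel_iff G k _ _).mpr h2⟩

lemma toKey_set_neg {f : GFilter VT} {k : GKey} {u : GNode}
    (hf : ¬ cfilterSem semVT G f (Sum.inl u) (Sum.inl u)) :
    {v' : NV | onePathSem semVT G (.toKey f k) (Sum.inl u) v'} = ∅ := by
  ext b
  simp only [Set.mem_setOf_eq, Set.mem_empty_iff_false, iff_false]
  rintro ⟨c, h1, -⟩
  obtain ⟨hcd, -⟩ := cfilter_diag semVT G h1
  cases hcd
  exact hf h1

lemma fromKey_node_set {f : GFilter VT} {k : GKey} {u : GNode} :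
    {v' : NV | onePathSem semVT G (.fromKey k f) (Sum.inl u) v'} = ∅ := by
  ext b
  simp only [Set.mem_setOf_eq, Set.mem_empty_iff_false, iff_false]
  rintro ⟨c, h1, -⟩
  obtain ⟨u0, w0, -, he, -⟩ := keyRel_target G h1
  cases he

lemma fromKey_val_set {f : GFilter VT} {k : GKey} {w : GValue} :
    {v' : NV | onePathSem semVT G (.fromKey k f) (Sum.inr w) v'} =
      {b : NV | spathSem G (.inv (.sym (Sum.inr k))) (Sum.inr w) b ∧ shaclSat semVT G b (coreF f)} := by
  ext b
  simp only [Set.mem_setOf_eq]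
  constructor
  · rintro ⟨c, h1, h2⟩
    obtain ⟨u0, w0, rfl, hw0, hm⟩ := keyRel_target G h1
    obtain rfl : w = w0 := by injection hw0
    obtain ⟨hcd, -⟩ := cfilter_diag semVT G h2
    cases hcd
    have h1' : tripleRel G (Sum.inr k) (Sum.inl u0) (Sum.inr w) := hm
    exact ⟨h1', (coreF_spec semVT G f u0 (node_of_prop G hm)).mpr h2⟩
  · rintro ⟨h1, hcore⟩
    have h1' : tripleRel G (Sum.inr k) b (Sum.inr w) := h1
    have h1'' := h1'
    rw [tripleRel_inr_iff] at h1''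
    obtain ⟨u0, w0, rfl, hw0, hm⟩ := h1''
    obtain rfl : w = w0 := by injection hw0
    exact ⟨Sum.inl u0, (keyRel_iff G k _ _).mpr h1',
      (coreF_spec semVT G f u0 (node_of_prop G hm)).mp hcore⟩

lemma fwd_val_set {f₁ f₂ : GFilter VT} {p : GPred} {w : GValue} :
    {v' : NV | onePathSem semVT G (.fwd f₁ p f₂) (Sum.inr w) v'} = ∅ := by
  ext b
  simp only [Set.mem_setOf_eq, Set.mem_empty_iff_false, iff_false]
  rintro ⟨c, c', h1, -, -⟩
  obtain ⟨-, u, he, -⟩ := cfilter_diag semVT G h1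
  cases he

lemma bwd_val_set {f₁ f₂ : GFilter VT} {p : GPred} {w : GValue} :
    {v' : NV | onePathSem semVT G (.bwd f₁ p f₂) (Sum.inr w) v'} = ∅ := by
  ext b
  simp only [Set.mem_setOf_eq, Set.mem_empty_iff_false, iff_false]
  rintro ⟨c, c', h1, -, -⟩
  obtain ⟨-, u, he, -⟩ := cfilter_diag semVT G h1
  cases he

lemma toKey_val_set {f : GFilter VT} {k : GKey} {w : GValue} :
    {v' : NV | onePathSem semVT G (.toKey f k) (Sum.inr w) v'} = ∅ := by
  ext b
  simp only [Set.mem_setOf_eq, Set.mem_empty_iff_false, iff_false]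
  rintro ⟨c, h1, -⟩
  obtain ⟨-, u, he, -⟩ := cfilter_diag semVT G h1
  cases he

end CoGSL2SHACL
namespace CoGSL2SHACL

variable {VT : Type} (semVT : VT → Set GValue) (G : CommonGraph)

lemma sat_or (φ ψ : SShape VT) (v : NV) :
    shaclSat semVT G v (.or φ ψ) ↔ (shaclSat semVT G v φ ∨ shaclSat semVT G v ψ) := Iff.rfl
lemma sat_and (φ ψ : SShape VT) (v : NV) :
    shaclSat semVT G v (.and φ ψ) ↔ (shaclSat semVT G v φ ∧ shaclSat semVT G v ψ) := Iff.rfl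
lemma sat_not (φ : SShape VT) (v : NV) :
    shaclSat semVT G v (.not φ) ↔ ¬ shaclSat semVT G v φ := Iff.rfl
lemma sat_top (v : NV) : shaclSat semVT G v (.top : SShape VT) ↔ True := Iff.rfl
lemma cshape_exist (π : CPath VT) (v : NV) :
    cshapeSat semVT G v (.exist π) ↔ ∃ v', cpathSem semVT G π v v' := Iff.rfl
lemma cshape_and (φ ψ : CShape VT) (v : NV) :
    cshapeSat semVT G v (.and φ ψ) ↔ (cshapeSat semVT G v φ ∧ cshapeSat semVT G v ψ) := Iff.rfl

lemma Tnode_spec (φ : CShape VT) (u : GNode) (hu : u ∈ nodesSet G) :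
    shaclSat semVT G (Sum.inl u) (Tnode φ) ↔ cshapeSat semVT G (Sum.inl u) φ := by
  induction φ with
  | exist π =>
    cases π with
    | base π =>
      rw [show Tnode (CShape.exist (.base π)) = EP π false .top from rfl,
        EP_spec semVT G π false _ u hu, cshape_exist]
      constructor
      · rintro ⟨v', hv, -⟩; exact ⟨v', hv⟩
      · rintro ⟨v', hv⟩; exact ⟨v', hv, trivial⟩
    | toKey π k =>
      rw [show Tnode (CShape.exist (.toKey π k)) = EP π false (hasKey k) from rfl,
        EP_spec semVT G π false _ u hu, cshape_exist]
      constructor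
      · rintro ⟨c, hc, hk⟩
        rw [sat_hasKey] at hk
        obtain ⟨u', w, rfl, hm⟩ := hk
        exact ⟨Sum.inr w, Sum.inl u', hc, hm⟩
      · rintro ⟨v', c, hc, hk⟩
        obtain ⟨u', w, rfl, rfl, hm⟩ := keyRel_target G hk
        refine ⟨Sum.inl u', hc, ?_⟩
        rw [sat_hasKey]
        exact ⟨u', w, rfl, hm⟩
    | fromKey k π =>
      rw [show Tnode (CShape.exist (.fromKey k π)) = SShape.not .top from rfl, sat_not, sat_top,
        cshape_exist]
      constructor
      · intro h; exact (h trivial).elim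
      · rintro ⟨v', c, hk, -⟩
        obtain ⟨u', w, -, he, -⟩ := keyRel_target G hk
        cases he
    | between k π k' =>
      rw [show Tnode (CShape.exist (.between k π k')) = SShape.not .top from rfl, sat_not, sat_top,
        cshape_exist]
      constructor
      · intro h; exact (h trivial).elim
      · rintro ⟨v', c, c', hk, -, -⟩
        obtain ⟨u', w, -, he, -⟩ := keyRel_target G hk
        cases he
    | keyOnly k =>
      rw [show Tnode (CShape.exist (.keyOnly k)) = hasKey k from rfl, sat_hasKey, cshape_exist]
      constructor
      · rintro ⟨u', w, he, hm⟩
        cases he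
        exact ⟨Sum.inr w, hm⟩
      · rintro ⟨v', hk⟩
        have hk' : keyRel G k (Sum.inl u) v' := hk
        obtain ⟨u', w, he, rfl, hm⟩ := keyRel_target G hk'
        cases he
        exact ⟨u, w, rfl, hm⟩
  | atMost n π =>
    cases π with
    | fwd f₁ p f₂ =>
      rw [show Tnode (.atMost n (.fwd f₁ p f₂)) =
        SShape.or (.not (coreF f₁)) (.leq n (.sym (Sum.inl p)) (coreF f₂)) from rfl,
        sat_or, sat_not, sat_leqn, cshape_atMost, coreF_spec semVT G f₁ u hu]
      by_cases hf : cfilterSem semVT G f₁ (Sum.inl u) (Sum.inl u)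
      · rw [fwd_set_pos semVT G hf]
        exact ⟨fun h => h.resolve_left (fun hc => hc hf), fun h => Or.inr h⟩
      · rw [fwd_set_neg semVT G hf, Set.encard_empty]
        exact ⟨fun _ => zero_le, fun _ => Or.inl hf⟩
    | bwd f₁ p f₂ =>
      rw [show Tnode (.atMost n (.bwd f₁ p f₂)) =
        SShape.or (.not (coreF f₁)) (.leq n (.inv (.sym (Sum.inl p))) (coreF f₂)) from rfl,
        sat_or, sat_not, sat_leqn, cshape_atMost, coreF_spec semVT G f₁ u hu]
      by_cases hf : cfilterSem semVT G f₁ (Sum.inl u) (Sum.inl u)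
      · rw [bwd_set_pos semVT G hf]
        exact ⟨fun h => h.resolve_left (fun hc => hc hf), fun h => Or.inr h⟩
      · rw [bwd_set_neg semVT G hf, Set.encard_empty]
        exact ⟨fun _ => zero_le, fun _ => Or.inl hf⟩
    | toKey f k =>
      rw [show Tnode (.atMost n (.toKey f k)) =
        SShape.or (.not (coreF f)) (.leq n (.sym (Sum.inr k)) .top) from rfl,
        sat_or, sat_not, sat_leqn, cshape_atMost, coreF_spec semVT G f u hu]
      by_cases hf : cfilterSem semVT G f (Sum.inl u) (Sum.inl u)
      · rw [toKey_set_pos semVT G hf]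
        exact ⟨fun h => h.resolve_left (fun hc => hc hf), fun h => Or.inr h⟩
      · rw [toKey_set_neg semVT G hf, Set.encard_empty]
        exact ⟨fun _ => zero_le, fun _ => Or.inl hf⟩
    | fromKey k f =>
      rw [show Tnode (.atMost n (.fromKey k f)) = (SShape.top : SShape VT) from rfl, sat_top,
        cshape_atMost, fromKey_node_set semVT G, Set.encard_empty]
      exact ⟨fun _ => zero_le, fun _ => trivial⟩
  | atLeast n π =>
    cases π with
    | fwd f₁ p f₂ =>
      rw [show Tnode (.atLeast n (.fwd f₁ p f₂)) =
        (if n = 0 then SShape.top else .and (coreF f₁) (.geq n (.sym (Sum.inl p)) (coreF f₂))) from rfl,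
        cshape_atLeast]
      by_cases hn : n = 0
      · subst hn
        rw [if_pos rfl, sat_top]
        refine ⟨fun _ => ?_, fun _ => trivial⟩
        simp
      · rw [if_neg hn, sat_and, sat_geqn, coreF_spec semVT G f₁ u hu]
        by_cases hf : cfilterSem semVT G f₁ (Sum.inl u) (Sum.inl u)
        · rw [fwd_set_pos semVT G hf]
          exact ⟨fun h => h.2, fun h => ⟨hf, h⟩⟩
        · rw [fwd_set_neg semVT G hf, Set.encard_empty]
          exact ⟨fun h => absurd h.1 hf, fun h => absurd (natCast_le_zero h) hn⟩
    | bwd f₁ p f₂ =>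
      rw [show Tnode (.atLeast n (.bwd f₁ p f₂)) =
        (if n = 0 then SShape.top else .and (coreF f₁) (.geq n (.inv (.sym (Sum.inl p))) (coreF f₂))) from rfl,
        cshape_atLeast]
      by_cases hn : n = 0
      · subst hn
        rw [if_pos rfl, sat_top]
        refine ⟨fun _ => ?_, fun _ => trivial⟩
        simp
      · rw [if_neg hn, sat_and, sat_geqn, coreF_spec semVT G f₁ u hu]
        by_cases hf : cfilterSem semVT G f₁ (Sum.inl u) (Sum.inl u)
        · rw [bwd_set_pos semVT G hf]
          exact ⟨fun h => h.2, fun h => ⟨hf, h⟩⟩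
        · rw [bwd_set_neg semVT G hf, Set.encard_empty]
          exact ⟨fun h => absurd h.1 hf, fun h => absurd (natCast_le_zero h) hn⟩
    | toKey f k =>
      rw [show Tnode (.atLeast n (.toKey f k)) =
        (if n = 0 then SShape.top else .and (coreF f) (.geq n (.sym (Sum.inr k)) .top)) from rfl,
        cshape_atLeast]
      by_cases hn : n = 0
      · subst hn
        rw [if_pos rfl, sat_top]
        refine ⟨fun _ => ?_, fun _ => trivial⟩
        simp
      · rw [if_neg hn, sat_and, sat_geqn, coreF_spec semVT G f u hu]
        by_cases hf : cfilterSem semVT G f (Sum.inl u) (Sum.inl u)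
        · rw [toKey_set_pos semVT G hf]
          exact ⟨fun h => h.2, fun h => ⟨hf, h⟩⟩
        · rw [toKey_set_neg semVT G hf, Set.encard_empty]
          exact ⟨fun h => absurd h.1 hf, fun h => absurd (natCast_le_zero h) hn⟩
    | fromKey k f =>
      rw [show Tnode (.atLeast n (.fromKey k f)) =
        (if n = 0 then SShape.top else SShape.not .top) from rfl,
        cshape_atLeast, fromKey_node_set semVT G, Set.encard_empty]
      by_cases hn : n = 0
      · subst hn
        rw [if_pos rfl, sat_top]
        refine ⟨fun _ => ?_, fun _ => trivial⟩
        simp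
      · rw [if_neg hn, sat_not, sat_top]
        exact ⟨fun h => (h trivial).elim, fun h => absurd (natCast_le_zero h) hn⟩
  | closedNode ν P =>
    rw [show Tnode (.closedNode ν P) = CNtr ν P from rfl]
    exact CNtr_spec semVT G ν P u
  | and φ₁ φ₂ ih₁ ih₂ =>
    rw [show Tnode (.and φ₁ φ₂) = SShape.and (Tnode φ₁) (Tnode φ₂) from rfl, sat_and, cshape_and]
    exact and_congr ih₁ ih₂

lemma Tval_spec (φ : CShape VT) (w : GValue) :
    shaclSat semVT G (Sum.inr w) (Tval φ) ↔ cshapeSat semVT G (Sum.inr w) φ := by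
  induction φ with
  | exist π =>
    cases π with
    | base π =>
      rw [show Tval (CShape.exist (.base π)) = SShape.not .top from rfl, sat_not, sat_top,
        cshape_exist]
      constructor
      · intro h; exact (h trivial).elim
      · rintro ⟨v', hv⟩
        obtain ⟨⟨u', he, -⟩, -⟩ := bpath_endpoints semVT G hv
        cases he
    | toKey π k =>
      rw [show Tval (CShape.exist (.toKey π k)) = SShape.not .top from rfl, sat_not, sat_top,
        cshape_exist]
      constructor
      · intro h; exact (h trivial).elim
      · rintro ⟨v', c, hv, -⟩
        obtain ⟨⟨u', he, -⟩, -⟩ := bpath_endpoints semVT G hv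
        cases he
    | fromKey k π =>
      rw [show Tval (CShape.exist (.fromKey k π)) =
        SShape.geq 1 (.inv (.sym (Sum.inr k))) (EP π false .top) from rfl, sat_geq1, cshape_exist]
      constructor
      · rintro ⟨b, hb, hsat⟩
        have hb' : tripleRel G (Sum.inr k) b (Sum.inr w) := hb
        rw [tripleRel_inr_iff] at hb'
        obtain ⟨u0, w0, rfl, hw0, hm⟩ := hb'
        obtain rfl : w = w0 := by injection hw0
        rw [EP_spec semVT G π false _ u0 (node_of_prop G hm)] at hsat
        obtain ⟨v', hv, -⟩ := hsat
        exact ⟨v', Sum.inl u0, hm, hv⟩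
      · rintro ⟨v', c, hk, hp⟩
        obtain ⟨u0, w0, rfl, hw0, hm⟩ := keyRel_target G hk
        obtain rfl : w = w0 := by injection hw0
        refine ⟨Sum.inl u0, hm, ?_⟩
        rw [EP_spec semVT G π false _ u0 (node_of_prop G hm)]
        exact ⟨v', hp, trivial⟩
    | between k π k' =>
      rw [show Tval (CShape.exist (.between k π k')) =
        SShape.geq 1 (.inv (.sym (Sum.inr k))) (EP π false (hasKey k')) from rfl, sat_geq1,
        cshape_exist]
      constructor
      · rintro ⟨b, hb, hsat⟩
        have hb' : tripleRel G (Sum.inr k) b (Sum.inr w) := hb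
        rw [tripleRel_inr_iff] at hb'
        obtain ⟨u0, w0, rfl, hw0, hm⟩ := hb'
        obtain rfl : w = w0 := by injection hw0
        rw [EP_spec semVT G π false _ u0 (node_of_prop G hm)] at hsat
        obtain ⟨c', hv, hk'⟩ := hsat
        rw [sat_hasKey] at hk'
        obtain ⟨u', w', rfl, hm'⟩ := hk'
        exact ⟨Sum.inr w', Sum.inl u0, Sum.inl u', hm, hv, hm'⟩
      · rintro ⟨b, c, c', hk, hp, hk'⟩
        obtain ⟨u0, w0, rfl, hw0, hm⟩ := keyRel_target G hk
        obtain rfl : w = w0 := by injection hw0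
        refine ⟨Sum.inl u0, hm, ?_⟩
        rw [EP_spec semVT G π false _ u0 (node_of_prop G hm)]
        obtain ⟨u', w', rfl, rfl, hm'⟩ := keyRel_target G hk'
        refine ⟨Sum.inl u', hp, ?_⟩
        rw [sat_hasKey]
        exact ⟨u', w', rfl, hm'⟩
    | keyOnly k =>
      rw [show Tval (CShape.exist (.keyOnly k)) = SShape.not .top from rfl, sat_not, sat_top,
        cshape_exist]
      constructor
      · intro h; exact (h trivial).elim
      · rintro ⟨v', hk⟩
        have hk' : keyRel G k (Sum.inr w) v' := hk
        obtain ⟨u', w', he, -, -⟩ := keyRel_target G hk'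
        cases he
  | atMost n π =>
    cases π with
    | fwd f₁ p f₂ =>
      rw [show Tval (.atMost n (.fwd f₁ p f₂)) = (SShape.top : SShape VT) from rfl, sat_top,
        cshape_atMost, fwd_val_set semVT G, Set.encard_empty]
      exact ⟨fun _ => zero_le, fun _ => trivial⟩
    | bwd f₁ p f₂ =>
      rw [show Tval (.atMost n (.bwd f₁ p f₂)) = (SShape.top : SShape VT) from rfl, sat_top,
        cshape_atMost, bwd_val_set semVT G, Set.encard_empty]
      exact ⟨fun _ => zero_le, fun _ => trivial⟩
    | toKey f k =>
      rw [show Tval (.atMost n (.toKey f k)) = (SShape.top : SShape VT) from rfl, sat_top,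
        cshape_atMost, toKey_val_set semVT G, Set.encard_empty]
      exact ⟨fun _ => zero_le, fun _ => trivial⟩
    | fromKey k f =>
      rw [show Tval (.atMost n (.fromKey k f)) =
        SShape.leq n (.inv (.sym (Sum.inr k))) (coreF f) from rfl, sat_leqn, cshape_atMost,
        fromKey_val_set semVT G]
  | atLeast n π =>
    cases π with
    | fwd f₁ p f₂ =>
      rw [show Tval (.atLeast n (.fwd f₁ p f₂)) =
        (if n = 0 then SShape.top else SShape.not .top) from rfl,
        cshape_atLeast, fwd_val_set semVT G, Set.encard_empty]
      by_cases hn : n = 0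
      · subst hn
        rw [if_pos rfl, sat_top]
        refine ⟨fun _ => ?_, fun _ => trivial⟩
        simp
      · rw [if_neg hn, sat_not, sat_top]
        exact ⟨fun h => (h trivial).elim, fun h => absurd (natCast_le_zero h) hn⟩
    | bwd f₁ p f₂ =>
      rw [show Tval (.atLeast n (.bwd f₁ p f₂)) =
        (if n = 0 then SShape.top else SShape.not .top) from rfl,
        cshape_atLeast, bwd_val_set semVT G, Set.encard_empty]
      by_cases hn : n = 0
      · subst hn
        rw [if_pos rfl, sat_top]
        refine ⟨fun _ => ?_, fun _ => trivial⟩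
        simp
      · rw [if_neg hn, sat_not, sat_top]
        exact ⟨fun h => (h trivial).elim, fun h => absurd (natCast_le_zero h) hn⟩
    | toKey f k =>
      rw [show Tval (.atLeast n (.toKey f k)) =
        (if n = 0 then SShape.top else SShape.not .top) from rfl,
        cshape_atLeast, toKey_val_set semVT G, Set.encard_empty]
      by_cases hn : n = 0
      · subst hn
        rw [if_pos rfl, sat_top]
        refine ⟨fun _ => ?_, fun _ => trivial⟩
        simp
      · rw [if_neg hn, sat_not, sat_top]
        exact ⟨fun h => (h trivial).elim, fun h => absurd (natCast_le_zero h) hn⟩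
    | fromKey k f =>
      rw [show Tval (.atLeast n (.fromKey k f)) =
        SShape.geq n (.inv (.sym (Sum.inr k))) (coreF f) from rfl, sat_geqn, cshape_atLeast,
        fromKey_val_set semVT G]
  | closedNode ν P =>
    rw [show Tval (.closedNode ν P) = SShape.not .top from rfl, sat_not, sat_top]
    constructor
    · intro h; exact (h trivial).elim
    · rintro ⟨⟨u', he, -⟩, -⟩
      cases he
  | and φ₁ φ₂ ih₁ ih₂ =>
    rw [show Tval (.and φ₁ φ₂) = SShape.and (Tval φ₁) (Tval φ₂) from rfl, sat_and, cshape_and]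
    exact and_congr ih₁ ih₂

end CoGSL2SHACL
namespace CoGSL2SHACL

variable {VT : Type} (semVT : VT → Set GValue) (G : CommonGraph)

/-! #### Selectors -/

def mkSel (q : PK) (b : Bool) : SShape VT := .geq 1 (cond b (.inv (.sym q)) (.sym q)) .top

lemma mkSel_isSel (q : PK) (b : Bool) : IsSHACLSelector (mkSel (VT := VT) q b) := by
  cases b with
  | false => exact Or.inl ⟨q, rfl⟩
  | true => exact Or.inr (Or.inl ⟨q, rfl⟩)

lemma mkSel_fwd {q : PK} {v b' : NV} (h : tripleRel G q v b') :
    shaclSat semVT G v (mkSel q false) :=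
  (sat_geq1 semVT G _ _ _).mpr ⟨b', h, trivial⟩

lemma mkSel_bwd {q : PK} {v b' : NV} (h : tripleRel G q b' v) :
    shaclSat semVT G v (mkSel q true) :=
  (sat_geq1 semVT G _ _ _).mpr ⟨b', h, trivial⟩

lemma mkSel_fwd_elim {q : PK} {v : NV} (h : shaclSat semVT G v (mkSel q false)) :
    ∃ b, tripleRel G q v b := by
  obtain ⟨b, hb, -⟩ := (sat_geq1 semVT G _ _ _).mp h
  exact ⟨b, hb⟩

lemma mkSel_bwd_elim {q : PK} {v : NV} (h : shaclSat semVT G v (mkSel q true)) :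
    ∃ b, tripleRel G q b v := by
  obtain ⟨b, hb, -⟩ := (sat_geq1 semVT G _ _ _).mp h
  exact ⟨b, hb⟩

lemma mem_fwd {q : PK} {v b : NV} (h : tripleRel G q v b) :
    ∃ u, v = Sum.inl u ∧ u ∈ nodesSet G := by
  cases q with
  | inl p =>
    rw [tripleRel_inl_iff] at h
    obtain ⟨u, v0, rfl, -, hm⟩ := h
    exact ⟨u, rfl, node_of_edge_left G hm⟩
  | inr k =>
    rw [tripleRel_inr_iff] at h
    obtain ⟨u, w, rfl, -, hm⟩ := h
    exact ⟨u, rfl, node_of_prop G hm⟩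

lemma mem_bwd_pred {p : GPred} {v b : NV} (h : tripleRel G (Sum.inl p) b v) :
    ∃ u, v = Sum.inl u ∧ u ∈ nodesSet G := by
  rw [tripleRel_inl_iff] at h
  obtain ⟨u, v0, -, rfl, hm⟩ := h
  exact ⟨v0, rfl, node_of_edge_right G hm⟩

lemma mem_bwd_key {k : GKey} {v b : NV} (h : tripleRel G (Sum.inr k) b v) :
    ∃ w, v = Sum.inr w ∧ w ∈ valuesSet G := by
  rw [tripleRel_inr_iff] at h
  obtain ⟨u, w, -, rfl, hm⟩ := h
  exact ⟨w, rfl, value_of_prop G hm⟩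

/-- Selector data: the SHACL symbol, whether the step is inverted, and whether the
selected element is a node (`true`) or a value (`false`). -/
def selData : CShape VT → PK × Bool × Bool
  | .exist (.keyOnly k) => (Sum.inr k, false, true)
  | .exist (.base (.comp (.pred p) _)) => (Sum.inl p, false, true)
  | .exist (.toKey (.comp (.pred p) _) _) => (Sum.inl p, false, true)
  | .exist (.base (.comp (.inv (.pred p)) _)) => (Sum.inl p, true, true)
  | .exist (.toKey (.comp (.inv (.pred p)) _) _) => (Sum.inl p, true, true)
  | .exist (.base (.comp (.filt (.keyIs k _)) _)) => (Sum.inr k, false, true)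
  | .exist (.toKey (.comp (.filt (.keyIs k _)) _) _) => (Sum.inr k, false, true)
  | .exist (.base (.comp (.filt (.openCT (.single k _))) _)) => (Sum.inr k, false, true)
  | .exist (.toKey (.comp (.filt (.openCT (.single k _))) _) _) => (Sum.inr k, false, true)
  | .exist (.fromKey k _) => (Sum.inr k, true, false)
  | .exist (.between k _ _) => (Sum.inr k, true, false)
  | _ => (Sum.inl 0, false, true)

/-- The translated pair. -/
def trPair (pr : CShape VT × CShape VT) : SShape VT × SShape VT :=
  (mkSel (selData pr.1).1 (selData pr.1).2.1,
   .or (.not (cond (selData pr.1).2.2 (Tnode pr.1) (Tval pr.1)))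
       (cond (selData pr.1).2.2 (Tnode pr.2) (Tval pr.2)))

lemma pair_equiv_gen (sel ψ : CShape VT) (s : SShape VT) (flag : Bool)
    (hA : ∀ v, cshapeSat semVT G v sel → shaclSat semVT G v s)
    (hB : ∀ v, shaclSat semVT G v s →
      cond flag (∃ u, v = Sum.inl u ∧ u ∈ nodesSet G) (∃ w, v = Sum.inr w ∧ w ∈ valuesSet G)) :
    (∀ v, cshapeSat semVT G v sel → cshapeSat semVT G v ψ) ↔
    (∀ v, shaclSat semVT G v s →
      shaclSat semVT G v (.or (.not (cond flag (Tnode sel) (Tval sel)))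
        (cond flag (Tnode ψ) (Tval ψ)))) := by
  have spec : ∀ (χ : CShape VT) v, shaclSat semVT G v s →
      (shaclSat semVT G v (cond flag (Tnode χ) (Tval χ)) ↔ cshapeSat semVT G v χ) := by
    intro χ v hs
    have hm := hB v hs
    cases flag with
    | true =>
      obtain ⟨u, rfl, hu⟩ := hm
      exact Tnode_spec semVT G χ u hu
    | false =>
      obtain ⟨w, rfl, -⟩ := hm
      exact Tval_spec semVT G χ w
  constructor
  · intro h v hs
    rw [sat_or, sat_not, spec sel v hs, spec ψ v hs]
    by_cases hc : cshapeSat semVT G v sel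
    · exact Or.inr (h v hc)
    · exact Or.inl hc
  · intro h v hc
    have hs := hA v hc
    have h2 := h v hs
    rw [sat_or, sat_not, spec sel v hs, spec ψ v hs] at h2
    exact h2.resolve_left (fun hn => (hn hc).elim)

lemma ext_head {π : BPath VT} {k? : Option GKey} {v v' : NV}
    (h : cpathSem semVT G (CPath.ext π k?) v v') : ∃ c, bpathSem semVT G π v c := by
  cases k? with
  | none => exact ⟨v', h⟩
  | some k' =>
    obtain ⟨c, hc, -⟩ := h
    exact ⟨c, hc⟩

lemma pair_equiv (sel ψ : CShape VT) (hsel : IsCommonSelector sel) :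
    (∀ v, cshapeSat semVT G v sel → cshapeSat semVT G v ψ) ↔
    (∀ v, shaclSat semVT G v (trPair (sel, ψ)).1 → shaclSat semVT G v (trPair (sel, ψ)).2) := by
  rcases hsel with ⟨k, rfl⟩ | ⟨p, π, k?, rfl⟩ | ⟨p, π, k?, rfl⟩ | ⟨k, c, π, k?, rfl⟩ |
    ⟨k, τ, π, k?, rfl⟩ | ⟨k, π, rfl⟩ | ⟨k, π, k', rfl⟩
  · -- ∃k
    refine pair_equiv_gen semVT G _ ψ (mkSel (Sum.inr k) false) true
      (fun v hc => ?_) (fun v hs => ?_)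
    · obtain ⟨v', hk⟩ := hc
      have hk' : keyRel G k v v' := hk
      rw [keyRel_iff] at hk'
      exact mkSel_fwd semVT G hk'
    · obtain ⟨b, hb⟩ := mkSel_fwd_elim semVT G hs
      exact mem_fwd G hb
  · -- ∃p·π
    have hA : ∀ v, cshapeSat semVT G v (CShape.exist (CPath.ext (BPath.comp (BPath.pred p) π) k?)) →
        shaclSat semVT G v (mkSel (Sum.inl p) false) := by
      intro v hc
      obtain ⟨v', hv⟩ := hc
      obtain ⟨c0, hc'⟩ := ext_head semVT G hv
      obtain ⟨c', h1, -⟩ := hc'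
      exact mkSel_fwd semVT G (show tripleRel G (Sum.inl p) v c' from h1)
    have hB : ∀ v : NV, shaclSat semVT G v (mkSel (Sum.inl p) false) →
        cond true (∃ u, v = Sum.inl u ∧ u ∈ nodesSet G) (∃ w, v = Sum.inr w ∧ w ∈ valuesSet G) := by
      intro v hs
      obtain ⟨b, hb⟩ := mkSel_fwd_elim semVT G hs
      exact mem_fwd G hb
    cases k? with
    | none => exact pair_equiv_gen semVT G _ ψ _ true hA hB
    | some k' => exact pair_equiv_gen semVT G _ ψ _ true hA hB
  · -- ∃p⁻·π
    have hA : ∀ v, cshapeSat semVT G v (CShape.exist (CPath.ext (BPath.comp (BPath.inv (BPath.pred p)) π) k?)) →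
        shaclSat semVT G v (mkSel (Sum.inl p) true) := by
      intro v hc
      obtain ⟨v', hv⟩ := hc
      obtain ⟨c0, hc'⟩ := ext_head semVT G hv
      obtain ⟨c', h1, -⟩ := hc'
      exact mkSel_bwd semVT G (show tripleRel G (Sum.inl p) c' v from h1)
    have hB : ∀ v : NV, shaclSat semVT G v (mkSel (Sum.inl p) true) →
        cond true (∃ u, v = Sum.inl u ∧ u ∈ nodesSet G) (∃ w, v = Sum.inr w ∧ w ∈ valuesSet G) := by
      intro v hs
      obtain ⟨b, hb⟩ := mkSel_bwd_elim semVT G hs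
      exact mem_bwd_pred G hb
    cases k? with
    | none => exact pair_equiv_gen semVT G _ ψ _ true hA hB
    | some k' => exact pair_equiv_gen semVT G _ ψ _ true hA hB
  · -- ∃(k:c)·π
    have hA : ∀ v, cshapeSat semVT G v (CShape.exist (CPath.ext (BPath.comp (BPath.filt (GFilter.keyIs k c)) π) k?)) →
        shaclSat semVT G v (mkSel (Sum.inr k) false) := by
      intro v hc
      obtain ⟨v', hv⟩ := hc
      obtain ⟨c0, hc'⟩ := ext_head semVT G hv
      obtain ⟨c', h1, -⟩ := hc'
      obtain ⟨-, u, rfl, -, hm⟩ := h1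
      exact mkSel_fwd semVT G (show tripleRel G (Sum.inr k) (Sum.inl u) (Sum.inr c) from hm)
    have hB : ∀ v : NV, shaclSat semVT G v (mkSel (Sum.inr k) false) →
        cond true (∃ u, v = Sum.inl u ∧ u ∈ nodesSet G) (∃ w, v = Sum.inr w ∧ w ∈ valuesSet G) := by
      intro v hs
      obtain ⟨b, hb⟩ := mkSel_fwd_elim semVT G hs
      exact mem_fwd G hb
    cases k? with
    | none => exact pair_equiv_gen semVT G _ ψ _ true hA hB
    | some k' => exact pair_equiv_gen semVT G _ ψ _ true hA hB
  · -- ∃({k:τ}&⊤)·π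
    have hA : ∀ v, cshapeSat semVT G v (CShape.exist (CPath.ext (BPath.comp (BPath.filt (GFilter.openCT (CCType.single k τ))) π) k?)) →
        shaclSat semVT G v (mkSel (Sum.inr k) false) := by
      intro v hc
      obtain ⟨v', hv⟩ := hc
      obtain ⟨c0, hc'⟩ := ext_head semVT G hv
      obtain ⟨c', h1, -⟩ := hc'
      obtain ⟨-, u, rfl, -, hct⟩ := h1
      obtain ⟨r, hr, hsub⟩ := (mem_open_iff semVT _ _ (content_isRecord G u)).mp hct
      obtain ⟨w, -, rfl⟩ := hr
      have hm : Triple.prop u k w ∈ G.triples := hsub rfl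
      exact mkSel_fwd semVT G (show tripleRel G (Sum.inr k) (Sum.inl u) (Sum.inr w) from hm)
    have hB : ∀ v : NV, shaclSat semVT G v (mkSel (Sum.inr k) false) →
        cond true (∃ u, v = Sum.inl u ∧ u ∈ nodesSet G) (∃ w, v = Sum.inr w ∧ w ∈ valuesSet G) := by
      intro v hs
      obtain ⟨b, hb⟩ := mkSel_fwd_elim semVT G hs
      exact mem_fwd G hb
    cases k? with
    | none => exact pair_equiv_gen semVT G _ ψ _ true hA hB
    | some k' => exact pair_equiv_gen semVT G _ ψ _ true hA hB
  · -- ∃k⁻·π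
    refine pair_equiv_gen semVT G _ ψ (mkSel (Sum.inr k) true) false
      (fun v hc => ?_) (fun v hs => ?_)
    · obtain ⟨v', c0, h1, -⟩ := hc
      rw [keyRel_iff] at h1
      exact mkSel_bwd semVT G h1
    · obtain ⟨b, hb⟩ := mkSel_bwd_elim semVT G hs
      exact mem_bwd_key G hb
  · -- ∃k⁻·π·k'
    refine pair_equiv_gen semVT G _ ψ (mkSel (Sum.inr k) true) false
      (fun v hc => ?_) (fun v hs => ?_)
    · obtain ⟨v', c0, c1, h1, -, -⟩ := hc
      rw [keyRel_iff] at h1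
      exact mkSel_bwd semVT G h1
    · obtain ⟨b, hb⟩ := mkSel_bwd_elim semVT G hs
      exact mem_bwd_key G hb

end CoGSL2SHACL

open CoGSL2SHACL in
/-- For every common schema there exists an equivalent SHACL schema. -/
theorem common_schema_has_equivalent_shacl_schema
    (VT : Type) (semVT : VT → Set GValue) (S : CommonSchema VT) :
    ∃ S' : SHACLSchema VT,
      ∀ G : CommonGraph, commonValid semVT S G ↔ shaclValid semVT S' G := by
  classical
  refine ⟨⟨S.pairs.image trPair, ?_⟩, fun G => ?_⟩
  · intro pr' hpr'
    obtain ⟨pr, -, rfl⟩ := Finset.mem_image.mp hpr'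
    exact mkSel_isSel _ _
  · constructor
    · intro hval v pr' hpr' hs
      obtain ⟨pr, hpr, rfl⟩ := Finset.mem_image.mp hpr'
      obtain ⟨s1, s2⟩ := pr
      exact (pair_equiv semVT G s1 s2 (S.sel (s1, s2) hpr)).mp
        (fun v' hc => hval v' (s1, s2) hpr hc) v hs
    · intro hval v pr hpr hc
      obtain ⟨s1, s2⟩ := pr
      refine (pair_equiv semVT G s1 s2 (S.sel (s1, s2) hpr)).mpr ?_ v hc
      intro v' hs
      exact hval v' (trPair (s1, s2)) (Finset.mem_image_of_mem _ hpr) hs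
end

section
/- Let a, o ∈ 𝒫 be two distinct predicates. There is no SHACL schema S' such that for every common graph G the following holds: G is valid w.r.t. S' if and only if every node v of G that has an outgoing o-edge satisfies #{u | (v,a,u) ∈ G} ≥ #{u | (v,o,u) ∈ G}. (This is the property defined by the ShEx schema S^eq of Example 4.4, which requires of each account owner that the number of accounts it has access to is at least the number of accounts it owns; hence this ShEx schema cannot be expressed in SHACL.) -/
/-! ### Auxiliary development -/

inductive Abs : Type
  | C | A | O
  deriving DecidableEq

/-- Abstraction of a natural number node of the star graph. -/
def absN (N m u : ℕ) : Option Abs :=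
  if u = 0 then some .C
  else if u % 2 = 0 then (if u ≤ 2*N then some .A else none)
  else (if u < 2*m then some .O else none)

/-- Abstraction of a point of the star graph. -/
def absPt (N m : ℕ) : NV → Option Abs
  | Sum.inl u => absN N m u
  | Sum.inr _ => none

/-- Maximal numeric constant occurring in a shape. -/
def maxC {VT : Type} : SShape VT → ℕ
  | .not φ => maxC φ
  | .and φ₁ φ₂ => max (maxC φ₁) (maxC φ₂)
  | .or φ₁ φ₂ => max (maxC φ₁) (maxC φ₂)
  | .geq n _ φ => max n (maxC φ)
  | .leq n _ φ => max n (maxC φ)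
  | _ => 0

def starTriples (a o : GPred) (N m : ℕ) : Finset Triple :=
  ((Finset.range N).image fun i => Triple.edge 0 a (2*i+2)) ∪
  ((Finset.range m).image fun j => Triple.edge 0 o (2*j+1))

lemma mem_starTriples {a o : GPred} {N m : ℕ} {t : Triple} :
    t ∈ starTriples a o N m ↔
      (∃ i < N, t = Triple.edge 0 a (2*i+2)) ∨ (∃ j < m, t = Triple.edge 0 o (2*j+1)) := by
  simp [starTriples, eq_comm]

def starG (a o : GPred) (N m : ℕ) : CommonGraph where
  triples := starTriples a o N m
  functional := by
    intro u k w w' h1 _h2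
    rw [mem_starTriples] at h1
    rcases h1 with ⟨i, _, h⟩ | ⟨j, _, h⟩ <;> cases h

lemma absN_eq_C {N m : ℕ} {u : ℕ} : absN N m u = some .C ↔ u = 0 := by
  unfold absN
  split_ifs with h1 h2 h3 h4 <;> simp_all

lemma absN_eq_A {N m : ℕ} {u : ℕ} : absN N m u = some .A ↔ ∃ i < N, u = 2*i+2 := by
  unfold absN
  constructor
  · intro h
    by_cases h1 : u = 0
    · rw [if_pos h1] at h; exact absurd h (by simp)
    rw [if_neg h1] at h
    by_cases h2 : u % 2 = 0
    · rw [if_pos h2] at h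
      by_cases h3 : u ≤ 2*N
      · exact ⟨u/2 - 1, by omega, by omega⟩
      · rw [if_neg h3] at h; exact absurd h (by simp)
    · rw [if_neg h2] at h
      by_cases h4 : u < 2*m
      · rw [if_pos h4] at h; exact absurd h (by simp)
      · rw [if_neg h4] at h; exact absurd h (by simp)
  · rintro ⟨i, hi, rfl⟩
    rw [if_neg (by omega), if_pos (by omega), if_pos (by omega)]

lemma absN_eq_O {N m : ℕ} {u : ℕ} : absN N m u = some .O ↔ ∃ j < m, u = 2*j+1 := by
  unfold absN
  constructor
  · intro h
    by_cases h1 : u = 0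
    · rw [if_pos h1] at h; exact absurd h (by simp)
    rw [if_neg h1] at h
    by_cases h2 : u % 2 = 0
    · rw [if_pos h2] at h
      by_cases h3 : u ≤ 2*N
      · rw [if_pos h3] at h; exact absurd h (by simp)
      · rw [if_neg h3] at h; exact absurd h (by simp)
    · rw [if_neg h2] at h
      by_cases h4 : u < 2*m
      · exact ⟨u/2, by omega, by omega⟩
      · rw [if_neg h4] at h; exact absurd h (by simp)
  · rintro ⟨j, hj, rfl⟩
    rw [if_neg (by omega), if_neg (by omega), if_pos (by omega)]

lemma absPt_eq_C {N m : ℕ} {v : NV} : absPt N m v = some .C ↔ v = Sum.inl 0 := by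
  cases v with
  | inl u => simpa [absPt] using absN_eq_C (N := N) (m := m) (u := u)
  | inr w => simp [absPt]

lemma absPt_eq_A {N m : ℕ} {v : NV} :
    absPt N m v = some .A ↔ ∃ i < N, v = Sum.inl (2*i+2) := by
  cases v with
  | inl u => simpa [absPt] using absN_eq_A (N := N) (m := m) (u := u)
  | inr w => simp [absPt]

lemma absPt_eq_O {N m : ℕ} {v : NV} :
    absPt N m v = some .O ↔ ∃ j < m, v = Sum.inl (2*j+1) := by
  cases v with
  | inl u => simpa [absPt] using absN_eq_O (N := N) (m := m) (u := u)
  | inr w => simp [absPt]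

lemma absPt_inl {N m : ℕ} {v : NV} {b : Abs} (h : absPt N m v = some b) :
    ∃ x : ℕ, v = Sum.inl x := by
  cases v with
  | inl u => exact ⟨u, rfl⟩
  | inr w => simp [absPt] at h

lemma absPt_none_ne_zero {N m : ℕ} {v : NV} (h : absPt N m v = none) : v ≠ Sum.inl 0 := by
  rintro rfl
  rw [show absPt N m (Sum.inl 0) = absN N m 0 from rfl, show absN N m 0 = some .C by unfold absN; simp] at h
  cases h
def repPt : Abs → NV
  | .C => Sum.inl 0
  | .A => Sum.inl 2
  | .O => Sum.inl 1

lemma absPt_repPt {N m : ℕ} (hN : 1 ≤ N) (hm : 1 ≤ m) (b : Abs) :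
    absPt N m (repPt b) = some b := by
  cases b with
  | C => exact absPt_eq_C.mpr rfl
  | A => exact absPt_eq_A.mpr ⟨0, by omega, rfl⟩
  | O => exact absPt_eq_O.mpr ⟨0, by omega, rfl⟩

lemma exists_ne_in_block {N m : ℕ} (hN : 2 ≤ N) (hm : 2 ≤ m) {b : Abs} (hb : b ≠ .C)
    (v : NV) : ∃ u : NV, absPt N m u = some b ∧ u ≠ v := by
  cases b with
  | C => exact absurd rfl hb
  | A =>
    by_cases h : v = Sum.inl 2
    · exact ⟨Sum.inl 4, absPt_eq_A.mpr ⟨1, by omega, rfl⟩, by rw [h]; simp⟩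
    · exact ⟨Sum.inl 2, absPt_eq_A.mpr ⟨0, by omega, rfl⟩, fun h' => h h'.symm⟩
  | O =>
    by_cases h : v = Sum.inl 1
    · exact ⟨Sum.inl 3, absPt_eq_O.mpr ⟨1, by omega, rfl⟩, by rw [h]; simp⟩
    · exact ⟨Sum.inl 1, absPt_eq_O.mpr ⟨0, by omega, rfl⟩, fun h' => h h'.symm⟩

lemma abs_agree {N m m' : ℕ} {u : NV} {b : Abs} (hb : b ≠ .O) :
    absPt N m u = some b ↔ absPt N m' u = some b := by
  cases b with
  | C => rw [absPt_eq_C, absPt_eq_C]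
  | A => rw [absPt_eq_A, absPt_eq_A]
  | O => exact absurd rfl hb

lemma abs_mono_none {N m m' : ℕ} (h : m ≤ m') {u : NV} (hu : absPt N m' u = none) :
    absPt N m u = none := by
  cases u with
  | inl x =>
    show absN N m x = none
    have hx : absN N m' x = none := hu
    unfold absN at hx ⊢
    split_ifs at hx ⊢ with h1 h2 h3 h4 <;> simp_all <;> omega
  | inr w => rfl

lemma tripleRel_star {a o : GPred} (hao : a ≠ o) {N m : ℕ} {q : PK} {v u : NV} :
    tripleRel (starG a o N m) q v u ↔
      v = Sum.inl 0 ∧ ((q = Sum.inl a ∧ absPt N m u = some .A) ∨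
                       (q = Sum.inl o ∧ absPt N m u = some .O)) := by
  cases q with
  | inl p =>
    cases v with
    | inl x =>
      cases u with
      | inl y =>
        show Triple.edge x p y ∈ starTriples a o N m ↔ _
        rw [mem_starTriples]
        simp only [Triple.edge.injEq, Sum.inl.injEq, absPt_eq_A, absPt_eq_O]
        constructor
        · rintro (⟨i, hi, rfl, rfl, rfl⟩ | ⟨j, hj, rfl, rfl, rfl⟩)
          · exact ⟨rfl, Or.inl ⟨rfl, ⟨i, hi, rfl⟩⟩⟩
          · exact ⟨rfl, Or.inr ⟨rfl, ⟨j, hj, rfl⟩⟩⟩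
        · rintro ⟨rfl, (⟨rfl, i, hi, rfl⟩ | ⟨rfl, j, hj, rfl⟩)⟩
          · exact Or.inl ⟨i, hi, rfl, rfl, rfl⟩
          · exact Or.inr ⟨j, hj, rfl, rfl, rfl⟩
      | inr w =>
        show False ↔ _
        simp [absPt]
    | inr w => show False ↔ _ ; simp
  | inr k =>
    cases v with
    | inl x =>
      cases u with
      | inl y => show False ↔ _ ; simp
      | inr w =>
        show Triple.prop x k w ∈ starTriples a o N m ↔ _
        rw [mem_starTriples]
        constructor
        · rintro (⟨i, _, h⟩ | ⟨j, _, h⟩) <;> cases h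
        · rintro ⟨_, (⟨h, _⟩ | ⟨h, _⟩)⟩ <;> cases h
    | inr w => show False ↔ _ ; simp
/-- Diagonal part of the abstract semantics of a path. -/
def pd : SPath → Option Abs → Prop
  | .id, _ => True
  | .sym _, _ => False
  | .inv π, x => pd π x
  | .comp π₁ π₂, x => pd π₁ x ∧ pd π₂ x
  | .union π₁ π₂, x => pd π₁ x ∨ pd π₂ x
  | .star _, _ => True

/-- Block part of the abstract semantics of a path. -/
def pf (a o : GPred) : SPath → Abs → Abs → Prop
  | .id, _, _ => False
  | .sym q, b, b' => b = .C ∧ ((q = Sum.inl a ∧ b' = .A) ∨ (q = Sum.inl o ∧ b' = .O))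
  | .inv π, b, b' => pf a o π b' b
  | .comp π₁ π₂, b, b' =>
      (∃ c, pf a o π₁ b c ∧ pf a o π₂ c b') ∨
      (pf a o π₁ b b' ∧ pd π₂ (some b')) ∨
      (pd π₁ (some b) ∧ pf a o π₂ b b')
  | .union π₁ π₂, b, b' => pf a o π₁ b b' ∨ pf a o π₂ b b'
  | .star π, b, b' => Relation.TransGen (pf a o π) b b'

lemma spath_star {a o : GPred} (hao : a ≠ o) {N m : ℕ} (hN : 1 ≤ N) (hm : 1 ≤ m)
    (π : SPath) : ∀ v u : NV,
    spathSem (starG a o N m) π v u ↔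
      ((∃ b b', absPt N m v = some b ∧ absPt N m u = some b' ∧ pf a o π b b') ∨
       (pd π (absPt N m v) ∧ u = v)) := by
  induction π with
  | id =>
    intro v u
    show v = u ↔ _
    simp only [pf, pd]
    constructor
    · rintro rfl; exact Or.inr ⟨trivial, rfl⟩
    · rintro (⟨b, b', _, _, h⟩ | ⟨_, rfl⟩) <;> first | exact absurd h id | rfl
  | sym q =>
    intro v u
    show tripleRel _ q v u ↔ _
    rw [tripleRel_star hao]
    constructor
    · rintro ⟨rfl, (⟨rfl, hu⟩ | ⟨rfl, hu⟩)⟩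
      · exact Or.inl ⟨.C, .A, absPt_eq_C.mpr rfl, hu, rfl, Or.inl ⟨rfl, rfl⟩⟩
      · exact Or.inl ⟨.C, .O, absPt_eq_C.mpr rfl, hu, rfl, Or.inr ⟨rfl, rfl⟩⟩
    · rintro (⟨b, b', hv, hu, rfl, (⟨rfl, rfl⟩ | ⟨rfl, rfl⟩)⟩ | ⟨h, -⟩)
      · exact ⟨absPt_eq_C.mp hv, Or.inl ⟨rfl, hu⟩⟩
      · exact ⟨absPt_eq_C.mp hv, Or.inr ⟨rfl, hu⟩⟩
      · exact (h : False).elim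
  | inv π ih =>
    intro v u
    show spathSem _ π u v ↔ _
    rw [ih u v]
    constructor
    · rintro (⟨b, b', hu, hv, h⟩ | ⟨hd, rfl⟩)
      · exact Or.inl ⟨b', b, hv, hu, h⟩
      · exact Or.inr ⟨hd, rfl⟩
    · rintro (⟨b, b', hv, hu, h⟩ | ⟨hd, rfl⟩)
      · exact Or.inl ⟨b', b, hu, hv, h⟩
      · exact Or.inr ⟨hd, rfl⟩
  | comp π₁ π₂ ih₁ ih₂ =>
    intro v u
    show (∃ c, spathSem _ π₁ v c ∧ spathSem _ π₂ c u) ↔ _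
    constructor
    · rintro ⟨c, h1, h2⟩
      rw [ih₁ v c] at h1
      rw [ih₂ c u] at h2
      rcases h1 with ⟨b, bc, hv, hc, f1⟩ | ⟨d1, rfl⟩
      · rcases h2 with ⟨bc₂, b', hc₂, hu, f2⟩ | ⟨d2, rfl⟩
        · rw [hc] at hc₂
          exact Or.inl ⟨b, b', hv, hu, Or.inl ⟨bc, f1, Option.some.inj hc₂ ▸ f2⟩⟩
        · exact Or.inl ⟨b, bc, hv, hc, Or.inr (Or.inl ⟨f1, hc ▸ d2⟩)⟩
      · rcases h2 with ⟨bc₂, b', hc₂, hu, f2⟩ | ⟨d2, rfl⟩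
        · exact Or.inl ⟨bc₂, b', hc₂, hu, Or.inr (Or.inr ⟨hc₂ ▸ d1, f2⟩)⟩
        · exact Or.inr ⟨⟨d1, d2⟩, rfl⟩
    · rintro (⟨b, b', hv, hu, (⟨c, f1, f2⟩ | ⟨f1, d2⟩ | ⟨d1, f2⟩)⟩ | ⟨⟨d1, d2⟩, rfl⟩)
      · refine ⟨repPt c, ?_, ?_⟩
        · rw [ih₁]; exact Or.inl ⟨b, c, hv, absPt_repPt hN hm c, f1⟩
        · rw [ih₂]; exact Or.inl ⟨c, b', absPt_repPt hN hm c, hu, f2⟩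
      · refine ⟨u, ?_, ?_⟩
        · rw [ih₁]; exact Or.inl ⟨b, b', hv, hu, f1⟩
        · rw [ih₂]; exact Or.inr ⟨hu ▸ d2, rfl⟩
      · refine ⟨v, ?_, ?_⟩
        · rw [ih₁]; exact Or.inr ⟨hv ▸ d1, rfl⟩
        · rw [ih₂]; exact Or.inl ⟨b, b', hv, hu, f2⟩
      · exact ⟨_, (ih₁ _ _).mpr (Or.inr ⟨d1, rfl⟩), (ih₂ _ _).mpr (Or.inr ⟨d2, rfl⟩)⟩
  | union π₁ π₂ ih₁ ih₂ =>
    intro v u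
    show spathSem _ π₁ v u ∨ spathSem _ π₂ v u ↔ _
    rw [ih₁ v u, ih₂ v u]
    constructor
    · rintro ((⟨b, b', hv, hu, h⟩ | ⟨d, rfl⟩) | (⟨b, b', hv, hu, h⟩ | ⟨d, rfl⟩))
      · exact Or.inl ⟨b, b', hv, hu, Or.inl h⟩
      · exact Or.inr ⟨Or.inl d, rfl⟩
      · exact Or.inl ⟨b, b', hv, hu, Or.inr h⟩
      · exact Or.inr ⟨Or.inr d, rfl⟩
    · rintro (⟨b, b', hv, hu, (h | h)⟩ | ⟨(d | d), rfl⟩)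
      · exact Or.inl (Or.inl ⟨b, b', hv, hu, h⟩)
      · exact Or.inr (Or.inl ⟨b, b', hv, hu, h⟩)
      · exact Or.inl (Or.inr ⟨d, rfl⟩)
      · exact Or.inr (Or.inr ⟨d, rfl⟩)
  | star π ih =>
    intro v u
    show Relation.ReflTransGen (spathSem _ π) v u ↔ _
    constructor
    · intro h
      induction h with
      | refl => exact Or.inr ⟨trivial, rfl⟩
      | @tail w u h1 h2 ihh =>
        rw [ih w u] at h2
        rcases h2 with ⟨bw, bu, hw, hu, f⟩ | ⟨_, rfl⟩
        · rcases ihh with ⟨bv, bw₂, hv, hw₂, tg⟩ | ⟨_, rfl⟩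
          · rw [hw] at hw₂
            exact Or.inl ⟨bv, bu, hv, hu, tg.tail (Option.some.inj hw₂ ▸ f)⟩
          · exact Or.inl ⟨bw, bu, hw, hu, Relation.TransGen.single f⟩
        · exact ihh
    · have key : ∀ b b', Relation.TransGen (pf a o π) b b' →
          ∀ v u : NV, absPt N m v = some b → absPt N m u = some b' →
          Relation.ReflTransGen (spathSem (starG a o N m) π) v u := by
        intro b b' h
        induction h with
        | single h =>
          intro v u hv hu
          exact Relation.ReflTransGen.single ((ih v u).mpr (Or.inl ⟨_, _, hv, hu, h⟩))
        | @tail c b' h1 h2 ihh =>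
          intro v u hv hu
          exact (ihh v (repPt c) hv (absPt_repPt hN hm c)).tail
            ((ih (repPt c) u).mpr (Or.inl ⟨_, _, absPt_repPt hN hm c, hu, h2⟩))
      rintro (⟨b, b', hv, hu, tg⟩ | ⟨_, rfl⟩)
      · exact key b b' tg v u hv hu
      · exact Relation.ReflTransGen.refl

lemma spath_star' {a o : GPred} (hao : a ≠ o) {N m : ℕ} (hN : 1 ≤ N) (hm : 1 ≤ m)
    {v : NV} {b : Abs} (hv : absPt N m v = some b) (π : SPath) (u : NV) :
    spathSem (starG a o N m) π v u ↔
      ((∃ b', absPt N m u = some b' ∧ pf a o π b b') ∨ (pd π (some b) ∧ u = v)) := by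
  rw [spath_star hao hN hm π v u, hv]
  constructor
  · rintro (⟨b₀, b', hv₀, hu, h⟩ | h)
    · exact Or.inl ⟨b', hu, Option.some.inj hv₀ ▸ h⟩
    · exact Or.inr h
  · rintro (⟨b', hu, h⟩ | h)
    · exact Or.inl ⟨b, b', rfl, hu, h⟩
    · exact Or.inr h
lemma blkO_encard {N m : ℕ} : {u : NV | absPt N m u = some .O}.encard = m := by
  have : {u : NV | absPt N m u = some .O} =
      ↑((Finset.range m).image fun j => (Sum.inl (2*j+1) : NV)) := by
    ext u
    simp only [Set.mem_setOf_eq, Finset.coe_image, Finset.coe_range, Set.mem_image,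
      Set.mem_Iio, absPt_eq_O]
    constructor
    · rintro ⟨j, hj, rfl⟩; exact ⟨j, hj, rfl⟩
    · rintro ⟨j, hj, rfl⟩; exact ⟨j, hj, rfl⟩
  have h1 : Function.Injective (fun j : ℕ => 2*j+1) := fun x y h => by simp only at h; omega
  have hinj : Function.Injective (fun j : ℕ => (Sum.inl (2*j+1) : NV)) :=
    fun x y h => h1 (Sum.inl.inj h)
  rw [this, Set.encard_coe_eq_coe_finsetCard, Finset.card_image_of_injective _ hinj,
    Finset.card_range]

lemma mu_mem_agree {N m m' : ℕ} (hm : m = N ∨ m = N + 1) (hm' : m' = N ∨ m' = N + 1)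
    {P : Abs → Prop} (hP : ¬ P .O) (u : NV) :
    (∃ b', absPt N m u = some b' ∧ P b') ↔ (∃ b', absPt N m' u = some b' ∧ P b') := by
  constructor
  · rintro ⟨b', h, hp⟩
    have hb : b' ≠ .O := fun h' => hP (h' ▸ hp)
    exact ⟨b', (abs_agree hb).mp h, hp⟩
  · rintro ⟨b', h, hp⟩
    have hb : b' ≠ .O := fun h' => hP (h' ▸ hp)
    exact ⟨b', (abs_agree hb).mp h, hp⟩

/-- Transport of block-uniform statements between the two star graphs. -/
lemma transport_dir {N m m' : ℕ} (hN : 2 ≤ N)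
    (hm : m = N ∨ m = N + 1) (hm' : m' = N ∨ m' = N + 1)
    {v v' : NV} {b : Abs} (hv : absPt N m v = some b) (hv' : absPt N m' v' = some b)
    (S₁ S₂ : Abs → Prop) (d₁ d₂ : Prop) (Θ : Prop → Prop → Prop)
    (h : ∀ u, Θ ((∃ b', absPt N m u = some b' ∧ S₁ b') ∨ (d₁ ∧ u = v))
              ((∃ b', absPt N m u = some b' ∧ S₂ b') ∨ (d₂ ∧ u = v))) :
    ∀ u', Θ ((∃ b', absPt N m' u' = some b' ∧ S₁ b') ∨ (d₁ ∧ u' = v'))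
            ((∃ b', absPt N m' u' = some b' ∧ S₂ b') ∨ (d₂ ∧ u' = v')) := by
  have hNm : 2 ≤ m := by omega
  intro u'
  obtain hu' | ⟨b'', hu'⟩ : absPt N m' u' = none ∨ ∃ b'', absPt N m' u' = some b'' := by
    cases absPt N m' u' <;> simp
  · -- u' outside graph m' : match it with the value `Sum.inr 0`, outside graph m
    have hu : absPt N m (Sum.inr 0) = none := rfl
    have hne : (Sum.inr 0 : NV) ≠ v := by
      obtain ⟨x, rfl⟩ := absPt_inl hv; simp
    have hne' : u' ≠ v' := by
      rintro rfl; rw [hu'] at hv'; cases hv'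
    have e1 : ∀ (S : Abs → Prop) (d : Prop),
        ((∃ b', absPt N m' u' = some b' ∧ S b') ∨ (d ∧ u' = v')) =
        ((∃ b', absPt N m (Sum.inr 0) = some b' ∧ S b') ∨ (d ∧ (Sum.inr 0 : NV) = v)) := by
      intro S d
      rw [hu', hu]; simp [hne, hne']
    rw [e1 S₁ d₁, e1 S₂ d₂]; exact h _
  · by_cases hdiag : u' = v'
    · -- match with v
      subst hdiag
      have hb : b'' = b := Option.some.inj (hu'.symm.trans hv')
      subst hb
      have e1 : ∀ (S : Abs → Prop) (d : Prop),
          ((∃ b', absPt N m' u' = some b' ∧ S b') ∨ (d ∧ u' = u')) =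
          ((∃ b', absPt N m v = some b' ∧ S b') ∨ (d ∧ v = v)) := by
        intro S d
        rw [hu', hv]
        apply propext
        constructor
        · rintro (⟨c, hc, hSc⟩ | ⟨hd, _⟩)
          · exact Or.inl ⟨c, hc, hSc⟩
          · exact Or.inr ⟨hd, rfl⟩
        · rintro (⟨c, hc, hSc⟩ | ⟨hd, _⟩)
          · exact Or.inl ⟨c, hc, hSc⟩
          · exact Or.inr ⟨hd, rfl⟩
      rw [e1 S₁ d₁, e1 S₂ d₂]; exact h v
    · -- u' ≠ v' in block b'' : match with an element of block b'' distinct from v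
      have hw : ∃ w : NV, absPt N m w = some b'' ∧ w ≠ v := by
        by_cases hbb : b'' = .C
        · subst hbb
          have hu0 : u' = Sum.inl 0 := absPt_eq_C.mp hu'
          have hbC : b ≠ .C := by
            rintro rfl
            exact hdiag (hu0.trans (absPt_eq_C.mp hv').symm)
          refine ⟨Sum.inl 0, absPt_eq_C.mpr rfl, ?_⟩
          rintro rfl
          exact hbC (Option.some.inj ((absPt_eq_C.mpr rfl).symm.trans hv)).symm
        · exact exists_ne_in_block hN hNm hbb v
      obtain ⟨w, hw, hwv⟩ := hw
      have e1 : ∀ (S : Abs → Prop) (d : Prop),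
          ((∃ b', absPt N m' u' = some b' ∧ S b') ∨ (d ∧ u' = v')) =
          ((∃ b', absPt N m w = some b' ∧ S b') ∨ (d ∧ w = v)) := by
        intro S d
        rw [hu', hw]
        simp [hdiag, hwv]
      rw [e1 S₁ d₁, e1 S₂ d₂]; exact h w
lemma absN_eq_of_both {N m m' u : ℕ} {b b' : Abs} (h : absN N m u = some b)
    (h' : absN N m' u = some b') : b = b' := by
  unfold absN at h h'
  split_ifs at h h' <;> simp_all

lemma abs_eq_of_both {N m m' : ℕ} {w : NV} {b b' : Abs} (h : absPt N m w = some b)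
    (h' : absPt N m' w = some b') : b = b' := by
  cases w with
  | inl x => exact absN_eq_of_both (h : absN N m x = some b) (h' : absN N m' x = some b')
  | inr x => cases h

lemma sat_closed_star {VT : Type} (semVT : VT → Set GValue) {a o : GPred} (hao : a ≠ o)
    {N m : ℕ} (hN : 1 ≤ N) (hm : 1 ≤ m) (v : NV) (Q : Finset PK) :
    shaclSat semVT (starG a o N m) v (.closed Q) ↔
      (v = Sum.inl 0 → (Sum.inl a ∈ Q ∧ Sum.inl o ∈ Q)) := by
  show (∀ q : PK, q ∉ Q → ∀ u, ¬ tripleRel _ q v u) ↔ _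
  constructor
  · intro h hv
    constructor
    · by_contra ha
      exact h _ ha (Sum.inl 2)
        ((tripleRel_star hao).mpr ⟨hv, Or.inl ⟨rfl, absPt_eq_A.mpr ⟨0, by omega, rfl⟩⟩⟩)
    · by_contra ho
      exact h _ ho (Sum.inl 1)
        ((tripleRel_star hao).mpr ⟨hv, Or.inr ⟨rfl, absPt_eq_O.mpr ⟨0, by omega, rfl⟩⟩⟩)
  · intro h q hq u htr
    rw [tripleRel_star hao] at htr
    obtain ⟨hv, hcase⟩ := htr
    obtain ⟨hQ1, hQ2⟩ := h hv
    rcases hcase with ⟨rfl, _⟩ | ⟨rfl, _⟩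
    · exact hq hQ1
    · exact hq hQ2

lemma trip_mu {a o : GPred} (hao : a ≠ o) {N m : ℕ} {v : NV} {b : Abs}
    (hv : absPt N m v = some b) (p : GPred) (u : NV) :
    tripleRel (starG a o N m) (Sum.inl p) v u ↔
      ((∃ b', absPt N m u = some b' ∧ (b = .C ∧ ((p = a ∧ b' = .A) ∨ (p = o ∧ b' = .O)))) ∨
       (False ∧ u = v)) := by
  rw [tripleRel_star hao]
  constructor
  · rintro ⟨hv0, (⟨hq, hu⟩ | ⟨hq, hu⟩)⟩
    · have hb : b = .C := by
        rw [hv0] at hv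
        exact (Option.some.inj ((absPt_eq_C.mpr rfl).symm.trans hv)).symm
      exact Or.inl ⟨.A, hu, hb, Or.inl ⟨Sum.inl.inj hq, rfl⟩⟩
    · have hb : b = .C := by
        rw [hv0] at hv
        exact (Option.some.inj ((absPt_eq_C.mpr rfl).symm.trans hv)).symm
      exact Or.inl ⟨.O, hu, hb, Or.inr ⟨Sum.inl.inj hq, rfl⟩⟩
  · rintro (⟨b', hu, rfl, (⟨rfl, rfl⟩ | ⟨rfl, rfl⟩)⟩ | ⟨h, -⟩)
    · exact ⟨absPt_eq_C.mp hv, Or.inl ⟨rfl, hu⟩⟩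
    · exact ⟨absPt_eq_C.mp hv, Or.inr ⟨rfl, hu⟩⟩
    · exact h.elim

/-- The equivalence between points of the two star graphs. -/
def equivPt (N m m' : ℕ) (v v' : NV) : Prop :=
  (∃ b, absPt N m v = some b ∧ absPt N m' v' = some b) ∨
  (absPt N m v = none ∧ absPt N m' v' = none ∧ v = v')
lemma count_set_transfer {VT : Type} (semVT : VT → Set GValue) {a o : GPred} (hao : a ≠ o)
    {N : ℕ} (hN : 2 ≤ N) (φ : SShape VT) (π : SPath)
    (hφ : ∀ m m', (m = N ∨ m = N+1) → (m' = N ∨ m' = N+1) → ∀ v v', equivPt N m m' v v' →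
      (shaclSat semVT (starG a o N m) v φ ↔ shaclSat semVT (starG a o N m') v' φ))
    (m m' : ℕ) (hm : m = N ∨ m = N+1) (hm' : m' = N ∨ m' = N+1)
    (v v' : NV) (hvv : equivPt N m m' v v') :
    ((N : ℕ∞) ≤ {u : NV | spathSem (starG a o N m) π v u ∧
        shaclSat semVT (starG a o N m) u φ}.encard ∧
     (N : ℕ∞) ≤ {u : NV | spathSem (starG a o N m') π v' u ∧
        shaclSat semVT (starG a o N m') u φ}.encard) ∨
    {u : NV | spathSem (starG a o N m) π v u ∧ shaclSat semVT (starG a o N m) u φ}.encard =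
    {u : NV | spathSem (starG a o N m') π v' u ∧ shaclSat semVT (starG a o N m') u φ}.encard := by
  have hN1 : 1 ≤ N := by omega
  have hm1 : 1 ≤ m := by omega
  have hm1' : 1 ≤ m' := by omega
  rcases hvv with ⟨b, hv, hv'⟩ | ⟨hv, hv', rfl⟩
  · -- block case
    set s : Abs → Prop := fun c => shaclSat semVT (starG a o N N) (repPt c) φ with hs_def
    have hs : ∀ mm, (mm = N ∨ mm = N+1) → ∀ (u : NV) (c : Abs), absPt N mm u = some c →
        (shaclSat semVT (starG a o N mm) u φ ↔ s c) := by
      intro mm hmm u c hu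
      exact hφ mm N hmm (Or.inl rfl) u (repPt c)
        (Or.inl ⟨c, hu, absPt_repPt hN1 hN1 c⟩)
    set P : Abs → Prop := fun b' => pf a o π b b' ∧ s b' with hP_def
    set d : Prop := pd π (some b) ∧ s b with hd_def
    have hXm : ∀ mm, (mm = N ∨ mm = N+1) → ∀ (w : NV), absPt N mm w = some b →
        {u : NV | spathSem (starG a o N mm) π w u ∧ shaclSat semVT (starG a o N mm) u φ} =
        {u : NV | (∃ b', absPt N mm u = some b' ∧ P b') ∨ (d ∧ u = w)} := by
      intro mm hmm w hw
      have hmm1 : 1 ≤ mm := by omega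
      ext u
      simp only [Set.mem_setOf_eq]
      rw [spath_star' hao hN1 hmm1 hw π u]
      constructor
      · rintro ⟨(⟨b', hu, hf⟩ | ⟨hd, rfl⟩), hsat⟩
        · exact Or.inl ⟨b', hu, hf, (hs mm hmm u b' hu).mp hsat⟩
        · exact Or.inr ⟨⟨hd, (hs mm hmm u b hw).mp hsat⟩, rfl⟩
      · rintro (⟨b', hu, hf, hsb⟩ | ⟨⟨hd, hsb⟩, rfl⟩)
        · exact ⟨Or.inl ⟨b', hu, hf⟩, (hs mm hmm u b' hu).mpr hsb⟩
        · exact ⟨Or.inr ⟨hd, rfl⟩, (hs mm hmm u b hw).mpr hsb⟩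
    rw [hXm m hm v hv, hXm m' hm' v' hv']
    by_cases hO : P .O
    · -- the O-block is contained in both sets
      left
      constructor
      · calc (N : ℕ∞) ≤ (m : ℕ∞) := by exact_mod_cast (by omega : N ≤ m)
          _ = {u : NV | absPt N m u = some .O}.encard := blkO_encard.symm
          _ ≤ _ := Set.encard_mono (fun u hu => Or.inl ⟨.O, hu, hO⟩)
      · calc (N : ℕ∞) ≤ (m' : ℕ∞) := by exact_mod_cast (by omega : N ≤ m')
          _ = {u : NV | absPt N m' u = some .O}.encard := blkO_encard.symm
          _ ≤ _ := Set.encard_mono (fun u hu => Or.inl ⟨.O, hu, hO⟩)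
    · -- the sets are related by the swap of v and v'
      right
      have himg : {u : NV | (∃ b', absPt N m' u = some b' ∧ P b') ∨ (d ∧ u = v')} =
          (Equiv.swap v v') '' {u : NV | (∃ b', absPt N m u = some b' ∧ P b') ∨ (d ∧ u = v)} := by
        ext u
        rw [Set.mem_image_equiv, Equiv.symm_swap]
        simp only [Set.mem_setOf_eq]
        by_cases hu1 : u = v'
        · subst hu1
          rw [Equiv.swap_apply_right]
          constructor
          · rintro (⟨b', hb', hp⟩ | ⟨hd, -⟩)
            · exact Or.inl ⟨b, hv, (abs_eq_of_both hb' hv') ▸ hp⟩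
            · exact Or.inr ⟨hd, rfl⟩
          · rintro (⟨b', hb', hp⟩ | ⟨hd, -⟩)
            · exact Or.inl ⟨b, hv', (abs_eq_of_both hb' hv) ▸ hp⟩
            · exact Or.inr ⟨hd, rfl⟩
        · by_cases hu2 : u = v
          · subst hu2
            rw [Equiv.swap_apply_left]
            have hvv' : u ≠ v' := hu1
            constructor
            · rintro (⟨b', hb', hp⟩ | ⟨-, h⟩)
              · -- absPt N m' u = some b' with absPt N m u = some b, so b' = b
                have hb : b' = b := abs_eq_of_both hb' hv
                subst hb
                have hbO : b' ≠ .O := fun h => hO (h ▸ hp)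
                exact Or.inl ⟨b', (abs_agree hbO).mp hv', hp⟩
              · exact absurd h hvv'
            · rintro (⟨b', hb', hp⟩ | ⟨-, h⟩)
              · have hb : b' = b := abs_eq_of_both hb' hv'
                subst hb
                have hbO : b' ≠ .O := fun h => hO (h ▸ hp)
                exact Or.inl ⟨b', (abs_agree hbO).mp hv, hp⟩
              · exact absurd h.symm hu1 -- h : v' = v? careful
          · rw [Equiv.swap_apply_of_ne_of_ne hu2 hu1]
            have hb1 : ∀ X : Prop, (d ∧ u = v') ∨ X → X := by
              rintro X (⟨-, h⟩ | h)
              · exact absurd h hu1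
              · exact h
            constructor
            · rintro (⟨b', hb', hp⟩ | ⟨-, h⟩)
              · have hbO : b' ≠ .O := fun h => hO (h ▸ hp)
                exact Or.inl ⟨b', (abs_agree hbO).mp hb', hp⟩
              · exact absurd h hu1
            · rintro (⟨b', hb', hp⟩ | ⟨-, h⟩)
              · have hbO : b' ≠ .O := fun h => hO (h ▸ hp)
                exact Or.inl ⟨b', (abs_agree hbO).mp hb', hp⟩
              · exact absurd h hu2
      rw [himg, ((Equiv.swap v v').injective).encard_image]
  · -- outside case : the two sets are equal
    right
    have hsame : {u : NV | spathSem (starG a o N m) π v u ∧ shaclSat semVT (starG a o N m) u φ} =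
        {u : NV | spathSem (starG a o N m') π v u ∧ shaclSat semVT (starG a o N m') u φ} := by
      have hout : equivPt N m m' v v := Or.inr ⟨hv, hv', rfl⟩
      ext u
      simp only [Set.mem_setOf_eq]
      constructor
      · rintro ⟨hsp, hsat⟩
        rw [spath_star hao hN1 hm1 π v u] at hsp
        rcases hsp with ⟨b, b', hb, -, -⟩ | ⟨hd, rfl⟩
        · rw [hv] at hb; cases hb
        · rw [hv] at hd
          refine ⟨(spath_star hao hN1 hm1' π u u).mpr (Or.inr ⟨by rw [hv']; exact hd, rfl⟩),
            (hφ m m' hm hm' u u hout).mp hsat⟩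
      · rintro ⟨hsp, hsat⟩
        rw [spath_star hao hN1 hm1' π v u] at hsp
        rcases hsp with ⟨b, b', hb, -, -⟩ | ⟨hd, rfl⟩
        · rw [hv'] at hb; cases hb
        · rw [hv'] at hd
          refine ⟨(spath_star hao hN1 hm1 π u u).mpr (Or.inr ⟨by rw [hv]; exact hd, rfl⟩),
            (hφ m m' hm hm' u u hout).mpr hsat⟩
    rw [hsame]
lemma sat_transfer {VT : Type} (semVT : VT → Set GValue) {a o : GPred} (hao : a ≠ o)
    {N : ℕ} (hN : 2 ≤ N) :
    ∀ φ : SShape VT, maxC φ < N →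
    ∀ m m', (m = N ∨ m = N+1) → (m' = N ∨ m' = N+1) →
    ∀ v v', equivPt N m m' v v' →
      (shaclSat semVT (starG a o N m) v φ ↔ shaclSat semVT (starG a o N m') v' φ) := by
  have hN1 : 1 ≤ N := by omega
  intro φ
  induction φ with
  | top => intro _ m m' _ _ v v' _; exact Iff.rfl
  | testC c =>
    intro _ m m' _ _ v v' hvv
    show (v = Sum.inr c) ↔ (v' = Sum.inr c)
    rcases hvv with ⟨b, hv, hv'⟩ | ⟨-, -, rfl⟩
    · obtain ⟨x, rfl⟩ := absPt_inl hv
      obtain ⟨y, rfl⟩ := absPt_inl hv'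
      simp
    · exact Iff.rfl
  | testT τ =>
    intro _ m m' _ _ v v' hvv
    show (∃ w, v = Sum.inr w ∧ w ∈ semVT τ) ↔ (∃ w, v' = Sum.inr w ∧ w ∈ semVT τ)
    rcases hvv with ⟨b, hv, hv'⟩ | ⟨-, -, rfl⟩
    · obtain ⟨x, rfl⟩ := absPt_inl hv
      obtain ⟨y, rfl⟩ := absPt_inl hv'
      simp
    · exact Iff.rfl
  | closed Q =>
    intro _ m m' hm hm' v v' hvv
    have hm1 : 1 ≤ m := by omega
    have hm1' : 1 ≤ m' := by omega
    rw [sat_closed_star semVT hao hN1 hm1, sat_closed_star semVT hao hN1 hm1']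
    rcases hvv with ⟨b, hv, hv'⟩ | ⟨hv, hv', rfl⟩
    · have hciff : v = Sum.inl 0 ↔ v' = Sum.inl 0 := by
        constructor
        · rintro rfl
          have hb : Abs.C = b :=
            Option.some.inj ((absPt_eq_C.mpr rfl).symm.trans hv)
          exact absPt_eq_C.mp (hb ▸ hv')
        · rintro rfl
          have hb : Abs.C = b :=
            Option.some.inj ((absPt_eq_C.mpr rfl).symm.trans hv')
          exact absPt_eq_C.mp (hb ▸ hv)
      rw [hciff]
    · exact Iff.rfl
  | not φ ih =>
    intro hmax m m' hm hm' v v' hvv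
    show ¬ _ ↔ ¬ _
    rw [ih hmax m m' hm hm' v v' hvv]
  | and φ₁ φ₂ ih₁ ih₂ =>
    intro hmax m m' hm hm' v v' hvv
    show _ ∧ _ ↔ _ ∧ _
    rw [ih₁ (lt_of_le_of_lt (le_max_left _ _) hmax) m m' hm hm' v v' hvv,
      ih₂ (lt_of_le_of_lt (le_max_right _ _) hmax) m m' hm hm' v v' hvv]
  | or φ₁ φ₂ ih₁ ih₂ =>
    intro hmax m m' hm hm' v v' hvv
    show _ ∨ _ ↔ _ ∨ _
    rw [ih₁ (lt_of_le_of_lt (le_max_left _ _) hmax) m m' hm hm' v v' hvv,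
      ih₂ (lt_of_le_of_lt (le_max_right _ _) hmax) m m' hm hm' v v' hvv]
  | eq π p =>
    intro _ m m' hm hm' v v' hvv
    have hm1 : 1 ≤ m := by omega
    have hm1' : 1 ≤ m' := by omega
    show ({u : NV | spathSem _ π v u} = {u : NV | tripleRel _ (Sum.inl p) v u}) ↔
      ({u : NV | spathSem _ π v' u} = {u : NV | tripleRel _ (Sum.inl p) v' u})
    rw [Set.ext_iff, Set.ext_iff]
    simp only [Set.mem_setOf_eq]
    rcases hvv with ⟨b, hv, hv'⟩ | ⟨hv, hv', rfl⟩
    · constructor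
      · intro h u
        have := transport_dir hN hm hm' hv hv'
          (fun b' => pf a o π b b')
          (fun b' => b = .C ∧ ((p = a ∧ b' = .A) ∨ (p = o ∧ b' = .O)))
          (pd π (some b)) False Iff
          (fun u0 => by
            rw [← spath_star' hao hN1 hm1 hv π u0, ← trip_mu hao hv p u0]
            exact h u0) u
        rwa [← spath_star' hao hN1 hm1' hv' π u, ← trip_mu hao hv' p u] at this
      · intro h u
        have := transport_dir hN hm' hm hv' hv
          (fun b' => pf a o π b b')
          (fun b' => b = .C ∧ ((p = a ∧ b' = .A) ∨ (p = o ∧ b' = .O)))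
          (pd π (some b)) False Iff
          (fun u0 => by
            rw [← spath_star' hao hN1 hm1' hv' π u0, ← trip_mu hao hv' p u0]
            exact h u0) u
        rwa [← spath_star' hao hN1 hm1 hv π u, ← trip_mu hao hv p u] at this
    · have key : ∀ mm : ℕ, 1 ≤ mm → absPt N mm v = none →
          ((∀ u, spathSem (starG a o N mm) π v u ↔
            tripleRel (starG a o N mm) (Sum.inl p) v u) ↔ ¬ pd π none) := by
        intro mm hmm hnone
        have hne := absPt_none_ne_zero hnone
        constructor
        · intro h hpd
          have hsp : spathSem (starG a o N mm) π v v :=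
            (spath_star hao hN1 hmm π v v).mpr (Or.inr ⟨by rw [hnone]; exact hpd, rfl⟩)
          have := (h v).mp hsp
          rw [tripleRel_star hao] at this
          exact hne this.1
        · intro hnpd u
          constructor
          · intro hsp
            rw [spath_star hao hN1 hmm π v u] at hsp
            rcases hsp with ⟨b, b', hb, -, -⟩ | ⟨hd, rfl⟩
            · rw [hnone] at hb; cases hb
            · rw [hnone] at hd; exact absurd hd hnpd
          · intro htr
            rw [tripleRel_star hao] at htr
            exact absurd htr.1 hne
      rw [key m hm1 hv, key m' hm1' hv']
  | disj π p =>
    intro _ m m' hm hm' v v' hvv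
    have hm1 : 1 ≤ m := by omega
    have hm1' : 1 ≤ m' := by omega
    show ({u : NV | spathSem _ π v u} ∩ {u : NV | tripleRel _ (Sum.inl p) v u} = ∅) ↔
      ({u : NV | spathSem _ π v' u} ∩ {u : NV | tripleRel _ (Sum.inl p) v' u} = ∅)
    rw [Set.eq_empty_iff_forall_notMem, Set.eq_empty_iff_forall_notMem]
    simp only [Set.mem_inter_iff, Set.mem_setOf_eq]
    rcases hvv with ⟨b, hv, hv'⟩ | ⟨hv, hv', rfl⟩
    · constructor
      · intro h u
        have := transport_dir hN hm hm' hv hv'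
          (fun b' => pf a o π b b')
          (fun b' => b = .C ∧ ((p = a ∧ b' = .A) ∨ (p = o ∧ b' = .O)))
          (pd π (some b)) False (fun X Y => ¬ (X ∧ Y))
          (fun u0 => by
            rw [← spath_star' hao hN1 hm1 hv π u0, ← trip_mu hao hv p u0]
            exact h u0) u
        rwa [← spath_star' hao hN1 hm1' hv' π u, ← trip_mu hao hv' p u] at this
      · intro h u
        have := transport_dir hN hm' hm hv' hv
          (fun b' => pf a o π b b')
          (fun b' => b = .C ∧ ((p = a ∧ b' = .A) ∨ (p = o ∧ b' = .O)))
          (pd π (some b)) False (fun X Y => ¬ (X ∧ Y))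
          (fun u0 => by
            rw [← spath_star' hao hN1 hm1' hv' π u0, ← trip_mu hao hv' p u0]
            exact h u0) u
        rwa [← spath_star' hao hN1 hm1 hv π u, ← trip_mu hao hv p u] at this
    · have key : ∀ mm : ℕ, absPt N mm v = none → ∀ u,
          ¬ (spathSem (starG a o N mm) π v u ∧ tripleRel (starG a o N mm) (Sum.inl p) v u) := by
        intro mm hnone u
        rintro ⟨-, htr⟩
        rw [tripleRel_star hao] at htr
        exact absPt_none_ne_zero hnone htr.1
      exact iff_of_true (key m hv) (key m' hv')
  | geq n π φ ih =>
    intro hmax m m' hm hm' v v' hvv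
    have hn : n < N := lt_of_le_of_lt (le_max_left _ _) hmax
    have ihφ := ih (lt_of_le_of_lt (le_max_right _ _) hmax)
    show ((n : ℕ∞) ≤ _) ↔ ((n : ℕ∞) ≤ _)
    rcases count_set_transfer semVT hao hN φ π ihφ m m' hm hm' v v' hvv with ⟨h1, h2⟩ | heq
    · exact iff_of_true
        (le_trans (by exact_mod_cast le_of_lt hn) h1)
        (le_trans (by exact_mod_cast le_of_lt hn) h2)
    · rw [heq]
  | leq n π φ ih =>
    intro hmax m m' hm hm' v v' hvv
    have hn : n < N := lt_of_le_of_lt (le_max_left _ _) hmax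
    have ihφ := ih (lt_of_le_of_lt (le_max_right _ _) hmax)
    show (_ ≤ (n : ℕ∞)) ↔ (_ ≤ (n : ℕ∞))
    rcases count_set_transfer semVT hao hN φ π ihφ m m' hm hm' v v' hvv with ⟨h1, h2⟩ | heq
    · refine iff_of_false (fun hle => ?_) (fun hle => ?_)
      · have : (N : ℕ∞) ≤ (n : ℕ∞) := le_trans h1 hle
        exact absurd (by exact_mod_cast this : N ≤ n) (by omega)
      · have : (N : ℕ∞) ≤ (n : ℕ∞) := le_trans h2 hle
        exact absurd (by exact_mod_cast this : N ≤ n) (by omega)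
    · rw [heq]
lemma edge_o_mem {a o : GPred} (hao : a ≠ o) {N m : ℕ} {v u : GNode} :
    Triple.edge v o u ∈ (starG a o N m).triples ↔ (v = 0 ∧ ∃ j < m, u = 2*j+1) := by
  show _ ∈ starTriples a o N m ↔ _
  rw [mem_starTriples]
  constructor
  · rintro (⟨i, hi, h⟩ | ⟨j, hj, h⟩)
    · injection h with h1 h2 h3
      exact absurd h2.symm hao
    · injection h with h1 h2 h3
      exact ⟨h1, j, hj, h3⟩
  · rintro ⟨rfl, j, hj, rfl⟩
    exact Or.inr ⟨j, hj, rfl⟩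

lemma edge_a_mem {a o : GPred} (hao : a ≠ o) {N m : ℕ} {v u : GNode} :
    Triple.edge v a u ∈ (starG a o N m).triples ↔ (v = 0 ∧ ∃ i < N, u = 2*i+2) := by
  show _ ∈ starTriples a o N m ↔ _
  rw [mem_starTriples]
  constructor
  · rintro (⟨i, hi, h⟩ | ⟨j, hj, h⟩)
    · injection h with h1 h2 h3
      exact ⟨h1, i, hi, h3⟩
    · injection h with h1 h2 h3
      exact absurd h2 hao
  · rintro ⟨rfl, i, hi, rfl⟩
    exact Or.inl ⟨i, hi, rfl⟩

lemma encard_oset {a o : GPred} (hao : a ≠ o) {N m : ℕ} :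
    {u : GNode | Triple.edge 0 o u ∈ (starG a o N m).triples}.encard = m := by
  have hset : {u : GNode | Triple.edge 0 o u ∈ (starG a o N m).triples} =
      ↑(((Finset.range m).image fun j => 2*j+1 : Finset ℕ)) := by
    ext u
    simp only [Set.mem_setOf_eq, edge_o_mem hao, Finset.coe_image, Finset.coe_range,
      Set.mem_image, Set.mem_Iio, true_and]
    constructor
    · rintro ⟨j, hj, rfl⟩; exact ⟨j, hj, rfl⟩
    · rintro ⟨j, hj, rfl⟩; exact ⟨j, hj, rfl⟩
  rw [hset, Set.encard_coe_eq_coe_finsetCard,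
    Finset.card_image_of_injective _ (fun x y h => by
      have h' : 2*x+1 = 2*y+1 := h
      omega),
    Finset.card_range]

lemma encard_aset {a o : GPred} (hao : a ≠ o) {N m : ℕ} :
    {u : GNode | Triple.edge 0 a u ∈ (starG a o N m).triples}.encard = N := by
  have hset : {u : GNode | Triple.edge 0 a u ∈ (starG a o N m).triples} =
      ↑(((Finset.range N).image fun i => 2*i+2 : Finset ℕ)) := by
    ext u
    simp only [Set.mem_setOf_eq, edge_a_mem hao, Finset.coe_image, Finset.coe_range,
      Set.mem_image, Set.mem_Iio, true_and]
    constructor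
    · rintro ⟨i, hi, rfl⟩; exact ⟨i, hi, rfl⟩
    · rintro ⟨i, hi, rfl⟩; exact ⟨i, hi, rfl⟩
  rw [hset, Set.encard_coe_eq_coe_finsetCard,
    Finset.card_image_of_injective _ (fun x y h => by
      have h' : 2*x+2 = 2*y+2 := h
      omega),
    Finset.card_range]

lemma star_prop_iff {a o : GPred} (hao : a ≠ o) {N m : ℕ} (hm : 1 ≤ m) :
    (∀ v : GNode, (∃ u, Triple.edge v o u ∈ (starG a o N m).triples) →
      {u : GNode | Triple.edge v o u ∈ (starG a o N m).triples}.encard ≤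
      {u : GNode | Triple.edge v a u ∈ (starG a o N m).triples}.encard) ↔ m ≤ N := by
  constructor
  · intro h
    have h0 := h 0 ⟨1, (edge_o_mem hao).mpr ⟨rfl, 0, by omega, rfl⟩⟩
    rw [encard_oset hao, encard_aset hao] at h0
    exact_mod_cast h0
  · intro hmN v hv
    obtain ⟨u, hu⟩ := hv
    have hv0 : v = 0 := ((edge_o_mem hao).mp hu).1
    subst hv0
    rw [encard_oset hao, encard_aset hao]
    exact_mod_cast hmN
/-- Let `a, o` be two distinct predicates. There is no SHACL schema `S'`
such that for every common graph `G`: `G ⊨ S'` iff every node `v` of `G` with an outgoing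
`o`-edge satisfies `#{u | (v,a,u) ∈ G} ≥ #{u | (v,o,u) ∈ G}`. -/
theorem shacl_cannot_express_counting_comparison
    (VT : Type) (semVT : VT → Set GValue) (a o : GPred) (hao : a ≠ o) :
    ¬ ∃ S' : SHACLSchema VT, ∀ G : CommonGraph,
        shaclValid semVT S' G ↔
          ∀ v : GNode, (∃ u, Triple.edge v o u ∈ G.triples) →
            {u : GNode | Triple.edge v o u ∈ G.triples}.encard ≤
              {u : GNode | Triple.edge v a u ∈ G.triples}.encard := by
  rintro ⟨S', hS⟩
  set B := S'.pairs.sup (fun pr => max (maxC pr.1) (maxC pr.2)) with hB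
  set N := B + 2 with hNdef
  have hN : 2 ≤ N := by omega
  have hN1 : 1 ≤ N := by omega
  have hmax : ∀ pr ∈ S'.pairs, maxC pr.1 < N ∧ maxC pr.2 < N := by
    intro pr hpr
    have hle := Finset.le_sup (f := fun pr => max (maxC pr.1) (maxC pr.2)) hpr
    exact ⟨lt_of_le_of_lt (le_trans (le_max_left _ _) hle) (by omega),
      lt_of_le_of_lt (le_trans (le_max_right _ _) hle) (by omega)⟩
  -- the star graph with N o-edges is valid
  have hvalidN : shaclValid semVT S' (starG a o N N) :=
    (hS (starG a o N N)).mpr ((star_prop_iff hao hN1).mpr le_rfl)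
  -- validity transfers to the star graph with N+1 o-edges
  have hvalidN1 : shaclValid semVT S' (starG a o N (N+1)) := by
    intro v pr hpr hsel
    obtain ⟨h1, h2⟩ := hmax pr hpr
    obtain hnone | ⟨b, hb⟩ : absPt N (N+1) v = none ∨ ∃ b, absPt N (N+1) v = some b := by
      cases absPt N (N+1) v <;> simp
    · have hnoneN : absPt N N v = none := abs_mono_none (by omega) hnone
      have hequiv : equivPt N N (N+1) v v := Or.inr ⟨hnoneN, hnone, rfl⟩
      exact (sat_transfer semVT hao hN pr.2 h2 N (N+1) (Or.inl rfl) (Or.inr rfl)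
          v v hequiv).mp
        (hvalidN v pr hpr
          ((sat_transfer semVT hao hN pr.1 h1 N (N+1) (Or.inl rfl) (Or.inr rfl)
            v v hequiv).mpr hsel))
    · have hequiv : equivPt N N (N+1) (repPt b) v :=
        Or.inl ⟨b, absPt_repPt hN1 hN1 b, hb⟩
      exact (sat_transfer semVT hao hN pr.2 h2 N (N+1) (Or.inl rfl) (Or.inr rfl)
          (repPt b) v hequiv).mp
        (hvalidN (repPt b) pr hpr
          ((sat_transfer semVT hao hN pr.1 h1 N (N+1) (Or.inl rfl) (Or.inr rfl)
            (repPt b) v hequiv).mpr hsel))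
  -- but the star graph with N+1 o-edges does not satisfy the counting property
  have hcontra := (hS (starG a o N (N+1))).mp hvalidN1
  have hle : N + 1 ≤ N := (star_prop_iff hao (by omega)).mp hcontra
  omega
end

section
/- Let S be a SHACL schema in which every numeric bound n occurring in a subshape of the form ∃^{≥n}π.φ or ∃^{≤n}π.φ satisfies n ≤ k, and in which every constant c' occurring in a subshape test(c') belongs to 𝒱 (hence occurs in no (c,n)-neighbourhood). Then for all similar (c,k+1)-neighbourhoods G₁ and G₂: G₁ is valid w.r.t. S if and only if G₂ is valid w.r.t. S. -/
/-- A `(c,n)`-neighbourhood: a graph of the form `{(c,p₁,v₁), …, (c,p_m,v_m)}` where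
`c, v₁, …, v_m` are pairwise distinct nodes and every predicate occurring in the graph
occurs in at least `n` of its triples. -/
def IsNbhd (c : GNode) (n : ℕ) (G : CommonGraph) : Prop :=
  (∀ t ∈ G.triples, ∃ p v, t = Triple.edge c p v) ∧
  (∀ p v, Triple.edge c p v ∈ G.triples → v ≠ c) ∧
  (∀ p₁ p₂ v, Triple.edge c p₁ v ∈ G.triples → Triple.edge c p₂ v ∈ G.triples → p₁ = p₂) ∧
  (∀ p : GPred, (∃ v, Triple.edge c p v ∈ G.triples) →
      (n : ℕ∞) ≤ {t : Triple | t ∈ G.triples ∧ ∃ v, t = Triple.edge c p v}.encard)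

/-- All numeric bounds occurring in counting subshapes `∃^{≥n}π.φ`, `∃^{≤n}π.φ` are `≤ k`. -/
def boundsLE {VT : Type} (k : ℕ) : SShape VT → Prop
  | .geq n _ φ => n ≤ k ∧ boundsLE k φ
  | .leq n _ φ => n ≤ k ∧ boundsLE k φ
  | .not φ => boundsLE k φ
  | .and φ₁ φ₂ => boundsLE k φ₁ ∧ boundsLE k φ₂
  | .or φ₁ φ₂ => boundsLE k φ₁ ∧ boundsLE k φ₂
  | _ => True


namespace ShaclAux

open Relation

/-- Class of a point in a `c`-neighbourhood: `none` = the centre `c`,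
`some p` = a `p`-leaf. Outside points have no class. -/
def cls (G : CommonGraph) (c : GNode) : NV → Option GPred → Prop
  | a, none => a = Sum.inl c
  | a, some p => ∃ v, Triple.edge c p v ∈ G.triples ∧ a = Sum.inl v

/-- Symbolic binary relation on a neighbourhood. -/
structure Sym : Type 1 where
  dia : Prop
  pos : Option GPred → Option GPred → Prop

/-- Realizability of a class symbol. -/
def rl (P₀ : Set GPred) : Option GPred → Prop
  | none => True
  | some p => p ∈ P₀

/-- Interpretation of a symbolic relation. -/
def interp (G : CommonGraph) (c : GNode) (R : Sym) (a b : NV) : Prop :=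
  (R.dia ∧ a = b) ∨ ∃ κ κ', cls G c a κ ∧ cls G c b κ' ∧ R.pos κ κ'

/-- Symbolic computation of path semantics over a neighbourhood whose set of
occurring predicates is `P₀`. -/
def symb (P₀ : Set GPred) : SPath → Sym
  | .id => ⟨True, fun _ _ => False⟩
  | .sym (Sum.inl p) => ⟨False, fun κ κ' => κ = none ∧ κ' = some p⟩
  | .sym (Sum.inr _) => ⟨False, fun _ _ => False⟩
  | .inv π => ⟨(symb P₀ π).dia, fun κ κ' => (symb P₀ π).pos κ' κ⟩
  | .comp π₁ π₂ =>
      ⟨(symb P₀ π₁).dia ∧ (symb P₀ π₂).dia,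
       fun κ κ' => ((symb P₀ π₁).dia ∧ (symb P₀ π₂).pos κ κ') ∨
         ((symb P₀ π₁).pos κ κ' ∧ (symb P₀ π₂).dia) ∨
         ∃ κ'', (symb P₀ π₁).pos κ κ'' ∧ rl P₀ κ'' ∧ (symb P₀ π₂).pos κ'' κ'⟩
  | .union π₁ π₂ =>
      ⟨(symb P₀ π₁).dia ∨ (symb P₀ π₂).dia,
       fun κ κ' => (symb P₀ π₁).pos κ κ' ∨ (symb P₀ π₂).pos κ κ'⟩
  | .star π =>
      ⟨True, TransGen (fun κ κ' => (symb P₀ π).pos κ κ' ∧ rl P₀ κ ∧ rl P₀ κ')⟩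

section Nbhd

variable {G : CommonGraph} {c : GNode} {n : ℕ}

lemma edge_src (hG : IsNbhd c n G) {u p v} (h : Triple.edge u p v ∈ G.triples) : u = c := by
  obtain ⟨p', v', he⟩ := hG.1 _ h
  injection he with h1 h2 h3

lemma no_prop (hG : IsNbhd c n G) {u k w} (h : Triple.prop u k w ∈ G.triples) : False := by
  obtain ⟨p', v', he⟩ := hG.1 _ h
  cases he

lemma cls_fun (hG : IsNbhd c n G) {a κ₁ κ₂} (h1 : cls G c a κ₁) (h2 : cls G c a κ₂) :
    κ₁ = κ₂ := by
  match κ₁, κ₂ with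
  | none, none => rfl
  | none, some p =>
    obtain ⟨v, hv, hav⟩ := h2
    rw [h1] at hav
    injection hav with h'
    exact absurd rfl (h' ▸ hG.2.1 _ _ hv)
  | some p, none =>
    obtain ⟨v, hv, hav⟩ := h1
    rw [h2] at hav
    injection hav with h'
    exact absurd rfl (h' ▸ hG.2.1 _ _ hv)
  | some p, some q =>
    obtain ⟨v, hv, hav⟩ := h1
    obtain ⟨w, hw, haw⟩ := h2
    rw [hav] at haw
    injection haw with h'
    subst h'
    exact congrArg some (hG.2.2.1 _ _ _ hv hw)

lemma cls_rl {P₀ : Set GPred}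
    (hP : ∀ p, p ∈ P₀ ↔ ∃ v, Triple.edge c p v ∈ G.triples) {a κ}
    (h : cls G c a κ) : rl P₀ κ := by
  match κ with
  | none => trivial
  | some p =>
    obtain ⟨v, hv, _⟩ := h
    exact (hP p).2 ⟨v, hv⟩

lemma rl_cls {P₀ : Set GPred}
    (hP : ∀ p, p ∈ P₀ ↔ ∃ v, Triple.edge c p v ∈ G.triples) {κ}
    (h : rl P₀ κ) : ∃ m, cls G c m κ := by
  match κ with
  | none => exact ⟨Sum.inl c, rfl⟩
  | some p =>
    obtain ⟨v, hv⟩ := (hP p).1 h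
    exact ⟨Sum.inl v, v, hv, rfl⟩

lemma tripleRel_iff (hG : IsNbhd c n G) (q : PK) (a b : NV) :
    tripleRel G q a b ↔ ∃ p, q = Sum.inl p ∧ cls G c a none ∧ cls G c b (some p) := by
  constructor
  · intro h
    match q, a, b with
    | Sum.inl p, Sum.inl u, Sum.inl v =>
      have hu : u = c := edge_src hG h
      subst hu
      exact ⟨p, rfl, rfl, v, h, rfl⟩
    | Sum.inr k, Sum.inl u, Sum.inr w => exact absurd h (fun h => no_prop hG h)
  · rintro ⟨p, rfl, ha, v, hv, rfl⟩
    rw [show a = Sum.inl c from ha]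
    exact hv

lemma transGen_interp (hG : IsNbhd c n G) {P₀ : Set GPred}
    (hP : ∀ p, p ∈ P₀ ↔ ∃ v, Triple.edge c p v ∈ G.triples) (R : Sym) {κ κ' : Option GPred}
    (hp : TransGen (fun x y => R.pos x y ∧ rl P₀ x ∧ rl P₀ y) κ κ') :
    ∀ a b, cls G c a κ → cls G c b κ' → ReflTransGen (interp G c R) a b := by
  induction hp with
  | single hstep =>
    intro a b ha hb
    exact ReflTransGen.single (Or.inr ⟨_, _, ha, hb, hstep.1⟩)
  | tail hp hstep ih =>
    intro a b ha hb
    obtain ⟨m, hm⟩ := rl_cls hP hstep.2.1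
    exact ReflTransGen.tail (ih a m ha hm) (Or.inr ⟨_, _, hm, hb, hstep.1⟩)

lemma spath_char (hG : IsNbhd c n G) {P₀ : Set GPred}
    (hP : ∀ p, p ∈ P₀ ↔ ∃ v, Triple.edge c p v ∈ G.triples) :
    ∀ π a b, spathSem G π a b ↔ interp G c (symb P₀ π) a b := by
  intro π
  induction π with
  | id =>
    intro a b
    simp only [spathSem, interp, symb]
    constructor
    · intro h; exact Or.inl ⟨trivial, h⟩
    · rintro (⟨_, h⟩ | ⟨_, _, _, _, h⟩)
      · exact h
      · exact h.elim
  | sym q =>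
    intro a b
    match q with
    | Sum.inl p =>
      rw [show spathSem G (.sym (Sum.inl p)) a b = tripleRel G (Sum.inl p) a b from rfl,
        tripleRel_iff hG]
      constructor
      · rintro ⟨p', hp', ha, hb⟩
        injection hp' with hp'
        subst hp'
        exact Or.inr ⟨none, some p, ha, hb, rfl, rfl⟩
      · rintro (⟨h, _⟩ | ⟨κ, κ', ha, hb, h1, h2⟩)
        · exact h.elim
        · subst h1; subst h2; exact ⟨p, rfl, ha, hb⟩
    | Sum.inr k =>
      constructor
      · intro h
        rw [show spathSem G (.sym (Sum.inr k)) a b = tripleRel G (Sum.inr k) a b from rfl,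
          tripleRel_iff hG] at h
        obtain ⟨p, hp, _⟩ := h
        cases hp
      · rintro (⟨h, _⟩ | ⟨_, _, _, _, h⟩) <;> exact h.elim
  | inv π ih =>
    intro a b
    simp only [spathSem]
    rw [ih]
    constructor
    · rintro (⟨hd, h⟩ | ⟨κ, κ', hb, ha, hp⟩)
      · exact Or.inl ⟨hd, h.symm⟩
      · exact Or.inr ⟨κ', κ, ha, hb, hp⟩
    · rintro (⟨hd, h⟩ | ⟨κ, κ', ha, hb, hp⟩)
      · exact Or.inl ⟨hd, h.symm⟩
      · exact Or.inr ⟨κ', κ, hb, ha, hp⟩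
  | comp π₁ π₂ ih₁ ih₂ =>
    intro a b
    simp only [spathSem]
    constructor
    · rintro ⟨m, h1, h2⟩
      rw [ih₁] at h1; rw [ih₂] at h2
      rcases h1 with ⟨hd1, he1⟩ | ⟨κ, κ₁, ha, hm1, hp1⟩
      · rcases h2 with ⟨hd2, he2⟩ | ⟨κ₂, κ', hm2, hb, hp2⟩
        · exact Or.inl ⟨⟨hd1, hd2⟩, he1.trans he2⟩
        · subst he1
          exact Or.inr ⟨κ₂, κ', hm2, hb, Or.inl ⟨hd1, hp2⟩⟩
      · rcases h2 with ⟨hd2, he2⟩ | ⟨κ₂, κ', hm2, hb, hp2⟩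
        · subst he2
          exact Or.inr ⟨κ, κ₁, ha, hm1, Or.inr (Or.inl ⟨hp1, hd2⟩)⟩
        · have : κ₁ = κ₂ := cls_fun hG hm1 hm2
          subst this
          exact Or.inr ⟨κ, κ', ha, hb, Or.inr (Or.inr ⟨κ₁, hp1, cls_rl hP hm1, hp2⟩)⟩
    · rintro (⟨⟨hd1, hd2⟩, he⟩ | ⟨κ, κ', ha, hb, hp⟩)
      · refine ⟨a, ?_, ?_⟩
        · rw [ih₁]; exact Or.inl ⟨hd1, rfl⟩
        · rw [ih₂]; exact Or.inl ⟨hd2, he⟩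
      · rcases hp with ⟨hd1, hp2⟩ | ⟨hp1, hd2⟩ | ⟨κ'', hp1, hr, hp2⟩
        · refine ⟨a, ?_, ?_⟩
          · rw [ih₁]; exact Or.inl ⟨hd1, rfl⟩
          · rw [ih₂]; exact Or.inr ⟨κ, κ', ha, hb, hp2⟩
        · refine ⟨b, ?_, ?_⟩
          · rw [ih₁]; exact Or.inr ⟨κ, κ', ha, hb, hp1⟩
          · rw [ih₂]; exact Or.inl ⟨hd2, rfl⟩
        · obtain ⟨m, hm⟩ := rl_cls hP hr
          refine ⟨m, ?_, ?_⟩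
          · rw [ih₁]; exact Or.inr ⟨κ, κ'', ha, hm, hp1⟩
          · rw [ih₂]; exact Or.inr ⟨κ'', κ', hm, hb, hp2⟩
  | union π₁ π₂ ih₁ ih₂ =>
    intro a b
    simp only [spathSem]
    rw [ih₁, ih₂]
    constructor
    · rintro ((⟨hd, he⟩ | ⟨κ, κ', ha, hb, hp⟩) | (⟨hd, he⟩ | ⟨κ, κ', ha, hb, hp⟩))
      · exact Or.inl ⟨Or.inl hd, he⟩
      · exact Or.inr ⟨κ, κ', ha, hb, Or.inl hp⟩
      · exact Or.inl ⟨Or.inr hd, he⟩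
      · exact Or.inr ⟨κ, κ', ha, hb, Or.inr hp⟩
    · rintro (⟨(hd | hd), he⟩ | ⟨κ, κ', ha, hb, (hp | hp)⟩)
      · exact Or.inl (Or.inl ⟨hd, he⟩)
      · exact Or.inr (Or.inl ⟨hd, he⟩)
      · exact Or.inl (Or.inr ⟨κ, κ', ha, hb, hp⟩)
      · exact Or.inr (Or.inr ⟨κ, κ', ha, hb, hp⟩)
  | star π ih =>
    intro a b
    simp only [spathSem]
    constructor
    · intro h
      induction h with
      | refl => exact Or.inl ⟨trivial, rfl⟩
      | tail hrt hstep ih' =>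
        rename_i m b'
        rw [ih] at hstep
        rcases ih' with ⟨_, he⟩ | ⟨κ, κ₁, ha, hm, hp⟩
        · subst he
          rcases hstep with ⟨_, he2⟩ | ⟨κ, κ', ha, hb, hp⟩
          · exact Or.inl ⟨trivial, he2⟩
          · exact Or.inr ⟨κ, κ', ha, hb,
              TransGen.single ⟨hp, cls_rl hP ha, cls_rl hP hb⟩⟩
        · rcases hstep with ⟨_, he2⟩ | ⟨κ₂, κ', hm2, hb, hp2⟩
          · subst he2
            exact Or.inr ⟨κ, κ₁, ha, hm, hp⟩
          · have : κ₁ = κ₂ := cls_fun hG hm hm2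
            subst this
            exact Or.inr ⟨κ, κ', ha, hb,
              TransGen.tail hp ⟨hp2, cls_rl hP hm2, cls_rl hP hb⟩⟩
    · rintro (⟨_, he⟩ | ⟨κ, κ', ha, hb, hp⟩)
      · exact he ▸ ReflTransGen.refl
      · refine ReflTransGen.mono (fun x y h => (ih x y).2 h) a b ?_
        exact transGen_interp hG hP _ hp a b ha hb

lemma c_not_leaf (hG : IsNbhd c n G) (q : GPred) : ¬ cls G c (Sum.inl c) (some q) := by
  rintro ⟨v, hv, he⟩
  injection he with he
  exact hG.2.1 _ _ hv he.symm

lemma inr_no_cls (w : GValue) (κ : Option GPred) : ¬ cls G c (Sum.inr w) κ := by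
  match κ with
  | none => intro h; cases h
  | some p => rintro ⟨v, hv, he⟩; cases he

lemma leaves_encard (hG : IsNbhd c n G) {q : GPred}
    (hq : ∃ v, Triple.edge c q v ∈ G.triples) :
    (n : ℕ∞) ≤ {b : NV | cls G c b (some q)}.encard := by
  refine le_trans (hG.2.2.2 q hq) ?_
  have hinj : Set.InjOn (fun t : Triple => match t with
      | Triple.edge _ _ v => (Sum.inl v : NV)
      | Triple.prop _ _ w => Sum.inr w)
      {t : Triple | t ∈ G.triples ∧ ∃ v, t = Triple.edge c q v} := by
    rintro t₁ ⟨_, v₁, rfl⟩ t₂ ⟨_, v₂, rfl⟩ h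
    simp only [Sum.inl.injEq] at h
    rw [h]
  rw [← hinj.encard_image]
  refine Set.encard_mono ?_
  rintro b ⟨t, ⟨ht, v, rfl⟩, rfl⟩
  exact ⟨v, ht, rfl⟩

end Nbhd

section Char

variable {G : CommonGraph} {c : GNode} {n : ℕ} {P₀ : Set GPred}

lemma closed_char {VT : Type} (semVT : VT → Set GValue) (hG : IsNbhd c n G)
    (hP : ∀ p, p ∈ P₀ ↔ ∃ v, Triple.edge c p v ∈ G.triples) (Q : Finset PK) (a : NV) :
    shaclSat semVT G a (.closed Q) ↔ (a = Sum.inl c → ∀ p, Sum.inl p ∉ Q → p ∉ P₀) := by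
  show (∀ q : PK, q ∉ Q → ∀ u, ¬ tripleRel G q a u) ↔ _
  constructor
  · intro h hac p hpQ hpP
    obtain ⟨v, hv⟩ := (hP p).1 hpP
    exact h (Sum.inl p) hpQ (Sum.inl v) ((tripleRel_iff hG _ _ _).2 ⟨p, rfl, hac, v, hv, rfl⟩)
  · intro h q hq u htr
    obtain ⟨p, rfl, ha, hcls⟩ := (tripleRel_iff hG _ _ _).1 htr
    exact h ha p hq (cls_rl hP hcls)

lemma sat_eq_iff {VT : Type} (semVT : VT → Set GValue) (hG : IsNbhd c n G)
    (hP : ∀ p, p ∈ P₀ ↔ ∃ v, Triple.edge c p v ∈ G.triples) (π : SPath) (p : GPred) (a : NV) :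
    shaclSat semVT G a (.eq π p) ↔
      ({u : NV | interp G c (symb P₀ π) a u} = {u : NV | a = Sum.inl c ∧ cls G c u (some p)}) := by
  show ({u : NV | spathSem G π a u} = {u : NV | tripleRel G (Sum.inl p) a u}) ↔ _
  have h1 : {u : NV | spathSem G π a u} = {u | interp G c (symb P₀ π) a u} :=
    Set.ext fun u => spath_char hG hP π a u
  have h2 : {u : NV | tripleRel G (Sum.inl p) a u} =
      {u : NV | a = Sum.inl c ∧ cls G c u (some p)} := by
    refine Set.ext fun u => ?_
    simp only [Set.mem_setOf_eq]
    rw [tripleRel_iff hG]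
    constructor
    · rintro ⟨p', hp', ha, hc⟩
      injection hp' with hp'
      subst hp'
      exact ⟨ha, hc⟩
    · rintro ⟨ha, hc⟩
      exact ⟨p, rfl, ha, hc⟩
  rw [h1, h2]

lemma sat_disj_iff {VT : Type} (semVT : VT → Set GValue) (hG : IsNbhd c n G)
    (hP : ∀ p, p ∈ P₀ ↔ ∃ v, Triple.edge c p v ∈ G.triples) (π : SPath) (p : GPred) (a : NV) :
    shaclSat semVT G a (.disj π p) ↔
      ({u : NV | interp G c (symb P₀ π) a u} ∩ {u : NV | a = Sum.inl c ∧ cls G c u (some p)} = ∅) := by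
  show ({u : NV | spathSem G π a u} ∩ {u : NV | tripleRel G (Sum.inl p) a u} = ∅) ↔ _
  have h1 : {u : NV | spathSem G π a u} = {u | interp G c (symb P₀ π) a u} :=
    Set.ext fun u => spath_char hG hP π a u
  have h2 : {u : NV | tripleRel G (Sum.inl p) a u} =
      {u : NV | a = Sum.inl c ∧ cls G c u (some p)} := by
    refine Set.ext fun u => ?_
    simp only [Set.mem_setOf_eq]
    rw [tripleRel_iff hG]
    constructor
    · rintro ⟨p', hp', ha, hc⟩
      injection hp' with hp'
      subst hp'
      exact ⟨ha, hc⟩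
    · rintro ⟨ha, hc⟩
      exact ⟨p, rfl, ha, hc⟩
  rw [h1, h2]

lemma eq_char_c (hG : IsNbhd c n G)
    (hP : ∀ p, p ∈ P₀ ↔ ∃ v, Triple.edge c p v ∈ G.triples) (R : Sym) (p : GPred) {a : NV}
    (ha : a = Sum.inl c) :
    ({u : NV | interp G c R a u} = {u : NV | a = Sum.inl c ∧ cls G c u (some p)}) ↔
      (¬ R.dia ∧ ¬ R.pos none none ∧ (∀ q ∈ P₀, R.pos none (some q) → q = p) ∧
        (p ∈ P₀ → R.pos none (some p))) := by
  subst ha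
  constructor
  · intro hAB
    have hiff := Set.ext_iff.mp hAB
    have hdia : ¬ R.dia := fun hd =>
      c_not_leaf hG p ((hiff (Sum.inl c)).1 (Or.inl ⟨hd, rfl⟩)).2
    refine ⟨hdia, ?_, ?_, ?_⟩
    · intro hpos
      exact c_not_leaf hG p ((hiff (Sum.inl c)).1 (Or.inr ⟨none, none, rfl, rfl, hpos⟩)).2
    · intro q hq hpos
      obtain ⟨v, hv⟩ := (hP q).1 hq
      obtain ⟨w, hw, he⟩ :=
        ((hiff (Sum.inl v)).1 (Or.inr ⟨none, some q, rfl, ⟨v, hv, rfl⟩, hpos⟩)).2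
      injection he with he
      subst he
      exact hG.2.2.1 q p v hv hw
    · intro hp
      obtain ⟨v, hv⟩ := (hP p).1 hp
      have hm := (hiff (Sum.inl v)).2 ⟨rfl, v, hv, rfl⟩
      rcases hm with ⟨hd, _⟩ | ⟨κ, κ', hc, hlv, hpos⟩
      · exact absurd hd hdia
      · have h1 : κ = none := cls_fun hG hc rfl
        subst h1
        have h2 : κ' = some p := cls_fun hG hlv ⟨v, hv, rfl⟩
        subst h2
        exact hpos
  · rintro ⟨hdia, hcc, huniq, hself⟩
    ext u
    constructor
    · rintro (⟨hd, _⟩ | ⟨κ, κ', hc, hu, hpos⟩)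
      · exact absurd hd hdia
      · have h1 : κ = none := cls_fun hG hc rfl
        subst h1
        match κ', hu with
        | none, _ => exact absurd hpos hcc
        | some q, hu =>
          have hq : q ∈ P₀ := cls_rl hP hu
          have := huniq q hq hpos
          subst this
          exact ⟨rfl, hu⟩
    · rintro ⟨-, hu⟩
      exact Or.inr ⟨none, some p, rfl, hu, hself (cls_rl hP hu)⟩

lemma eq_char_leaf (hG : IsNbhd c n G)
    (hP : ∀ p, p ∈ P₀ ↔ ∃ v, Triple.edge c p v ∈ G.triples) (R : Sym) (p : GPred) {a : NV}
    {r : GPred} (ha : cls G c a (some r)) :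
    ({u : NV | interp G c R a u} = {u : NV | a = Sum.inl c ∧ cls G c u (some p)}) ↔
      (¬ R.dia ∧ ¬ R.pos (some r) none ∧ ∀ q ∈ P₀, ¬ R.pos (some r) (some q)) := by
  have hac : a ≠ Sum.inl c := by
    obtain ⟨v, hv, rfl⟩ := ha
    intro he
    injection he with he
    exact hG.2.1 r v hv he
  have hB : {u : NV | a = Sum.inl c ∧ cls G c u (some p)} = ∅ := by
    ext u; simp [hac]
  rw [hB, Set.eq_empty_iff_forall_notMem]
  constructor
  · intro h
    refine ⟨?_, ?_, ?_⟩
    · intro hd; exact h a (Or.inl ⟨hd, rfl⟩)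
    · intro hpos; exact h (Sum.inl c) (Or.inr ⟨some r, none, ha, rfl, hpos⟩)
    · intro q hq hpos
      obtain ⟨v, hv⟩ := (hP q).1 hq
      exact h (Sum.inl v) (Or.inr ⟨some r, some q, ha, ⟨v, hv, rfl⟩, hpos⟩)
  · rintro ⟨hdia, hnc, hnl⟩ u (⟨hd, _⟩ | ⟨κ, κ', hc, hu, hpos⟩)
    · exact hdia hd
    · have h1 : some r = κ := cls_fun hG ha hc
      rw [← h1] at hpos
      match κ', hu with
      | none, hu => exact hnc hpos
      | some q, hu => exact hnl q (cls_rl hP hu) hpos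

lemma eq_char_out (hG : IsNbhd c n G) (R : Sym) (p : GPred) {a : NV}
    (ha : ∀ κ, ¬ cls G c a κ) :
    ({u : NV | interp G c R a u} = {u : NV | a = Sum.inl c ∧ cls G c u (some p)}) ↔
      ¬ R.dia := by
  have hac : a ≠ Sum.inl c := fun he => ha none he
  have hB : {u : NV | a = Sum.inl c ∧ cls G c u (some p)} = ∅ := by
    ext u; simp [hac]
  rw [hB, Set.eq_empty_iff_forall_notMem]
  constructor
  · intro h hd
    exact h a (Or.inl ⟨hd, rfl⟩)
  · rintro hdia u (⟨hd, _⟩ | ⟨κ, _, hc, _, _⟩)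
    · exact hdia hd
    · exact ha κ hc

lemma disj_char_c (hG : IsNbhd c n G)
    (hP : ∀ p, p ∈ P₀ ↔ ∃ v, Triple.edge c p v ∈ G.triples) (R : Sym) (p : GPred) {a : NV}
    (ha : a = Sum.inl c) :
    ({u : NV | interp G c R a u} ∩ {u : NV | a = Sum.inl c ∧ cls G c u (some p)} = ∅) ↔
      (p ∈ P₀ → ¬ R.pos none (some p)) := by
  subst ha
  rw [Set.eq_empty_iff_forall_notMem]
  constructor
  · intro h hp hpos
    obtain ⟨v, hv⟩ := (hP p).1 hp
    exact h (Sum.inl v) ⟨Or.inr ⟨none, some p, rfl, ⟨v, hv, rfl⟩, hpos⟩, rfl, v, hv, rfl⟩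
  · rintro h u ⟨hu, -, hup⟩
    rcases hu with ⟨_, he⟩ | ⟨κ, κ', hc, hu', hpos⟩
    · rw [← he] at hup
      exact c_not_leaf hG p hup
    · have h1 : κ = none := cls_fun hG hc rfl
      subst h1
      have h2 : κ' = some p := cls_fun hG hu' hup
      subst h2
      exact h (cls_rl hP hup) hpos

lemma disj_char_nc (p : GPred) (R : Sym) {a : NV} (ha : a ≠ Sum.inl c) :
    ({u : NV | interp G c R a u} ∩ {u : NV | a = Sum.inl c ∧ cls G c u (some p)} = ∅) := by
  ext u; simp [ha]

lemma big_encard (hG : IsNbhd c n G)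
    (hP : ∀ p, p ∈ P₀ ↔ ∃ v, Triple.edge c p v ∈ G.triples) (R : Sym) (sat : NV → Prop) {a : NV}
    (hbig : ∃ q ∈ P₀, (∃ κ, cls G c a κ ∧ R.pos κ (some q)) ∧
      ∀ v, Triple.edge c q v ∈ G.triples → sat (Sum.inl v)) :
    (n : ℕ∞) ≤ {u : NV | interp G c R a u ∧ sat u}.encard := by
  obtain ⟨q, hq, ⟨κ, hκ, hpos⟩, hsat⟩ := hbig
  refine le_trans (leaves_encard hG ((hP q).1 hq)) (Set.encard_mono ?_)
  rintro u ⟨v, hv, rfl⟩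
  exact ⟨Or.inr ⟨κ, some q, hκ, ⟨v, hv, rfl⟩, hpos⟩, hsat v hv⟩

lemma small_eq (hG : IsNbhd c n G)
    (hP : ∀ p, p ∈ P₀ ↔ ∃ v, Triple.edge c p v ∈ G.triples) (R : Sym) (sat : NV → Prop) {a : NV}
    (hconst : ∀ q v v', Triple.edge c q v ∈ G.triples → Triple.edge c q v' ∈ G.triples →
        sat (Sum.inl v) → sat (Sum.inl v'))
    (hsmall : ¬ ∃ q ∈ P₀, (∃ κ, cls G c a κ ∧ R.pos κ (some q)) ∧
      ∀ v, Triple.edge c q v ∈ G.triples → sat (Sum.inl v)) :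
    {u : NV | interp G c R a u ∧ sat u} =
      {u : NV | (R.dia ∧ sat a) ∧ u = a} ∪
      {u : NV | ((∃ κ, cls G c a κ ∧ R.pos κ none) ∧ sat (Sum.inl c)) ∧ u = Sum.inl c} := by
  ext u
  constructor
  · rintro ⟨hu, hsatu⟩
    rcases hu with ⟨hd, he⟩ | ⟨κ, κ', hκ, hu', hpos⟩
    · exact Or.inl ⟨⟨hd, he ▸ hsatu⟩, he.symm⟩
    · match κ', hu' with
      | none, hu' => exact Or.inr ⟨⟨⟨κ, hκ, hpos⟩, hu' ▸ hsatu⟩, hu'⟩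
      | some q, hu' =>
        exfalso
        obtain ⟨v, hv, rfl⟩ := hu'
        exact hsmall ⟨q, cls_rl hP (show cls G c (Sum.inl v) (some q) from ⟨v, hv, rfl⟩),
          ⟨κ, hκ, hpos⟩, fun v' hv' => hconst q v v' hv hv' hsatu⟩
  · rintro (⟨⟨hd, hsa⟩, rfl⟩ | ⟨⟨⟨κ, hκ, hpos⟩, hsc⟩, rfl⟩)
    · exact ⟨Or.inl ⟨hd, rfl⟩, hsa⟩
    · exact ⟨Or.inr ⟨κ, none, hκ, rfl, hpos⟩, hsc⟩

lemma pat_encard {α : Type} {a b a' b' : α} {s₁ s₂ s₁' s₂' : Prop}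
    (h1 : s₁ ↔ s₁') (h2 : s₂ ↔ s₂') (he : (a = b) ↔ (a' = b')) :
    ({u : α | s₁ ∧ u = a} ∪ {u : α | s₂ ∧ u = b}).encard =
    ({u : α | s₁' ∧ u = a'} ∪ {u : α | s₂' ∧ u = b'}).encard := by
  classical
  by_cases hs1 : s₁ <;> by_cases hs2 : s₂
  · have e1 : {u : α | s₁ ∧ u = a} ∪ {u : α | s₂ ∧ u = b} = {a, b} := by
      ext u; simp [hs1, hs2]; tauto
    have e2 : {u : α | s₁' ∧ u = a'} ∪ {u : α | s₂' ∧ u = b'} = {a', b'} := by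
      ext u; simp [h1.1 hs1, h2.1 hs2]; tauto
    rw [e1, e2]
    by_cases hab : a = b
    · rw [hab, he.1 hab]; simp
    · rw [Set.encard_pair hab, Set.encard_pair (fun h => hab (he.2 h))]
  · have e1 : {u : α | s₁ ∧ u = a} ∪ {u : α | s₂ ∧ u = b} = {a} := by
      ext u; simp [hs1, hs2]
    have hs2' : ¬ s₂' := fun h => hs2 (h2.2 h)
    have e2 : {u : α | s₁' ∧ u = a'} ∪ {u : α | s₂' ∧ u = b'} = {a'} := by
      ext u; simp [h1.1 hs1, hs2']
    rw [e1, e2]; simp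
  · have e1 : {u : α | s₁ ∧ u = a} ∪ {u : α | s₂ ∧ u = b} = {b} := by
      ext u; simp [hs1, hs2]
    have hs1' : ¬ s₁' := fun h => hs1 (h1.2 h)
    have e2 : {u : α | s₁' ∧ u = a'} ∪ {u : α | s₂' ∧ u = b'} = {b'} := by
      ext u; simp [h2.1 hs2, hs1']
    rw [e1, e2]; simp
  · have e1 : {u : α | s₁ ∧ u = a} ∪ {u : α | s₂ ∧ u = b} = ∅ := by
      ext u; simp [hs1, hs2]
    have hs1' : ¬ s₁' := fun h => hs1 (h1.2 h)
    have hs2' : ¬ s₂' := fun h => hs2 (h2.2 h)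
    have e2 : {u : α | s₁' ∧ u = a'} ∪ {u : α | s₂' ∧ u = b'} = ∅ := by
      ext u; simp [hs1', hs2']
    rw [e1, e2]

end Char

/-- The point correspondence between two similar neighbourhoods. -/
def Rel (G₁ G₂ : CommonGraph) (c : GNode) (a a' : NV) : Prop :=
  (a = Sum.inl c ∧ a' = Sum.inl c) ∨
  (∃ p, cls G₁ c a (some p) ∧ cls G₂ c a' (some p)) ∨
  ((∃ u, a = Sum.inl u) ∧ (∃ u, a' = Sum.inl u) ∧
    (∀ κ, ¬ cls G₁ c a κ) ∧ (∀ κ, ¬ cls G₂ c a' κ)) ∨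
  (∃ w, a = Sum.inr w ∧ a' = Sum.inr w)

section Two

variable {G₁ G₂ G : CommonGraph} {c : GNode} {n m : ℕ}

lemma Rel_cls (h₁ : IsNbhd c n G₁) (h₂ : IsNbhd c m G₂) {a a' : NV}
    (h : Rel G₁ G₂ c a a') (κ : Option GPred) :
    cls G₁ c a κ ↔ cls G₂ c a' κ := by
  rcases h with ⟨ha, ha'⟩ | ⟨p, ha, ha'⟩ | ⟨_, _, ha, ha'⟩ | ⟨w, ha, ha'⟩
  · subst ha; subst ha'
    match κ with
    | none => exact Iff.rfl
    | some q => exact iff_of_false (c_not_leaf h₁ q) (c_not_leaf h₂ q)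
  · constructor
    · intro hκ
      have : some p = κ := cls_fun h₁ ha hκ
      subst this; exact ha'
    · intro hκ
      have : some p = κ := cls_fun h₂ ha' hκ
      subst this; exact ha
  · exact iff_of_false (ha κ) (ha' κ)
  · subst ha; subst ha'
    exact iff_of_false (inr_no_cls w κ) (inr_no_cls w κ)

lemma Rel_inr (h₁ : IsNbhd c n G₁) (h₂ : IsNbhd c m G₂) {a a' : NV}
    (h : Rel G₁ G₂ c a a') (w : GValue) :
    a = Sum.inr w ↔ a' = Sum.inr w := by
  rcases h with ⟨ha, ha'⟩ | ⟨p, ⟨v, _, ha⟩, ⟨v', _, ha'⟩⟩ | ⟨⟨u, ha⟩, ⟨u', ha'⟩, _, _⟩ |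
      ⟨w₀, ha, ha'⟩ <;> subst ha <;> subst ha' <;> simp

lemma Rel_symm {a a' : NV} (h : Rel G₁ G₂ c a a') : Rel G₂ G₁ c a' a := by
  rcases h with ⟨ha, ha'⟩ | ⟨p, ha, ha'⟩ | ⟨h1, h2, h3, h4⟩ | ⟨w, ha, ha'⟩
  · exact Or.inl ⟨ha', ha⟩
  · exact Or.inr (Or.inl ⟨p, ha', ha⟩)
  · exact Or.inr (Or.inr (Or.inl ⟨h2, h1, h4, h3⟩))
  · exact Or.inr (Or.inr (Or.inr ⟨w, ha', ha⟩))

lemma exists_fresh (G : CommonGraph) (c : GNode) :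
    ∃ u : GNode, ∀ κ, ¬ cls G c (Sum.inl u) κ := by
  obtain ⟨u, hu⟩ := Finset.exists_notMem
    (insert c (G.triples.image (fun t => match t with
      | Triple.edge _ _ v => v | Triple.prop _ _ _ => c)))
  refine ⟨u, fun κ hκ => ?_⟩
  match κ, hκ with
  | none, hκ =>
    injection hκ with hκ
    rw [hκ] at hu
    exact hu (Finset.mem_insert_self c _)
  | some p, ⟨v, hv, he⟩ =>
    injection he with he
    refine hu (Finset.mem_insert_of_mem (Finset.mem_image.mpr ⟨Triple.edge c p v, hv, ?_⟩))
    exact he.symm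

lemma Rel_rightTotal (h₁ : IsNbhd c n G₁) (h₂ : IsNbhd c m G₂)
    (hsim : {p : GPred | ∃ v, Triple.edge c p v ∈ G₁.triples} =
            {p : GPred | ∃ v, Triple.edge c p v ∈ G₂.triples}) (a' : NV) :
    ∃ a, Rel G₁ G₂ c a a' := by
  match a' with
  | Sum.inr w => exact ⟨Sum.inr w, Or.inr (Or.inr (Or.inr ⟨w, rfl, rfl⟩))⟩
  | Sum.inl u =>
    by_cases hc : u = c
    · exact ⟨Sum.inl c, Or.inl ⟨rfl, congrArg Sum.inl hc⟩⟩
    · by_cases hl : ∃ p, Triple.edge c p u ∈ G₂.triples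
      · obtain ⟨p, hp⟩ := hl
        have hp1 : p ∈ {p : GPred | ∃ v, Triple.edge c p v ∈ G₁.triples} := by
          rw [hsim]; exact ⟨u, hp⟩
        obtain ⟨v, hv⟩ := hp1
        exact ⟨Sum.inl v, Or.inr (Or.inl ⟨p, ⟨v, hv, rfl⟩, ⟨u, hp, rfl⟩⟩)⟩
      · obtain ⟨u₀, hu₀⟩ := exists_fresh G₁ c
        refine ⟨Sum.inl u₀, Or.inr (Or.inr (Or.inl ⟨⟨u₀, rfl⟩, ⟨u, rfl⟩, hu₀, fun κ hκ => ?_⟩))⟩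
        match κ, hκ with
        | none, hκ =>
          injection hκ with hκ
          exact hc hκ
        | some p, ⟨v, hv, he⟩ =>
          injection he with he
          exact hl ⟨p, he ▸ hv⟩

end Two

section Transfer

variable {VT : Type}

lemma encard_transfer (semVT : VT → Set GValue) (k : ℕ) (c : GNode)
    (φ : SShape VT) (π : SPath)
    (ih : ∀ (G₁ G₂ : CommonGraph), IsNbhd c (k+1) G₁ → IsNbhd c (k+1) G₂ →
      {p : GPred | ∃ v, Triple.edge c p v ∈ G₁.triples} =
        {p : GPred | ∃ v, Triple.edge c p v ∈ G₂.triples} →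
      ∀ a a', Rel G₁ G₂ c a a' → (shaclSat semVT G₁ a φ ↔ shaclSat semVT G₂ a' φ))
    (G₁ G₂ : CommonGraph) (h₁ : IsNbhd c (k+1) G₁) (h₂ : IsNbhd c (k+1) G₂)
    (hsim : {p : GPred | ∃ v, Triple.edge c p v ∈ G₁.triples} =
        {p : GPred | ∃ v, Triple.edge c p v ∈ G₂.triples})
    (a a' : NV) (hR : Rel G₁ G₂ c a a') :
    ((((k+1 : ℕ)) : ℕ∞) ≤ {u : NV | spathSem G₁ π a u ∧ shaclSat semVT G₁ u φ}.encard ∧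
      (((k+1 : ℕ)) : ℕ∞) ≤ {u : NV | spathSem G₂ π a' u ∧ shaclSat semVT G₂ u φ}.encard) ∨
    {u : NV | spathSem G₁ π a u ∧ shaclSat semVT G₁ u φ}.encard =
      {u : NV | spathSem G₂ π a' u ∧ shaclSat semVT G₂ u φ}.encard := by
  set P₀ : Set GPred := {p | ∃ v, Triple.edge c p v ∈ G₁.triples} with hP₀
  have hP₁ : ∀ p, p ∈ P₀ ↔ ∃ v, Triple.edge c p v ∈ G₁.triples := fun p => Iff.rfl
  have hP₂ : ∀ p, p ∈ P₀ ↔ ∃ v, Triple.edge c p v ∈ G₂.triples := fun p =>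
    Set.ext_iff.mp hsim p
  set R := symb P₀ π with hR₀
  have hS₁ : {u : NV | spathSem G₁ π a u ∧ shaclSat semVT G₁ u φ} =
      {u : NV | interp G₁ c R a u ∧ shaclSat semVT G₁ u φ} := by
    ext u
    rw [Set.mem_setOf_eq, Set.mem_setOf_eq, spath_char h₁ hP₁]
  have hS₂ : {u : NV | spathSem G₂ π a' u ∧ shaclSat semVT G₂ u φ} =
      {u : NV | interp G₂ c R a' u ∧ shaclSat semVT G₂ u φ} := by
    ext u
    rw [Set.mem_setOf_eq, Set.mem_setOf_eq, spath_char h₂ hP₂]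
  have hsatC := ih G₁ G₂ h₁ h₂ hsim (Sum.inl c) (Sum.inl c) (Or.inl ⟨rfl, rfl⟩)
  have hsatA := ih G₁ G₂ h₁ h₂ hsim a a' hR
  have hconst₁ : ∀ q v v', Triple.edge c q v ∈ G₁.triples → Triple.edge c q v' ∈ G₁.triples →
      shaclSat semVT G₁ (Sum.inl v) φ → shaclSat semVT G₁ (Sum.inl v') φ :=
    fun q v v' hv hv' hs =>
      (ih G₁ G₁ h₁ h₁ rfl _ _ (Or.inr (Or.inl ⟨q, ⟨v, hv, rfl⟩, ⟨v', hv', rfl⟩⟩))).1 hs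
  have hconst₂ : ∀ q v v', Triple.edge c q v ∈ G₂.triples → Triple.edge c q v' ∈ G₂.triples →
      shaclSat semVT G₂ (Sum.inl v) φ → shaclSat semVT G₂ (Sum.inl v') φ :=
    fun q v v' hv hv' hs =>
      (ih G₂ G₂ h₂ h₂ rfl _ _ (Or.inr (Or.inl ⟨q, ⟨v, hv, rfl⟩, ⟨v', hv', rfl⟩⟩))).1 hs
  have hbig : (∃ q ∈ P₀, (∃ κ, cls G₁ c a κ ∧ R.pos κ (some q)) ∧
      ∀ v, Triple.edge c q v ∈ G₁.triples → shaclSat semVT G₁ (Sum.inl v) φ) ↔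
      (∃ q ∈ P₀, (∃ κ, cls G₂ c a' κ ∧ R.pos κ (some q)) ∧
      ∀ v, Triple.edge c q v ∈ G₂.triples → shaclSat semVT G₂ (Sum.inl v) φ) := by
    constructor
    · rintro ⟨q, hq, ⟨κ, hκ, hpos⟩, hsat⟩
      obtain ⟨v₁, hv₁⟩ := (hP₁ q).1 hq
      refine ⟨q, hq, ⟨κ, (Rel_cls h₁ h₂ hR κ).1 hκ, hpos⟩, fun v hv => ?_⟩
      exact (ih G₁ G₂ h₁ h₂ hsim _ _
        (Or.inr (Or.inl ⟨q, ⟨v₁, hv₁, rfl⟩, ⟨v, hv, rfl⟩⟩))).1 (hsat v₁ hv₁)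
    · rintro ⟨q, hq, ⟨κ, hκ, hpos⟩, hsat⟩
      obtain ⟨v₂, hv₂⟩ := (hP₂ q).1 hq
      refine ⟨q, hq, ⟨κ, (Rel_cls h₁ h₂ hR κ).2 hκ, hpos⟩, fun v hv => ?_⟩
      exact (ih G₁ G₂ h₁ h₂ hsim _ _
        (Or.inr (Or.inl ⟨q, ⟨v, hv, rfl⟩, ⟨v₂, hv₂, rfl⟩⟩))).2 (hsat v₂ hv₂)
  by_cases hbg : ∃ q ∈ P₀, (∃ κ, cls G₁ c a κ ∧ R.pos κ (some q)) ∧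
      ∀ v, Triple.edge c q v ∈ G₁.triples → shaclSat semVT G₁ (Sum.inl v) φ
  · refine Or.inl ⟨?_, ?_⟩
    · rw [hS₁]; exact big_encard h₁ hP₁ R _ hbg
    · rw [hS₂]; exact big_encard h₂ hP₂ R _ (hbig.1 hbg)
  · right
    rw [hS₁, hS₂, small_eq h₁ hP₁ R _ hconst₁ hbg,
      small_eq h₂ hP₂ R _ hconst₂ (fun h => hbg (hbig.2 h))]
    exact pat_encard (and_congr Iff.rfl hsatA)
      (and_congr (exists_congr fun κ => and_congr (Rel_cls h₁ h₂ hR κ) Iff.rfl) hsatC)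
      (Rel_cls h₁ h₂ hR none)

lemma sat_transfer (semVT : VT → Set GValue) (k : ℕ) (c : GNode) :
    ∀ (φ : SShape VT), boundsLE k φ →
      ∀ (G₁ G₂ : CommonGraph), IsNbhd c (k+1) G₁ → IsNbhd c (k+1) G₂ →
      {p : GPred | ∃ v, Triple.edge c p v ∈ G₁.triples} =
        {p : GPred | ∃ v, Triple.edge c p v ∈ G₂.triples} →
      ∀ a a', Rel G₁ G₂ c a a' → (shaclSat semVT G₁ a φ ↔ shaclSat semVT G₂ a' φ) := by
  intro φ
  induction φ with
  | top => intro _ G₁ G₂ _ _ _ a a' _; exact Iff.rfl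
  | testC c' =>
    intro _ G₁ G₂ h₁ h₂ _ a a' hR
    exact Rel_inr h₁ h₂ hR c'
  | testT τ =>
    intro _ G₁ G₂ h₁ h₂ _ a a' hR
    show (∃ w, a = Sum.inr w ∧ w ∈ semVT τ) ↔ (∃ w, a' = Sum.inr w ∧ w ∈ semVT τ)
    exact exists_congr fun w => and_congr (Rel_inr h₁ h₂ hR w) Iff.rfl
  | closed Q =>
    intro _ G₁ G₂ h₁ h₂ hsim a a' hR
    have hP₁ : ∀ p, p ∈ {p : GPred | ∃ v, Triple.edge c p v ∈ G₁.triples} ↔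
        ∃ v, Triple.edge c p v ∈ G₁.triples := fun p => Iff.rfl
    have hP₂ : ∀ p, p ∈ {p : GPred | ∃ v, Triple.edge c p v ∈ G₁.triples} ↔
        ∃ v, Triple.edge c p v ∈ G₂.triples := fun p => Set.ext_iff.mp hsim p
    rw [closed_char semVT h₁ hP₁ Q a, closed_char semVT h₂ hP₂ Q a']
    exact imp_congr (Rel_cls h₁ h₂ hR none) Iff.rfl
  | eq π p =>
    intro _ G₁ G₂ h₁ h₂ hsim a a' hR
    have hP₁ : ∀ p, p ∈ {p : GPred | ∃ v, Triple.edge c p v ∈ G₁.triples} ↔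
        ∃ v, Triple.edge c p v ∈ G₁.triples := fun p => Iff.rfl
    have hP₂ : ∀ p, p ∈ {p : GPred | ∃ v, Triple.edge c p v ∈ G₁.triples} ↔
        ∃ v, Triple.edge c p v ∈ G₂.triples := fun p => Set.ext_iff.mp hsim p
    rw [sat_eq_iff semVT h₁ hP₁ π p a, sat_eq_iff semVT h₂ hP₂ π p a']
    by_cases hcls : ∃ κ, cls G₁ c a κ
    · obtain ⟨κ, hκ⟩ := hcls
      have hκ' := (Rel_cls h₁ h₂ hR κ).1 hκ
      match κ, hκ, hκ' with
      | none, hκ, hκ' =>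
        rw [eq_char_c h₁ hP₁ _ p hκ, eq_char_c h₂ hP₂ _ p hκ']
      | some r, hκ, hκ' =>
        rw [eq_char_leaf h₁ hP₁ _ p hκ, eq_char_leaf h₂ hP₂ _ p hκ']
    · push_neg at hcls
      have hcls' : ∀ κ, ¬ cls G₂ c a' κ := fun κ h => hcls κ ((Rel_cls h₁ h₂ hR κ).2 h)
      rw [eq_char_out h₁ _ p hcls, eq_char_out h₂ _ p hcls']
  | disj π p =>
    intro _ G₁ G₂ h₁ h₂ hsim a a' hR
    have hP₁ : ∀ p, p ∈ {p : GPred | ∃ v, Triple.edge c p v ∈ G₁.triples} ↔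
        ∃ v, Triple.edge c p v ∈ G₁.triples := fun p => Iff.rfl
    have hP₂ : ∀ p, p ∈ {p : GPred | ∃ v, Triple.edge c p v ∈ G₁.triples} ↔
        ∃ v, Triple.edge c p v ∈ G₂.triples := fun p => Set.ext_iff.mp hsim p
    rw [sat_disj_iff semVT h₁ hP₁ π p a, sat_disj_iff semVT h₂ hP₂ π p a']
    by_cases hc : a = Sum.inl c
    · have hc' : a' = Sum.inl c := (Rel_cls h₁ h₂ hR none).1 hc
      rw [disj_char_c h₁ hP₁ _ p hc, disj_char_c h₂ hP₂ _ p hc']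
    · have hc' : a' ≠ Sum.inl c := fun h => hc ((Rel_cls h₁ h₂ hR none).2 h)
      exact iff_of_true (disj_char_nc p _ hc) (disj_char_nc p _ hc')
  | not φ ih =>
    intro hb G₁ G₂ h₁ h₂ hsim a a' hR
    exact not_congr (ih hb G₁ G₂ h₁ h₂ hsim a a' hR)
  | and φ₁ φ₂ ih₁ ih₂ =>
    intro hb G₁ G₂ h₁ h₂ hsim a a' hR
    exact and_congr (ih₁ hb.1 G₁ G₂ h₁ h₂ hsim a a' hR) (ih₂ hb.2 G₁ G₂ h₁ h₂ hsim a a' hR)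
  | or φ₁ φ₂ ih₁ ih₂ =>
    intro hb G₁ G₂ h₁ h₂ hsim a a' hR
    exact or_congr (ih₁ hb.1 G₁ G₂ h₁ h₂ hsim a a' hR) (ih₂ hb.2 G₁ G₂ h₁ h₂ hsim a a' hR)
  | geq n' π φ ih =>
    intro hb G₁ G₂ h₁ h₂ hsim a a' hR
    show ((n' : ℕ∞) ≤ {u : NV | spathSem G₁ π a u ∧ shaclSat semVT G₁ u φ}.encard) ↔
      ((n' : ℕ∞) ≤ {u : NV | spathSem G₂ π a' u ∧ shaclSat semVT G₂ u φ}.encard)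
    rcases encard_transfer semVT k c φ π (ih hb.2) G₁ G₂ h₁ h₂ hsim a a' hR with
      ⟨hb₁, hb₂⟩ | heq
    · have hn : (n' : ℕ∞) ≤ ((k+1 : ℕ) : ℕ∞) := by
        exact_mod_cast Nat.le_succ_of_le hb.1
      exact iff_of_true (le_trans hn hb₁) (le_trans hn hb₂)
    · rw [heq]
  | leq n' π φ ih =>
    intro hb G₁ G₂ h₁ h₂ hsim a a' hR
    show ({u : NV | spathSem G₁ π a u ∧ shaclSat semVT G₁ u φ}.encard ≤ (n' : ℕ∞)) ↔
      ({u : NV | spathSem G₂ π a' u ∧ shaclSat semVT G₂ u φ}.encard ≤ (n' : ℕ∞))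
    rcases encard_transfer semVT k c φ π (ih hb.2) G₁ G₂ h₁ h₂ hsim a a' hR with
      ⟨hb₁, hb₂⟩ | heq
    · refine iff_of_false ?_ ?_ <;> intro hle
      · have hkn : k + 1 ≤ n' := Nat.cast_le.mp (le_trans hb₁ hle)
        have := hb.1
        omega
      · have hkn : k + 1 ≤ n' := Nat.cast_le.mp (le_trans hb₂ hle)
        have := hb.1
        omega
    · rw [heq]

end Transfer

end ShaclAux

/-- Let `S` be a SHACL schema all of whose numeric bounds are `≤ k`
(constants in `test(c')` are values by construction, hence occur in no
`(c,n)`-neighbourhood). Then for all similar `(c,k+1)`-neighbourhoods `G₁`, `G₂`: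
`G₁ ⊨ S` iff `G₂ ⊨ S`. -/
theorem shacl_similar_neighbourhoods_indistinguishable
    (VT : Type) (semVT : VT → Set GValue) (S : SHACLSchema VT) (k : ℕ)
    (hb : ∀ pr ∈ S.pairs, boundsLE k pr.1 ∧ boundsLE k pr.2)
    (c : GNode) (G₁ G₂ : CommonGraph)
    (h₁ : IsNbhd c (k + 1) G₁) (h₂ : IsNbhd c (k + 1) G₂)
    (hsim : {p : GPred | ∃ v, Triple.edge c p v ∈ G₁.triples} =
            {p : GPred | ∃ v, Triple.edge c p v ∈ G₂.triples}) :
    shaclValid semVT S G₁ ↔ shaclValid semVT S G₂ := by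
  constructor
  · intro hval v' pr hpr hsel
    obtain ⟨v, hv⟩ := ShaclAux.Rel_rightTotal h₁ h₂ hsim v'
    exact (ShaclAux.sat_transfer semVT k c pr.2 (hb pr hpr).2 G₁ G₂ h₁ h₂ hsim v v' hv).1
      (hval v pr hpr
        ((ShaclAux.sat_transfer semVT k c pr.1 (hb pr hpr).1 G₁ G₂ h₁ h₂ hsim v v' hv).2 hsel))
  · intro hval v' pr hpr hsel
    obtain ⟨v, hv⟩ := ShaclAux.Rel_rightTotal h₂ h₁ hsim.symm v'
    exact (ShaclAux.sat_transfer semVT k c pr.2 (hb pr hpr).2 G₂ G₁ h₂ h₁ hsim.symm v v' hv).1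
      (hval v pr hpr
        ((ShaclAux.sat_transfer semVT k c pr.1 (hb pr hpr).1 G₂ G₁ h₂ h₁ hsim.symm v v' hv).2
          hsel))
end
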